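/- arXiv:1912.04553 — 3 statements merged into one kernel-verified Lean document; each statement's English description precedes it below -/
import Mathlib

section
/- Let L be a very full lamination system on S^1. For each point p ∈ S^1, either p is an endpoint of some leaf of L, or there exists a rainbow at p (a nested decreasing sequence {I_n} in L with ∩_n I_n = {p}); and these two alternatives are mutually exclusive. -/
open Set Topology

noncomputable section

/-- Stereographic projection from `1 ∈ S¹`. -/
def sproj (z : Circle) : ℝ := (z : ℂ).im / ((z : ℂ).re - 1)

/-- `(a,b,c)` is a positively oriented triple on `S¹`. -/
def posOri (a b c : Circle) : Prop :=
  a ≠ b ∧ b ≠ c ∧ c ≠ a ∧ sproj (a⁻¹ * b) < sproj (a⁻¹ * c)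

/-- The nondegenerate open interval `(u,v)` on `S¹`. -/
def oInt (u v : Circle) : Set Circle := {p | posOri u p v}

/-- `I` is a nondegenerate open interval on `S¹`. -/
def IsND (I : Set Circle) : Prop := ∃ u v : Circle, u ≠ v ∧ I = oInt u v

/-- The dual interval `I* = (v,u)` of `I = (u,v)`, i.e. the interior of the complement. -/
def dual (I : Set Circle) : Set Circle := interior Iᶜ

/-- The leaf `{I, I*}` lies on `J`. -/
def LiesOn (I J : Set Circle) : Prop := I ⊆ J ∨ dual I ⊆ J

/-- A lamination system on `S¹`. -/
structure LamSys (L : Set (Set Circle)) : Prop where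
  nonempty : L.Nonempty
  nd : ∀ I ∈ L, IsND I
  dualMem : ∀ I ∈ L, dual I ∈ L
  unlinked : ∀ I ∈ L, ∀ J ∈ L, LiesOn I J ∨ LiesOn I (dual J)
  chainUnion : ∀ f : ℕ → Set Circle, (∀ n, f n ∈ L) → (∀ n, f n ⊆ f (n + 1)) →
    IsND (⋃ n, f n) → (⋃ n, f n) ∈ L

/-- The leaf associated to an interval. -/
def leafOf (I : Set Circle) : Set (Set Circle) := {I, dual I}

/-- `liminf` of a sequence of sets. -/
def sLiminf (f : ℕ → Set Circle) : Set Circle := ⋃ k, ⋂ n, ⋂ (_ : k ≤ n), f n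

/-- `limsup` of a sequence of sets. -/
def sLimsup (f : ℕ → Set Circle) : Set Circle := ⋂ k, ⋃ n, ⋃ (_ : k ≤ n), f n

/-- The sequence of intervals converges to `J`. -/
def ConvTo (f : ℕ → Set Circle) (J : Set Circle) : Prop :=
  J ⊆ sLiminf f ∧ sLiminf f ⊆ sLimsup f ∧ sLimsup f ⊆ closure J

/-- A gap of a lamination system. -/
def IsGap (L G : Set (Set Circle)) : Prop :=
  G ⊆ L ∧ (∀ I ∈ G, ∀ J ∈ G, I ≠ J → I ∩ J = ∅) ∧ ∀ I ∈ L, ∃ J ∈ G, LiesOn I J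

/-- A gap which is a leaf. -/
def IsLeafGap (G : Set (Set Circle)) : Prop := ∃ I, G = leafOf I

/-- The vertex (endpoint) set of a gap. -/
def vset (G : Set (Set Circle)) : Set Circle := (⋃₀ G)ᶜ

/-- A very full lamination system: every gap is an ideal polygon (finite vertex set). -/
def VeryFull (L : Set (Set Circle)) : Prop := ∀ G, IsGap L G → (vset G).Finite

/-- The set of endpoints of leaves of `L`. -/
def ELset (L : Set (Set Circle)) : Set Circle := ⋃ I ∈ L, frontier I

/-- A rainbow at `p`. -/
def Rainbow (L : Set (Set Circle)) (p : Circle) (f : ℕ → Set Circle) : Prop :=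
  (∀ n, f n ∈ L) ∧ (∀ n, f (n + 1) ⊆ f n) ∧ (⋂ n, f n) = {p}

/-- An `I`-side sequence of leaves. -/
def SideSeq (L : Set (Set Circle)) (I : Set Circle) (f : ℕ → Set Circle) : Prop :=
  (∀ n, f n ∈ L) ∧ (∀ n, I ∉ leafOf (f n)) ∧ (∀ n, LiesOn (f n) I) ∧ ConvTo f I

/-- `I` is isolated in `L`. -/
def IsolatedInt (L : Set (Set Circle)) (I : Set Circle) : Prop := ∀ f, ¬ SideSeq L I f

/-- `C_p^I`. -/
def Cset (L : Set (Set Circle)) (p : Circle) (I : Set Circle) : Set (Set Circle) :=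
  {J ∈ L | p ∈ J ∧ J ⊆ I}

/-- The group of self-homeomorphisms of the circle (composition as multiplication). -/
instance : Group (Circle ≃ₜ Circle) where
  mul g h := h.trans g
  one := Homeomorph.refl _
  inv := Homeomorph.symm
  mul_assoc _ _ _ := Homeomorph.ext fun _ => rfl
  one_mul _ := Homeomorph.ext fun _ => rfl
  mul_one _ := Homeomorph.ext fun _ => rfl
  inv_mul_cancel g := Homeomorph.ext fun x => g.symm_apply_apply x

/-- An orientation-preserving homeomorphism of the circle. -/
def OrientPres (g : Circle ≃ₜ Circle) : Prop :=
  ∀ a b c, posOri a b c → posOri (g a) (g b) (g c)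

/-- `L` is invariant under a subgroup `G` of homeomorphisms. -/
def GInv (G : Subgroup (Circle ≃ₜ Circle)) (L : Set (Set Circle)) : Prop :=
  ∀ g ∈ G, ∀ I ∈ L, (⇑g) '' I ∈ L

/-- The image of a gap under a homeomorphism. -/
def gapIm (g : Circle ≃ₜ Circle) (P : Set (Set Circle)) : Set (Set Circle) :=
  (fun I => (⇑g) '' I) '' P

/-- `v_G(P)`, the union of the vertex sets of the `G`-orbit of the gap `P`. -/
def vOrb (G : Subgroup (Circle ≃ₜ Circle)) (P : Set (Set Circle)) : Set Circle :=
  ⋃ g ∈ G, vset (gapIm g P)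

/-- A loose lamination system: distinct non-leaf gaps have disjoint vertex sets. -/
def Loose (L : Set (Set Circle)) : Prop :=
  ∀ P Q, IsGap L P → IsGap L Q → ¬ IsLeafGap P → ¬ IsLeafGap Q → P ≠ Q →
    vset P ∩ vset Q = ∅

/-- A pseudo-fibered triple `(L₁, L₂, G)`. -/
structure PFib (L₁ L₂ : Set (Set Circle)) (G : Subgroup (Circle ≃ₜ Circle)) : Prop where
  orient : ∀ g ∈ G, OrientPres g
  fg : G.FG
  lam₁ : LamSys L₁
  lam₂ : LamSys L₂
  inv₁ : GInv G L₁
  inv₂ : GInv G L₂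
  veryFull₁ : VeryFull L₁
  veryFull₂ : VeryFull L₂
  loose₁ : Loose L₁
  loose₂ : Loose L₂
  disjEnds : ELset L₁ ∩ ELset L₂ = ∅

namespace Stmt11
open Real


lemma inv_mul_ne_one {u v : Circle} (h : u ≠ v) : u⁻¹ * v ≠ 1 := by
  simp only [ne_eq, inv_mul_eq_one]
  exact h

noncomputable def th (z : Circle) : ℝ :=
  if 0 ≤ Complex.arg z then Complex.arg z else Complex.arg z + 2*π

lemma th_nonneg (z : Circle) : 0 ≤ th z := by
  unfold th; split_ifs with h
  · exact h
  · push_neg at h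
    have := Complex.neg_pi_lt_arg (z : ℂ)
    have := Real.pi_pos
    linarith

lemma th_lt (z : Circle) : th z < 2*π := by
  unfold th; split_ifs with h
  · have := Complex.arg_le_pi (z : ℂ); have := Real.pi_pos; linarith
  · push_neg at h; linarith [Real.pi_pos]

lemma arg_eq_zero_iff (z : Circle) : Complex.arg z = 0 ↔ z = 1 := by
  constructor
  · intro h
    have : Complex.arg z = Complex.arg (1 : Circle) := by
      simpa [Complex.arg_one] using h
    exact Circle.injective_arg this
  · intro h; simp [h, Complex.arg_one]

lemma th_eq_zero_iff (z : Circle) : th z = 0 ↔ z = 1 := by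
  unfold th; split_ifs with h
  · exact arg_eq_zero_iff z
  · push_neg at h
    constructor
    · intro h2
      have := Complex.neg_pi_lt_arg (z : ℂ); have := Real.pi_pos
      exfalso; linarith
    · intro h1
      exfalso
      have : Complex.arg (z:ℂ) = 0 := (arg_eq_zero_iff z).2 h1
      linarith

lemma th_pos (z : Circle) (hz : z ≠ 1) : 0 < th z :=
  lt_of_le_of_ne (th_nonneg z) (fun h => hz ((th_eq_zero_iff z).1 h.symm))

lemma exp_th (z : Circle) : Circle.exp (th z) = z := by
  unfold th; split_ifs with h
  · exact Circle.exp_arg z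
  · rw [Circle.exp_add_two_pi]; exact Circle.exp_arg z

lemma th_exp {s : ℝ} (h0 : 0 ≤ s) (h2 : s < 2*π) : th (Circle.exp s) = s := by
  have he : Circle.exp (th (Circle.exp s)) = Circle.exp s := exp_th _
  obtain ⟨m, hm⟩ := Circle.exp_eq_exp.1 he
  have h1 := th_nonneg (Circle.exp s)
  have h3 := th_lt (Circle.exp s)
  have hpi := Real.pi_pos
  have hm0 : m = 0 := by
    by_contra hne
    rcases lt_or_gt_of_ne hne with hlt | hgt
    · have hm1 : m ≤ -1 := by omega
      have : (m:ℝ) ≤ -1 := by exact_mod_cast hm1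
      nlinarith
    · have : (1:ℝ) ≤ (m:ℝ) := by exact_mod_cast hgt
      nlinarith
  rw [hm0] at hm; simpa using hm

lemma sproj_exp {s : ℝ} (h0 : 0 < s) (h2 : s < 2*π) :
    sproj (Circle.exp s) = Real.tan (s/2 - π/2) := by
  have hre : ((Circle.exp s : Circle) : ℂ).re = Real.cos s := by
    rw [Circle.coe_exp]; exact Complex.exp_ofReal_mul_I_re s
  have him : ((Circle.exp s : Circle) : ℂ).im = Real.sin s := by
    rw [Circle.coe_exp]; exact Complex.exp_ofReal_mul_I_im s
  have hs2 : Real.sin (s/2) ≠ 0 := by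
    have := Real.sin_pos_of_pos_of_lt_pi (x := s/2) (by linarith) (by linarith)
    linarith
  have hsin : Real.sin s = 2 * Real.sin (s/2) * Real.cos (s/2) := by
    have := Real.sin_two_mul (s/2)
    rw [show 2*(s/2) = s by ring] at this
    linarith
  have hcos : Real.cos s - 1 = -2 * Real.sin (s/2)^2 := by
    have h1 : Real.cos s = 2 * Real.cos (s/2)^2 - 1 := by
      have := Real.cos_two_mul (s/2)
      rwa [show 2*(s/2) = s by ring] at this
    have h2 := Real.sin_sq_add_cos_sq (s/2)
    nlinarith
  rw [sproj, hre, him, hsin, hcos, Real.tan_eq_sin_div_cos, Real.sin_sub, Real.cos_sub,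
    Real.sin_pi_div_two, Real.cos_pi_div_two]
  field_simp
  ring_nf
  rw [mul_assoc, mul_inv_cancel₀, mul_one]
  convert hs2 using 2
  ring

lemma sproj_lt_iff {z w : Circle} (hz : z ≠ 1) (hw : w ≠ 1) :
    sproj z < sproj w ↔ th z < th w := by
  have hz0 := th_pos z hz; have hz2 := th_lt z
  have hw0 := th_pos w hw; have hw2 := th_lt w
  have hpi := Real.pi_pos
  have ez : sproj z = Real.tan (th z/2 - π/2) := by
    rw [← exp_th z, th_exp (le_of_lt hz0) hz2]
    exact sproj_exp hz0 hz2
  have ew : sproj w = Real.tan (th w/2 - π/2) := by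
    rw [← exp_th w, th_exp (le_of_lt hw0) hw2]
    exact sproj_exp hw0 hw2
  rw [ez, ew]
  have hmono := Real.strictMonoOn_tan
  have hzmem : th z/2 - π/2 ∈ Ioo (-(π/2)) (π/2) := ⟨by linarith, by linarith⟩
  have hwmem : th w/2 - π/2 ∈ Ioo (-(π/2)) (π/2) := ⟨by linarith, by linarith⟩
  rw [hmono.lt_iff_lt hzmem hwmem]
  constructor <;> intro h <;> linarith


def Phi (u : Circle) (t : ℝ) : Circle := u * Circle.exp t

noncomputable def bb (u v : Circle) : ℝ := th (u⁻¹ * v)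

lemma bb_pos {u v : Circle} (h : u ≠ v) : 0 < bb u v :=
  th_pos _ (inv_mul_ne_one h)

lemma bb_lt (u v : Circle) : bb u v < 2*π := th_lt _

lemma Phi_bb {u v : Circle} : Phi u (bb u v) = v := by
  rw [Phi, bb, exp_th, mul_inv_cancel_left]

lemma Phi_zero (u : Circle) : Phi u 0 = u := by rw [Phi, Circle.exp_zero, mul_one]

lemma Phi_inj {u : Circle} {s t : ℝ} (hs0 : 0 ≤ s) (hs2 : s < 2*π) (ht0 : 0 ≤ t)
    (ht2 : t < 2*π) (h : Phi u s = Phi u t) : s = t := by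
  have : Circle.exp s = Circle.exp t := mul_left_cancel h
  rw [← th_exp hs0 hs2, ← th_exp ht0 ht2, this]

lemma Phi_th {u p : Circle} : Phi u (th (u⁻¹ * p)) = p := by
  rw [Phi, exp_th, mul_inv_cancel_left]

lemma th_Phi {u : Circle} {t : ℝ} (h0 : 0 ≤ t) (h2 : t < 2*π) : th (u⁻¹ * Phi u t) = t := by
  rw [Phi, inv_mul_cancel_left, th_exp h0 h2]

lemma mem_oInt_iff {u v p : Circle} (huv : u ≠ v) :
    p ∈ oInt u v ↔ p ≠ u ∧ th (u⁻¹ * p) < bb u v := by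
  have hv1 : u⁻¹ * v ≠ 1 := inv_mul_ne_one huv
  constructor
  · rintro ⟨h1, h2, h3, h4⟩
    have hp1 : u⁻¹ * p ≠ 1 := inv_mul_ne_one h1
    exact ⟨fun e => h1 e.symm, (sproj_lt_iff hp1 hv1).1 h4⟩
  · rintro ⟨h1, h2⟩
    have hp1 : u⁻¹ * p ≠ 1 := inv_mul_ne_one (fun e => h1 e.symm)
    refine ⟨fun e => h1 e.symm, ?_, fun e => huv e.symm, (sproj_lt_iff hp1 hv1).2 h2⟩
    intro e; rw [e] at h2; exact lt_irrefl _ h2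

lemma oInt_eq_image {u v : Circle} (huv : u ≠ v) :
    oInt u v = Phi u '' Set.Ioo 0 (bb u v) := by
  ext p
  rw [mem_oInt_iff huv]
  constructor
  · rintro ⟨h1, h2⟩
    exact ⟨th (u⁻¹ * p), ⟨th_pos _ (inv_mul_ne_one (fun e => h1 e.symm)), h2⟩, Phi_th⟩
  · rintro ⟨t, ⟨ht0, ht2⟩, rfl⟩
    have htt : th (u⁻¹ * Phi u t) = t := th_Phi (le_of_lt ht0) (ht2.trans (bb_lt u v))
    refine ⟨?_, by rw [htt]; exact ht2⟩
    intro e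
    have h1 : th (u⁻¹ * Phi u t) = t := htt
    rw [e] at h1
    rw [inv_mul_cancel] at h1
    have : th (1 : Circle) = 0 := (th_eq_zero_iff 1).2 rfl
    rw [this] at h1
    exact absurd h1.symm (ne_of_gt ht0)

lemma u_not_mem_oInt {u v : Circle} : u ∉ oInt u v := fun h => h.1 rfl

lemma v_not_mem_oInt {u v : Circle} : v ∉ oInt u v := fun h => h.2.1 rfl

lemma re_eq_one {z : Circle} (h : (z : ℂ).re = 1) : z = 1 := by
  have hn := Circle.normSq_coe z
  rw [Complex.normSq_apply, h] at hn
  have him : (z : ℂ).im = 0 := by nlinarith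
  have : (z : ℂ) = 1 := by
    apply Complex.ext <;> simp [h, him]
  exact Subtype.ext (by simpa using this)

lemma continuousOn_sproj : ContinuousOn sproj {z : Circle | z ≠ 1} := by
  apply ContinuousOn.div
  · exact (Complex.continuous_im.comp continuous_subtype_val).continuousOn
  · exact ((Complex.continuous_re.comp continuous_subtype_val).sub continuous_const).continuousOn
  · intro z hz
    simp only [Set.mem_setOf_eq] at hz
    intro h
    exact hz (re_eq_one (by linarith))

lemma isOpen_oInt (u v : Circle) : IsOpen (oInt u v) := by
  by_cases huv : u = v
  · have : oInt u v = ∅ := by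
      ext p; simp only [Set.mem_empty_iff_false, iff_false]
      rintro ⟨h1, h2, h3, h4⟩; exact h3 huv.symm
    rw [this]; exact isOpen_empty
  · have heq : oInt u v = ({u}ᶜ ∩ (fun p => sproj (u⁻¹ * p)) ⁻¹' Set.Iio (sproj (u⁻¹ * v))) ∩ {v}ᶜ := by
      ext p
      simp only [Set.mem_inter_iff, Set.mem_compl_iff, Set.mem_singleton_iff,
        Set.mem_preimage, Set.mem_Iio]
      constructor
      · rintro ⟨h1, h2, h3, h4⟩; exact ⟨⟨fun e => h1 e.symm, h4⟩, h2⟩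
      · rintro ⟨⟨h1, h2⟩, h3⟩; exact ⟨fun e => h1 e.symm, h3, fun e => huv e.symm, h2⟩
    rw [heq]
    apply IsOpen.inter _ (isOpen_compl_singleton)
    have hcont : ContinuousOn (fun p => sproj (u⁻¹ * p)) {u}ᶜ := by
      apply continuousOn_sproj.comp (continuous_const.mul continuous_id).continuousOn
      intro p hp
      simp only [Set.mem_compl_iff, Set.mem_singleton_iff] at hp ⊢
      exact inv_mul_ne_one (fun e => hp e.symm)
    exact hcont.isOpen_inter_preimage isOpen_compl_singleton isOpen_Iio

lemma continuous_Phi (u : Circle) : Continuous (Phi u) :=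
  continuous_const.mul Circle.exp.continuous

lemma tendsto_aux (u : Circle) (c d : ℝ) :
    Filter.Tendsto (fun n : ℕ => Phi u (c + d/(n+2))) Filter.atTop (nhds (Phi u c)) := by
  apply ((continuous_Phi u).continuousAt.tendsto.comp)
  have h1 : Filter.Tendsto (fun n : ℕ => d / ((n:ℝ)+2)) Filter.atTop (nhds 0) := by
    have := (tendsto_const_div_atTop_nhds_zero_nat d).comp (Filter.tendsto_add_atTop_nat 2)
    apply this.congr
    intro n
    show d / (((n + 2 : ℕ) : ℝ)) = d / ((n:ℝ) + 2)
    push_cast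
    ring
  simpa using (tendsto_const_nhds (x := c)).add h1

lemma closure_oInt {u v : Circle} (huv : u ≠ v) :
    closure (oInt u v) = oInt u v ∪ {u, v} := by
  have hb0 := bb_pos huv
  have hb2 := bb_lt u v
  apply Set.Subset.antisymm
  · have hIcc : Set.Icc (0:ℝ) (bb u v) = insert 0 (insert (bb u v) (Set.Ioo 0 (bb u v))) := by
      ext x
      simp only [Set.mem_Icc, Set.mem_insert_iff, Set.mem_Ioo]
      constructor
      · rintro ⟨h1, h2⟩
        rcases eq_or_lt_of_le h1 with h | h
        · exact Or.inl h.symm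
        · rcases eq_or_lt_of_le h2 with h' | h'
          · exact Or.inr (Or.inl h')
          · exact Or.inr (Or.inr ⟨h, h'⟩)
      · rintro (rfl | rfl | ⟨h1, h2⟩) <;> constructor <;> linarith
    have hK : IsCompact (Phi u '' Set.Icc 0 (bb u v)) :=
      isCompact_Icc.image (continuous_Phi u)
    have hsub : oInt u v ⊆ Phi u '' Set.Icc 0 (bb u v) := by
      rw [oInt_eq_image huv]
      exact Set.image_mono Set.Ioo_subset_Icc_self
    refine (closure_minimal hsub hK.isClosed).trans ?_
    rw [hIcc, Set.image_insert_eq, Set.image_insert_eq, Phi_zero, Phi_bb, ← oInt_eq_image huv]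
    intro x hx
    rcases hx with rfl | rfl | hx
    · exact Or.inr (Or.inl rfl)
    · exact Or.inr (Or.inr rfl)
    · exact Or.inl hx
  · have hmem : ∀ (c d : ℝ), (∀ n : ℕ, c + d/((n:ℝ)+2) ∈ Set.Ioo 0 (bb u v)) →
        Phi u c ∈ closure (oInt u v) := by
      intro c d hin
      apply mem_closure_of_tendsto (tendsto_aux u c d)
      apply Filter.Eventually.of_forall
      intro n
      rw [oInt_eq_image huv]
      exact Set.mem_image_of_mem _ (hin n)
    have hu : u ∈ closure (oInt u v) := by
      have := hmem 0 (bb u v) (fun n => ?_)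
      · rwa [Phi_zero] at this
      · have hn2 : (2:ℝ) ≤ (n:ℝ) + 2 := by
          have := Nat.cast_nonneg (α := ℝ) n
          linarith
        have h1 : 0 < bb u v / ((n:ℝ)+2) := by positivity
        have h2 : bb u v / ((n:ℝ)+2) ≤ bb u v / 2 :=
          div_le_div_of_nonneg_left (le_of_lt hb0) (by norm_num) hn2
        constructor <;> [linarith; linarith]
    have hv : v ∈ closure (oInt u v) := by
      have := hmem (bb u v) (-(bb u v)) (fun n => ?_)
      · rwa [Phi_bb] at this
      · have hn2 : (2:ℝ) ≤ (n:ℝ) + 2 := by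
          have := Nat.cast_nonneg (α := ℝ) n
          linarith
        have h1 : 0 < bb u v / ((n:ℝ)+2) := by positivity
        have h2 : bb u v / ((n:ℝ)+2) ≤ bb u v / 2 :=
          div_le_div_of_nonneg_left (le_of_lt hb0) (by norm_num) hn2
        have h3 : -(bb u v) / ((n:ℝ)+2) = -(bb u v / ((n:ℝ)+2)) := by ring
        rw [h3]
        constructor <;> [linarith; linarith]
    rintro x (hx | hx)
    · exact subset_closure hx
    · rcases hx with rfl | rfl
      · exact hu
      · exact hv

lemma frontier_oInt {u v : Circle} (huv : u ≠ v) :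
    frontier (oInt u v) = {u, v} := by
  rw [frontier, (isOpen_oInt u v).interior_eq, closure_oInt huv]
  ext x
  simp only [Set.mem_diff, Set.mem_union, Set.mem_insert_iff, Set.mem_singleton_iff]
  constructor
  · rintro ⟨h1 | h1, h2⟩
    · exact absurd h1 h2
    · exact h1
  · rintro (rfl | rfl)
    · exact ⟨Or.inr (Or.inl rfl), u_not_mem_oInt⟩
    · exact ⟨Or.inr (Or.inr rfl), v_not_mem_oInt⟩

lemma Phi_inv_mul (u : Circle) (s t : ℝ) :
    (Phi u s)⁻¹ * Phi u t = Circle.exp (t - s) := by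
  rw [Phi, Phi, show t - s = -s + t by ring, Circle.exp_add, Circle.exp_neg]
  group

lemma th_exp' {x : ℝ} (h0 : -(2*π) < x) (h2 : x < 0) : th (Circle.exp x) = x + 2*π := by
  have : Circle.exp x = Circle.exp (x + 2*π) := (Circle.exp_add_two_pi x).symm
  rw [this, th_exp (by linarith) (by linarith)]

lemma tri {u v p : Circle} (huv : u ≠ v) (hpu : p ≠ u) (hpv : p ≠ v) :
    (p ∈ oInt u v ∧ p ∉ oInt v u) ∨ (p ∈ oInt v u ∧ p ∉ oInt u v) := by
  have hvu : v ≠ u := fun e => huv e.symm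
  have hb0 := bb_pos huv
  have hb2 := bb_lt u v
  set t := th (u⁻¹ * p) with ht
  have ht0 : 0 < t := th_pos _ (inv_mul_ne_one (fun e => hpu e.symm))
  have ht2 : t < 2*π := th_lt _
  have hp : p = Phi u t := Phi_th.symm
  have hv : v = Phi u (bb u v) := Phi_bb.symm
  have htb : t ≠ bb u v := fun e => hpv (by rw [hp, e, Phi_bb])
  have hvpth : v⁻¹ * p = Circle.exp (t - bb u v) := by
    conv_lhs => rw [hv, hp]
    exact Phi_inv_mul u (bb u v) t
  have hvuth : bb v u = 2*π - bb u v := by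
    rw [bb]
    have : v⁻¹ * u = Circle.exp (0 - bb u v) := by
      calc v⁻¹ * u = (Phi u (bb u v))⁻¹ * Phi u 0 := by rw [Phi_zero, ← hv]
        _ = Circle.exp (0 - bb u v) := Phi_inv_mul u (bb u v) 0
    rw [this, th_exp' (by linarith) (by linarith)]
    ring
  rcases lt_or_gt_of_ne htb with hlt | hgt
  · left
    constructor
    · exact (mem_oInt_iff huv).2 ⟨hpu, hlt⟩
    · intro hmem
      have h2 := ((mem_oInt_iff hvu).1 hmem).2
      rw [hvpth, th_exp' (by linarith) (by linarith), hvuth] at h2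
      linarith
  · right
    constructor
    · apply (mem_oInt_iff hvu).2
      refine ⟨hpv, ?_⟩
      rw [hvpth, th_exp (by linarith) (by linarith), hvuth]
      linarith
    · intro hmem
      have h2 := ((mem_oInt_iff huv).1 hmem).2
      rw [← ht] at h2
      linarith

lemma compl_oInt {u v : Circle} (huv : u ≠ v) :
    (oInt u v)ᶜ = oInt v u ∪ {u, v} := by
  ext p
  simp only [Set.mem_compl_iff, Set.mem_union, Set.mem_insert_iff, Set.mem_singleton_iff]
  constructor
  · intro h
    by_cases hpu : p = u
    · exact Or.inr (Or.inl hpu)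
    by_cases hpv : p = v
    · exact Or.inr (Or.inr hpv)
    rcases tri huv hpu hpv with ⟨h1, _⟩ | ⟨h1, _⟩
    · exact absurd h1 h
    · exact Or.inl h1
  · rintro (h | rfl | rfl)
    · intro hmem
      by_cases hpu : p = u
      · exact u_not_mem_oInt (hpu ▸ hmem)
      by_cases hpv : p = v
      · exact v_not_mem_oInt (hpv ▸ hmem)
      rcases tri huv hpu hpv with ⟨_, h2⟩ | ⟨_, h2⟩
      · exact h2 h
      · exact h2 hmem
    · exact u_not_mem_oInt
    · exact v_not_mem_oInt

lemma dual_oInt {u v : Circle} (huv : u ≠ v) : dual (oInt u v) = oInt v u := by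
  have hvu : v ≠ u := fun e => huv e.symm
  rw [dual, interior_compl, closure_oInt huv]
  apply Set.Subset.antisymm
  · intro x hx
    simp only [Set.mem_compl_iff, Set.mem_union, Set.mem_insert_iff,
      Set.mem_singleton_iff, not_or] at hx
    obtain ⟨h1, h2, h3⟩ := hx
    rcases tri huv h2 h3 with ⟨ha, _⟩ | ⟨ha, _⟩
    · exact absurd ha h1
    · exact ha
  · intro x hx
    simp only [Set.mem_compl_iff, Set.mem_union, Set.mem_insert_iff,
      Set.mem_singleton_iff, not_or]
    have hxv : x ≠ v := fun e => u_not_mem_oInt (e ▸ hx)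
    have hxu : x ≠ u := fun e => v_not_mem_oInt (e ▸ hx)
    refine ⟨?_, hxu, hxv⟩
    rcases tri huv hxu hxv with ⟨_, h2⟩ | ⟨_, h2⟩
    · exact fun h => h2 hx
    · exact h2

lemma oInt_infinite {u v : Circle} (huv : u ≠ v) : (oInt u v).Infinite := by
  rw [oInt_eq_image huv]
  apply Set.Infinite.image _ (Set.Ioo_infinite (bb_pos huv))
  intro s hs t ht h
  exact Phi_inj (le_of_lt hs.1) (hs.2.trans (bb_lt u v)) (le_of_lt ht.1)
    (ht.2.trans (bb_lt u v)) h


lemma oInt_disj {u v x : Circle} (huv : u ≠ v) (h1 : x ∈ oInt u v) (h2 : x ∈ oInt v u) :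
    False := by
  have hxu : x ≠ u := fun e => h1.1 e.symm
  have hxv : x ≠ v := h1.2.1
  rcases tri huv hxu hxv with ⟨_, hn⟩ | ⟨_, hn⟩
  · exact hn h2
  · exact hn h1

lemma closure_eq_dual_compl (I : Set Circle) : (dual I)ᶜ = closure I := by
  rw [dual, ← closure_compl, compl_compl]

lemma not_both {L : Set (Set Circle)} (hL : LamSys L) (p : Circle)
    (hE : p ∈ ELset L) (f : ℕ → Set Circle) (hR : Rainbow L p f) : False := by
  classical
  obtain ⟨hfL, hfdec, hfint⟩ := hR
  rw [ELset] at hE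
  simp only [Set.mem_iUnion] at hE
  obtain ⟨I, hIL, hpI⟩ := hE
  obtain ⟨u, v, huv, rfl⟩ := hL.nd I hIL
  rw [frontier_oInt huv] at hpI
  have hvu : v ≠ u := fun e => huv e.symm
  have hanti : Antitone f := antitone_nat_of_succ_le hfdec
  have hpf : ∀ n, p ∈ f n := by
    intro n
    have : p ∈ ⋂ n, f n := by rw [hfint]; rfl
    exact Set.mem_iInter.1 this n
  have hpnotI : p ∉ oInt u v := by
    rcases hpI with rfl | rfl
    · exact u_not_mem_oInt
    · exact v_not_mem_oInt
  have hpnotD : p ∉ oInt v u := by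
    rcases hpI with rfl | rfl
    · exact v_not_mem_oInt
    · exact u_not_mem_oInt
  choose a c hac hfe using fun n => hL.nd (f n) (hfL n)
  have hclf : ∀ n, closure (f n) = f n ∪ {a n, c n} := by
    intro n; rw [hfe n, closure_oInt (hac n), ← hfe n]
  have hcases : ∀ n, oInt v u ⊆ closure (f n) ∨ oInt u v ⊆ closure (f n) := by
    intro n
    rcases hL.unlinked (f n) (hfL n) (oInt u v) hIL with hlies | hlies
    · rcases hlies with hsub | hsub
      · exact absurd (hsub (hpf n)) hpnotI
      · left
        intro x hx
        rw [← closure_eq_dual_compl]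
        intro hmem
        exact oInt_disj huv (hsub hmem) hx
    · rw [dual_oInt huv] at hlies
      rcases hlies with hsub | hsub
      · exact absurd (hsub (hpf n)) hpnotD
      · right
        intro x hx
        rw [← closure_eq_dual_compl]
        intro hmem
        exact oInt_disj huv hx (hsub hmem)
  --由 closure antitone, one alternative holds for all n
  have hclanti : ∀ {n m : ℕ}, n ≤ m → closure (f m) ⊆ closure (f n) :=
    fun hnm => closure_mono (hanti hnm)
  have hglobal : (∀ n, oInt v u ⊆ closure (f n)) ∨ (∀ n, oInt u v ⊆ closure (f n)) := by
    by_contra hcon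
    push_neg at hcon
    obtain ⟨⟨n₁, hn₁⟩, ⟨n₂, hn₂⟩⟩ := hcon
    rcases hcases (max n₁ n₂) with h | h
    · exact hn₁ (h.trans (hclanti (le_max_left n₁ n₂)))
    · exact hn₂ (h.trans (hclanti (le_max_right n₁ n₂)))
  obtain ⟨S, hSinf, hSsub⟩ : ∃ S : Set Circle, S.Infinite ∧ ∀ n, S ⊆ closure (f n) := by
    rcases hglobal with h | h
    · exact ⟨oInt v u, oInt_infinite hvu, h⟩
    · exact ⟨oInt u v, oInt_infinite huv, h⟩
  -- find three distinct points of S different from p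
  obtain ⟨T, hTsub, hTcard⟩ := (hSinf.diff (Set.finite_singleton p)).exists_subset_card_eq 3
  classical
  obtain ⟨q₁, q₂, q₃, h12, h13, h23, hTeq⟩ := Finset.card_eq_three.1 hTcard
  rw [hTeq] at hTsub
  have hmem : ∀ q ∈ ({q₁, q₂, q₃} : Finset Circle), q ≠ p ∧ ∀ n, q ∈ closure (f n) := by
    intro q hq
    have hq' := hTsub hq
    exact ⟨fun e => hq'.2 (e ▸ rfl), fun n => hSsub n hq'.1⟩
  have hev : ∀ q ∈ ({q₁, q₂, q₃} : Finset Circle), ∃ N, ∀ m, N ≤ m → q = a m ∨ q = c m := by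
    intro q hq
    obtain ⟨hqp, hqcl⟩ := hmem q hq
    have : ∃ N, q ∉ f N := by
      by_contra hcon
      push_neg at hcon
      have : q ∈ ⋂ n, f n := Set.mem_iInter.2 hcon
      rw [hfint] at this
      exact hqp this
    obtain ⟨N, hN⟩ := this
    refine ⟨N, fun m hm => ?_⟩
    have hqm : q ∉ f m := fun hmem' => hN (hanti hm hmem')
    have := hqcl m
    rw [hclf m] at this
    rcases this with h | h
    · exact absurd h hqm
    · rcases h with h | h
      · exact Or.inl h
      · exact Or.inr h
  obtain ⟨N₁, hN₁⟩ := hev q₁ (by simp)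
  obtain ⟨N₂, hN₂⟩ := hev q₂ (by simp)
  obtain ⟨N₃, hN₃⟩ := hev q₃ (by simp)
  set m := max N₁ (max N₂ N₃) with hm
  have e1 := hN₁ m (le_max_left _ _)
  have e2 := hN₂ m ((le_max_left _ _).trans (le_max_right _ _))
  have e3 := hN₃ m ((le_max_right _ _).trans (le_max_right _ _))
  rcases e1 with e1 | e1 <;> rcases e2 with e2 | e2 <;> rcases e3 with e3 | e3 <;>
    first
      | exact h12 (e1.trans e2.symm)
      | exact h13 (e1.trans e3.symm)
      | exact h23 (e2.trans e3.symm)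

-- coordinates at p
lemma Phi_Phi (p : Circle) (s t : ℝ) : Phi (Phi p s) t = Phi p (s + t) := by
  rw [Phi, Phi, Phi, Circle.exp_add, mul_assoc]

lemma Phi_ne_self {p : Circle} {t : ℝ} (h0 : 0 < t) (h2 : t < 2*π) : Phi p t ≠ p := by
  intro e
  have h1 : th (p⁻¹ * Phi p t) = t := th_Phi (le_of_lt h0) h2
  rw [e, inv_mul_cancel] at h1
  rw [(th_eq_zero_iff 1).2 rfl] at h1
  exact absurd h1.symm (ne_of_gt h0)

lemma bb_Phi {p : Circle} {s t : ℝ} (hs0 : 0 ≤ s) (hst : s < t) (ht2 : t < 2*π) :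
    bb (Phi p s) (Phi p t) = t - s := by
  rw [bb, Phi_inv_mul, th_exp (by linarith) (by linarith)]

def arcp (p : Circle) (a c : ℝ) : Set Circle := Phi p '' Set.Ioo a c

lemma arcp_eq_oInt {p : Circle} {a c : ℝ} (h0 : 0 < a) (hac : a < c) (hc2 : c < 2*π) :
    arcp p a c = oInt (Phi p a) (Phi p c) := by
  have hne : Phi p a ≠ Phi p c := by
    intro e
    exact absurd (Phi_inj (by linarith) (by linarith) (by linarith) (by linarith) e)
      (ne_of_lt hac)
  rw [oInt_eq_image hne, bb_Phi (le_of_lt h0) hac hc2]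
  ext x
  constructor
  · rintro ⟨t, ht, rfl⟩
    exact ⟨t - a, ⟨by linarith [ht.1], by linarith [ht.2]⟩, by rw [Phi_Phi]; ring_nf⟩
  · rintro ⟨t, ht, rfl⟩
    rw [Phi_Phi]
    exact ⟨a + t, ⟨by linarith [ht.1], by linarith [ht.2]⟩, rfl⟩

lemma arcp_mem_L_ne {p : Circle} {a c : ℝ} (h0 : 0 < a) (hac : a < c) (hc2 : c < 2*π) :
    Phi p a ≠ Phi p c := by
  intro e
  exact absurd (Phi_inj (by linarith) (by linarith) (by linarith) (by linarith) e)
    (ne_of_lt hac)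

lemma mem_arcp_coord {p : Circle} {a c t : ℝ} (hac : a < c) (hc2 : c < 2*π) (ha0 : 0 ≤ a)
    (ht0 : 0 ≤ t) (ht2 : t < 2*π) (h : Phi p t ∈ arcp p a c) : t ∈ Set.Ioo a c := by
  obtain ⟨s, hs, he⟩ := h
  have : s = t := Phi_inj (by linarith [hs.1]) (by linarith [hs.2]) ht0 ht2 he
  exact this ▸ hs

lemma coord_of_ne {p x : Circle} (h : x ≠ p) :
    ∃ t, 0 < t ∧ t < 2*π ∧ x = Phi p t := by
  refine ⟨th (p⁻¹ * x), th_pos _ (inv_mul_ne_one (fun e => h e.symm)), th_lt _, Phi_th.symm⟩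

lemma p_notin_closure_arcp {p : Circle} {a c : ℝ} (h0 : 0 < a) (hac : a < c) (hc2 : c < 2*π) :
    p ∉ closure (arcp p a c) := by
  rw [arcp_eq_oInt h0 hac hc2, closure_oInt (arcp_mem_L_ne h0 hac hc2)]
  rintro (h | h)
  · rw [← arcp_eq_oInt h0 hac hc2] at h
    obtain ⟨t, ht, he⟩ := h
    exact Phi_ne_self (by linarith [ht.1]) (by linarith [ht.2]) he
  · rcases h with h | h
    · exact Phi_ne_self h0 (by linarith) h.symm
    · exact Phi_ne_self (by linarith) hc2 h.symm

lemma dual_arcp {p : Circle} {a c : ℝ} (h0 : 0 < a) (hac : a < c) (hc2 : c < 2*π) :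
    dual (arcp p a c) = oInt (Phi p c) (Phi p a) := by
  rw [arcp_eq_oInt h0 hac hc2, dual_oInt (arcp_mem_L_ne h0 hac hc2)]

lemma p_mem_dual_arcp {p : Circle} {a c : ℝ} (h0 : 0 < a) (hac : a < c) (hc2 : c < 2*π) :
    p ∈ dual (arcp p a c) := by
  rw [dual_arcp h0 hac hc2]
  have hcp : Phi p c ≠ Phi p a := fun e => arcp_mem_L_ne h0 hac hc2 e.symm
  apply (mem_oInt_iff hcp).2
  constructor
  · exact fun e => Phi_ne_self (by linarith) hc2 e.symm
  · have h1 : (Phi p c)⁻¹ * p = Circle.exp (0 - c) := by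
      calc (Phi p c)⁻¹ * p = (Phi p c)⁻¹ * Phi p 0 := by rw [Phi_zero]
        _ = Circle.exp (0 - c) := Phi_inv_mul p c 0
    have h2 : (Phi p c)⁻¹ * Phi p a = Circle.exp (a - c) := Phi_inv_mul p c a
    rw [h1, bb, h2, th_exp' (by linarith) (by linarith), th_exp' (by linarith) (by linarith)]
    linarith

lemma closure_arcp {p : Circle} {a c : ℝ} (h0 : 0 < a) (hac : a < c) (hc2 : c < 2*π) :
    closure (arcp p a c) = arcp p a c ∪ {Phi p a, Phi p c} := by
  rw [arcp_eq_oInt h0 hac hc2, closure_oInt (arcp_mem_L_ne h0 hac hc2),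
    ← arcp_eq_oInt h0 hac hc2]

-- representation of leaves avoiding p
lemma rep_of_not_closure {L : Set (Set Circle)} (hL : LamSys L) {p : Circle} {K : Set Circle}
    (hK : K ∈ L) (hcl : p ∉ closure K) :
    ∃ a c, 0 < a ∧ a < c ∧ c < 2*π ∧ K = arcp p a c := by
  obtain ⟨u, v, huv, rfl⟩ := hL.nd K hK
  have hup : u ≠ p := by
    intro e
    exact hcl (by rw [closure_oInt huv, ← e]; exact Or.inr (Or.inl rfl))
  have hvp : v ≠ p := by
    intro e
    exact hcl (by rw [closure_oInt huv, ← e]; exact Or.inr (Or.inr rfl))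
  obtain ⟨s, hs0, hs2, hu⟩ := coord_of_ne hup
  obtain ⟨t, ht0, ht2, hv⟩ := coord_of_ne hvp
  have hst : s ≠ t := by
    intro e; exact huv (by rw [hu, hv, e])
  rcases lt_or_gt_of_ne hst with hlt | hgt
  · exact ⟨s, t, hs0, hlt, ht2, by rw [hu, hv, arcp_eq_oInt hs0 hlt ht2]⟩
  · -- impossible: p ∈ oInt u v
    exfalso
    apply hcl
    apply subset_closure
    have hbb : bb u v = t - s + 2*π := by
      rw [hu, hv, bb, Phi_inv_mul, th_exp' (by linarith) (by linarith)]
    rw [oInt_eq_image huv]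
    refine ⟨2*π - s, ⟨by linarith, by rw [hbb]; linarith⟩, ?_⟩
    rw [hu, Phi_Phi]
    have : s + (2*π - s) = 2*π := by ring
    rw [this, Phi, Circle.exp_two_pi, mul_one]

lemma arcp_subset_coord {p : Circle} {a₁ c₁ a₂ c₂ : ℝ} (h10 : 0 < a₁) (h1 : a₁ < c₁)
    (h12 : c₁ < 2*π) (h20 : 0 < a₂) (h2 : a₂ < c₂) (h22 : c₂ < 2*π)
    (hsub : arcp p a₁ c₁ ⊆ arcp p a₂ c₂) : a₂ ≤ a₁ ∧ c₁ ≤ c₂ := by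
  have hIoo : Set.Ioo a₁ c₁ ⊆ Set.Ioo a₂ c₂ := by
    intro t ht
    exact mem_arcp_coord h2 h22 (le_of_lt h20) (by linarith [ht.1]) (by linarith [ht.2])
      (hsub (Set.mem_image_of_mem _ ht))
  exact (Set.Ioo_subset_Ioo_iff h1).1 hIoo

lemma arcp_subset_of_coord {p : Circle} {a₁ c₁ a₂ c₂ : ℝ}
    (h : a₂ ≤ a₁ ∧ c₁ ≤ c₂) : arcp p a₁ c₁ ⊆ arcp p a₂ c₂ :=
  Set.image_mono (Set.Ioo_subset_Ioo h.1 h.2)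

lemma arcp_inter_nonempty {p : Circle} {a₁ c₁ a₂ c₂ : ℝ} (h1 : a₁ < c₁) (h2 : a₂ < c₂)
    (ha : a₂ < c₁) (hb : a₁ < c₂) : (arcp p a₁ c₁ ∩ arcp p a₂ c₂).Nonempty := by
  set t := (max a₁ a₂ + min c₁ c₂)/2 with htdef
  have h3 : max a₁ a₂ < min c₁ c₂ := by
    rcases max_cases a₁ a₂ with ⟨he, _⟩ | ⟨he, _⟩ <;> rcases min_cases c₁ c₂ with ⟨he2, _⟩ | ⟨he2, _⟩ <;>
      rw [he, he2] <;> linarith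
  have ht1 : t ∈ Set.Ioo a₁ c₁ := by
    constructor
    · have := le_max_left a₁ a₂; have := min_le_left c₁ c₂
      simp only [htdef]; linarith
    · have := le_max_left a₁ a₂; have := min_le_left c₁ c₂
      simp only [htdef]; linarith
  have ht2 : t ∈ Set.Ioo a₂ c₂ := by
    constructor
    · have := le_max_right a₁ a₂; have := min_le_right c₁ c₂
      simp only [htdef]; linarith
    · have := le_max_right a₁ a₂; have := min_le_right c₁ c₂
      simp only [htdef]; linarith
  exact ⟨Phi p t, Set.mem_image_of_mem _ ht1, Set.mem_image_of_mem _ ht2⟩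

lemma laminar {L : Set (Set Circle)} (hL : LamSys L) {p : Circle} {a₁ c₁ a₂ c₂ : ℝ}
    (h10 : 0 < a₁) (h1 : a₁ < c₁) (h12 : c₁ < 2*π)
    (h20 : 0 < a₂) (h2 : a₂ < c₂) (h22 : c₂ < 2*π)
    (hK₁ : arcp p a₁ c₁ ∈ L) (hK₂ : arcp p a₂ c₂ ∈ L) :
    (a₂ ≤ a₁ ∧ c₁ ≤ c₂) ∨ (a₁ ≤ a₂ ∧ c₂ ≤ c₁) ∨ c₁ ≤ a₂ ∨ c₂ ≤ a₁ := by
  rcases hL.unlinked _ hK₁ _ hK₂ with (hsub | hsub) | (hsub | hsub)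
  · exact Or.inl (arcp_subset_coord h10 h1 h12 h20 h2 h22 hsub)
  · exfalso
    exact p_notin_closure_arcp h20 h2 h22 (subset_closure (hsub (p_mem_dual_arcp h10 h1 h12)))
  · right; right
    by_contra hcon
    push_neg at hcon
    obtain ⟨x, hx1, hx2⟩ := arcp_inter_nonempty h1 h2 hcon.1 hcon.2
    have hxc : x ∈ (arcp p a₂ c₂)ᶜ := interior_subset (hsub hx1)
    exact hxc hx2
  · -- dual K₁ ⊆ dual K₂ : K₂ ⊆ closure K₁
    have hsub2 : arcp p a₂ c₂ ⊆ closure (arcp p a₁ c₁) := by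
      intro x hx
      rw [← closure_eq_dual_compl]
      intro hmem
      exact interior_subset (hsub hmem) hx
    right; left
    have hIcc : Set.Ioo a₂ c₂ ⊆ Set.Icc a₁ c₁ := by
      intro t ht
      obtain ⟨ht1, ht2⟩ := ht
      have ht0 : (0:ℝ) ≤ t := by linarith
      have ht2' : t < 2*π := by linarith
      have hx := hsub2 (Set.mem_image_of_mem _ ⟨ht1, ht2⟩)
      rw [closure_arcp h10 h1 h12] at hx
      rcases hx with hx | hx
      · have := mem_arcp_coord h1 h12 (le_of_lt h10) ht0 ht2' hx
        exact ⟨le_of_lt this.1, le_of_lt this.2⟩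
      · rcases hx with hx | hx
        · have he : t = a₁ := Phi_inj ht0 ht2' (by linarith) (by linarith) hx
          constructor <;> simp [he] <;> linarith
        · have he : t = c₁ := Phi_inj ht0 ht2' (by linarith) (by linarith) hx
          constructor <;> simp [he] <;> linarith
    constructor
    · by_contra hcon
      push_neg at hcon
      have ht : (a₂ + min c₂ a₁)/2 ∈ Set.Ioo a₂ c₂ := by
        rcases min_cases c₂ a₁ with ⟨he, _⟩ | ⟨he, _⟩ <;> rw [he] <;> constructor <;> linarith
      have := (hIcc ht).1
      rcases min_cases c₂ a₁ with ⟨he, _⟩ | ⟨he, _⟩ <;> rw [he] at this <;> linarith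
    · by_contra hcon
      push_neg at hcon
      have ht : (max a₂ c₁ + c₂)/2 ∈ Set.Ioo a₂ c₂ := by
        rcases max_cases a₂ c₁ with ⟨he, _⟩ | ⟨he, _⟩ <;> rw [he] <;> constructor <;> linarith
      have := (hIcc ht).2
      rcases max_cases a₂ c₁ with ⟨he, _⟩ | ⟨he, _⟩ <;> rw [he] at this <;> linarith

def Qp (L : Set (Set Circle)) (p : Circle) (a c : ℝ) : Prop :=
  0 < a ∧ a < c ∧ c < 2*π ∧ arcp p a c ∈ L

lemma not_endpoint {L : Set (Set Circle)} {p : Circle} (hp : p ∉ ELset L) :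
    ∀ I ∈ L, p ∉ frontier I := by
  intro I hI h
  exact hp (Set.mem_biUnion hI h)

lemma dual_rep {L : Set (Set Circle)} (hL : LamSys L) {p : Circle} {J : Set Circle}
    (hJ : J ∈ L) (hpJ : p ∈ J) : ∃ a c, Qp L p a c ∧ dual J = arcp p a c := by
  obtain ⟨u, v, huv, rfl⟩ := hL.nd J hJ
  have hvu : v ≠ u := fun e => huv e.symm
  have hcl : p ∉ closure (dual (oInt u v)) := by
    rw [dual_oInt huv, closure_oInt hvu]
    rintro (h | h)
    · exact oInt_disj huv hpJ h
    · rcases h with rfl | rfl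
      · exact hpJ.2.1 rfl
      · exact hpJ.1 rfl
  obtain ⟨a, c, h0, hac, hc2, heq⟩ :=
    rep_of_not_closure hL (hL.dualMem _ hJ) hcl
  exact ⟨a, c, ⟨h0, hac, hc2, heq ▸ hL.dualMem _ hJ⟩, heq⟩

lemma mem_or_dual {L : Set (Set Circle)} (hL : LamSys L) {p : Circle} (hp : p ∉ ELset L)
    {I : Set Circle} (hI : I ∈ L) : p ∈ I ∨ p ∈ dual I := by
  obtain ⟨u, v, huv, rfl⟩ := hL.nd I hI
  have hfr := not_endpoint hp _ hI
  rw [frontier_oInt huv] at hfr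
  have hpu : p ≠ u := fun e => hfr (e ▸ Or.inl rfl)
  have hpv : p ≠ v := fun e => hfr (e ▸ Or.inr rfl)
  rw [dual_oInt huv]
  rcases tri huv hpu hpv with ⟨h, _⟩ | ⟨h, _⟩
  · exact Or.inl h
  · exact Or.inr h

lemma exists_Q {L : Set (Set Circle)} (hL : LamSys L) {p : Circle} (hp : p ∉ ELset L) :
    ∃ a c, Qp L p a c := by
  obtain ⟨I, hI⟩ := hL.nonempty
  rcases mem_or_dual hL hp hI with h | h
  · obtain ⟨a, c, hQ, _⟩ := dual_rep hL hI h
    exact ⟨a, c, hQ⟩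
  · obtain ⟨a, c, hQ, _⟩ := dual_rep hL (hL.dualMem _ hI) h
    exact ⟨a, c, hQ⟩

lemma perbase {L : Set (Set Circle)} (hL : LamSys L) {p : Circle} (hp : p ∉ ELset L)
    {a₀ c₀ : ℝ} (hQ0 : Qp L p a₀ c₀) :
    (∃ f, Rainbow L p f) ∨
    (∃ r l, Qp L p r l ∧ arcp p a₀ c₀ ⊆ arcp p r l ∧
      ∀ a c, Qp L p a c → arcp p r l ⊆ arcp p a c → arcp p a c = arcp p r l) := by
  classical
  obtain ⟨ha₀, hac₀, hc₀, hK₀⟩ := hQ0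
  have hpi := Real.pi_pos
  set T : Set (ℝ × ℝ) := {x | Qp L p x.1 x.2 ∧ x.1 ≤ a₀ ∧ c₀ ≤ x.2} with hTdef
  have hT0 : ((a₀, c₀) : ℝ × ℝ) ∈ T := ⟨⟨ha₀, hac₀, hc₀, hK₀⟩, le_refl _, le_refl _⟩
  have hchain : ∀ x ∈ T, ∀ y ∈ T, (x.1 ≤ y.1 ∧ y.2 ≤ x.2) ∨ (y.1 ≤ x.1 ∧ x.2 ≤ y.2) := by
    rintro x ⟨⟨hx0, hx1, hx2, hxL⟩, hxa, hxc⟩ y ⟨⟨hy0, hy1, hy2, hyL⟩, hya, hyc⟩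
    rcases laminar hL hx0 hx1 hx2 hy0 hy1 hy2 hxL hyL with h | h | h | h
    · exact Or.inr h
    · exact Or.inl h
    · exfalso; linarith
    · exfalso; linarith
  set A : Set ℝ := {a | ∃ c, (a, c) ∈ T} with hAdef
  set C : Set ℝ := {c | ∃ a, (a, c) ∈ T} with hCdef
  have hAne : A.Nonempty := ⟨a₀, c₀, hT0⟩
  have hCne : C.Nonempty := ⟨c₀, a₀, hT0⟩
  have hAbdd : BddBelow A := ⟨0, fun a ⟨c, hT⟩ => le_of_lt hT.1.1⟩
  have hCbdd : BddAbove C := ⟨2*π, fun c ⟨a, hT⟩ => le_of_lt hT.1.2.2.1⟩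
  set r := sInf A with hrdef
  set l := sSup C with hldef
  have hr0 : 0 ≤ r := le_csInf hAne (fun a ⟨c, hT⟩ => le_of_lt hT.1.1)
  have hra : r ≤ a₀ := csInf_le hAbdd ⟨c₀, hT0⟩
  have hlc : c₀ ≤ l := le_csSup hCbdd ⟨a₀, hT0⟩
  have hl2 : l ≤ 2*π := csSup_le hCne (fun c ⟨a, hT⟩ => le_of_lt hT.1.2.2.1)
  have hrl : r < l := lt_of_le_of_lt hra (lt_of_lt_of_le hac₀ hlc)
  have hl0 : 0 < l := lt_of_le_of_lt hr0 hrl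
  have hr2 : r < 2*π := lt_of_le_of_lt hra (lt_trans hac₀ hc₀)
  have hstep : ∀ x, x ∈ T → ∀ n : ℕ, ∃ y, y ∈ T ∧ y.1 ≤ x.1 ∧ x.2 ≤ y.2 ∧
      y.1 < r + 1/(n+1) ∧ l - 1/(n+1) < y.2 := by
    intro x hx n
    have hn1 : (0:ℝ) < 1/((n:ℕ)+1) := by positivity
    obtain ⟨a', hA', ha'lt⟩ := exists_lt_of_csInf_lt hAne
      (show sInf A < r + 1/(n+1) by rw [← hrdef]; linarith)
    obtain ⟨c'', hC'', hc''gt⟩ := exists_lt_of_lt_csSup hCne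
      (show l - 1/(n+1) < sSup C by rw [← hldef]; linarith)
    obtain ⟨c', hT1⟩ := hA'
    obtain ⟨a'', hT2⟩ := hC''
    -- merge the two witnesses
    obtain ⟨w, hwT, hw1, hw2⟩ : ∃ w, w ∈ T ∧ w.1 < r + 1/(n+1) ∧ l - 1/(n+1) < w.2 := by
      rcases hchain _ hT1 _ hT2 with ⟨h1, h2⟩ | ⟨h1, h2⟩
      · refine ⟨(a', c'), hT1, ?_, ?_⟩
        · show a' < r + 1/(n+1); exact ha'lt
        · show l - 1/(n+1) < c'
          have h2' : c'' ≤ c' := h2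
          linarith
      · refine ⟨(a'', c''), hT2, ?_, ?_⟩
        · show a'' < r + 1/(n+1)
          have h1' : a'' ≤ a' := h1
          linarith
        · show l - 1/(n+1) < c''; exact hc''gt
    rcases hchain _ hx _ hwT with ⟨h1, h2⟩ | ⟨h1, h2⟩
    · exact ⟨x, hx, le_refl _, le_refl _, by linarith, by linarith⟩
    · exact ⟨w, hwT, h1, h2, hw1, hw2⟩
  choose F hF using hstep
  let g : ℕ → {x : ℝ × ℝ // x ∈ T} := fun n =>
    Nat.rec ⟨(a₀, c₀), hT0⟩ (fun m prev => ⟨F prev.1 prev.2 m, (hF prev.1 prev.2 m).1⟩) n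
  have hgsucc : ∀ n, (g (n+1) : {x : ℝ × ℝ // x ∈ T}) =
      ⟨F (g n).1 (g n).2 n, (hF (g n).1 (g n).2 n).1⟩ := fun n => rfl
  set Av : ℕ → ℝ := fun n => (g n).1.1 with hAv
  set Cv : ℕ → ℝ := fun n => (g n).1.2 with hCv
  have hTn : ∀ n, ((Av n, Cv n) : ℝ × ℝ) ∈ T := by
    intro n
    have := (g n).2
    rwa [show ((Av n, Cv n) : ℝ × ℝ) = (g n).1 from rfl]
  have hQn : ∀ n, Qp L p (Av n) (Cv n) := fun n => (hTn n).1
  have hstep' : ∀ n, Av (n+1) ≤ Av n ∧ Cv n ≤ Cv (n+1) ∧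
      Av (n+1) < r + 1/(n+1) ∧ l - 1/(n+1) < Cv (n+1) := by
    intro n
    have h := (hF (g n).1 (g n).2 n).2
    have e : (g (n+1)).1 = F (g n).1 (g n).2 n := by rw [hgsucc n]
    refine ⟨?_, ?_, ?_, ?_⟩
    · show (g (n+1)).1.1 ≤ (g n).1.1
      rw [e]; exact h.1
    · show (g n).1.2 ≤ (g (n+1)).1.2
      rw [e]; exact h.2.1
    · show (g (n+1)).1.1 < _
      rw [e]; exact h.2.2.1
    · show _ < (g (n+1)).1.2
      rw [e]; exact h.2.2.2
  have hAanti : ∀ n m, n ≤ m → Av m ≤ Av n := by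
    intro n m h
    exact (antitone_nat_of_succ_le (fun k => (hstep' k).1)) h
  have hCmono : ∀ n m, n ≤ m → Cv n ≤ Cv m := by
    intro n m h
    exact (monotone_nat_of_le_succ (fun k => (hstep' k).2.1)) h
  have hAr : ∀ n, r ≤ Av n := fun n => csInf_le hAbdd ⟨Cv n, hTn n⟩
  have hCl : ∀ n, Cv n ≤ l := fun n => le_csSup hCbdd ⟨Av n, hTn n⟩
  have hU : ∀ t, r < t → t < l → ∃ n, Av n < t ∧ t < Cv n := by
    intro t h1 h2
    obtain ⟨n₁, hn₁⟩ := exists_nat_one_div_lt (show (0:ℝ) < t - r by linarith)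
    obtain ⟨n₂, hn₂⟩ := exists_nat_one_div_lt (show (0:ℝ) < l - t by linarith)
    refine ⟨max (n₁+1) (n₂+1), ?_, ?_⟩
    · have := hAanti (n₁+1) (max (n₁+1) (n₂+1)) (le_max_left _ _)
      have h3 := (hstep' n₁).2.2.1
      push_cast at hn₁ h3 ⊢
      linarith
    · have := hCmono (n₂+1) (max (n₁+1) (n₂+1)) (le_max_right _ _)
      have h3 := (hstep' n₂).2.2.2
      push_cast at hn₂ h3 ⊢
      linarith
  have hUeq : (⋃ n, arcp p (Av n) (Cv n)) = Phi p '' Set.Ioo r l := by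
    apply Set.Subset.antisymm
    · apply Set.iUnion_subset
      intro n x hx
      obtain ⟨t, ht, rfl⟩ := hx
      exact ⟨t, ⟨lt_of_le_of_lt (hAr n) ht.1, lt_of_lt_of_le ht.2 (hCl n)⟩, rfl⟩
    · rintro x ⟨t, ⟨ht1, ht2⟩, rfl⟩
      obtain ⟨n, hn1, hn2⟩ := hU t ht1 ht2
      exact Set.mem_iUnion.2 ⟨n, t, ⟨hn1, hn2⟩, rfl⟩
  have harcs : ∀ n, arcp p (Av n) (Cv n) ∈ L := fun n => (hQn n).2.2.2
  have hsubn : ∀ n, arcp p (Av n) (Cv n) ⊆ arcp p (Av (n+1)) (Cv (n+1)) :=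
    fun n => arcp_subset_of_coord ⟨(hstep' n).1, (hstep' n).2.1⟩
  by_cases hcase : 0 < r ∧ l < 2*π
  · -- maximal element exists
    right
    obtain ⟨hr0', hl2'⟩ := hcase
    have hIsND : IsND (⋃ n, arcp p (Av n) (Cv n)) := by
      refine ⟨Phi p r, Phi p l, arcp_mem_L_ne hr0' hrl hl2', ?_⟩
      rw [hUeq, ← arcp_eq_oInt hr0' hrl hl2']
      rfl
    have hUL : (⋃ n, arcp p (Av n) (Cv n)) ∈ L := hL.chainUnion _ harcs hsubn hIsND
    rw [hUeq] at hUL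
    have hQrl : Qp L p r l := ⟨hr0', hrl, hl2', hUL⟩
    refine ⟨r, l, hQrl, arcp_subset_of_coord ⟨hra, hlc⟩, ?_⟩
    intro a c hQac hsub
    have ha0 := hQac.1
    have hac := hQac.2.1
    have hc2 := hQac.2.2.1
    have hco := arcp_subset_coord hr0' hrl hl2' ha0 hac hc2 hsub
    have hTac : ((a, c) : ℝ × ℝ) ∈ T := ⟨hQac, by linarith [hco.1], by linarith [hco.2]⟩
    have h1 : r ≤ a := csInf_le hAbdd ⟨c, hTac⟩
    have h2 : c ≤ l := le_csSup hCbdd ⟨a, hTac⟩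
    have ha : a = r := le_antisymm (by linarith [hco.1]) h1
    have hc : c = l := le_antisymm h2 (by linarith [hco.2])
    rw [ha, hc]
  · -- rainbow
    left
    have hdeg : r = 0 ∧ l = 2*π := by
      by_contra hcon
      rw [not_and_or] at hcase
      -- if r = 0 and l < 2π, or r > 0 and l = 2π, we get p in frontier of a leaf
      have hND_and_front : ∃ u v : Circle, u ≠ v ∧
          (⋃ n, arcp p (Av n) (Cv n)) = oInt u v ∧ p ∈ ({u, v} : Set Circle) := by
        rcases hcase with hcase | hcase
        · -- r ≤ 0, so r = 0; need l < 2π (else hdeg holds)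
          have hr00 : r = 0 := le_antisymm (not_lt.1 hcase) hr0
          have hl2' : l < 2*π := by
            rcases lt_or_eq_of_le hl2 with h | h
            · exact h
            · exact absurd ⟨hr00, h⟩ hcon
          have hne : p ≠ Phi p l := fun e => Phi_ne_self hl0 hl2' e.symm
          refine ⟨p, Phi p l, hne, ?_, Or.inl rfl⟩
          rw [hUeq, oInt_eq_image hne, hr00]
          have : bb p (Phi p l) = l := by
            rw [bb, th_Phi (le_of_lt hl0) hl2']
          rw [this]
        · -- l ≥ 2π, so l = 2π; need r > 0
          have hl2'' : l = 2*π := le_antisymm hl2 (not_lt.1 hcase)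
          have hr0' : 0 < r := by
            rcases lt_or_eq_of_le hr0 with h | h
            · exact h
            · exact absurd ⟨h.symm, hl2''⟩ hcon
          have hne : Phi p r ≠ p := Phi_ne_self hr0' hr2
          refine ⟨Phi p r, p, hne, ?_, Or.inr rfl⟩
          rw [hUeq, oInt_eq_image hne, hl2'']
          have hbbr : bb (Phi p r) p = 2*π - r := by
            have h1 : (Phi p r)⁻¹ * p = Circle.exp (0 - r) := by
              calc (Phi p r)⁻¹ * p = (Phi p r)⁻¹ * Phi p 0 := by rw [Phi_zero]
                _ = Circle.exp (0 - r) := Phi_inv_mul p r 0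
            rw [bb, h1, th_exp' (by linarith) (by linarith)]
            ring
          rw [hbbr]
          ext x
          constructor
          · rintro ⟨t, ht, rfl⟩
            exact ⟨t - r, ⟨by linarith [ht.1], by linarith [ht.2]⟩,
              by rw [Phi_Phi]; ring_nf⟩
          · rintro ⟨t, ht, rfl⟩
            rw [Phi_Phi]
            exact ⟨r + t, ⟨by linarith [ht.1], by linarith [ht.2]⟩, rfl⟩
      obtain ⟨u, v, huv, hUeq2, hpuv⟩ := hND_and_front
      have hUL : (⋃ n, arcp p (Av n) (Cv n)) ∈ L :=
        hL.chainUnion _ harcs hsubn ⟨u, v, huv, hUeq2⟩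
      rw [hUeq2] at hUL
      apply hp
      apply Set.mem_biUnion hUL
      rw [frontier_oInt huv]
      exact hpuv
    obtain ⟨hr00, hl2π⟩ := hdeg
    refine ⟨fun n => dual (arcp p (Av n) (Cv n)), fun n => hL.dualMem _ (harcs n), ?_, ?_⟩
    · intro n
      exact interior_mono (Set.compl_subset_compl.2 (hsubn n))
    · rw [Set.eq_singleton_iff_unique_mem]
      constructor
      · apply Set.mem_iInter.2
        intro n
        exact p_mem_dual_arcp (hQn n).1 (hQn n).2.1 (hQn n).2.2.1
      · intro x hx
        by_contra hxp
        obtain ⟨t, ht0, ht2, rfl⟩ := coord_of_ne hxp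
        obtain ⟨n, hn1, hn2⟩ := hU t (by rw [hr00]; exact ht0) (by rw [hl2π]; exact ht2)
        have hmem : Phi p t ∈ arcp p (Av n) (Cv n) := ⟨t, ⟨hn1, hn2⟩, rfl⟩
        have hdualmem := Set.mem_iInter.1 hx n
        exact interior_subset hdualmem hmem

lemma rainbow_exists {L : Set (Set Circle)} (hL : LamSys L) (hvf : VeryFull L) {p : Circle}
    (hp : p ∉ ELset L) : ∃ f, Rainbow L p f := by
  classical
  by_contra hno
  have hpi := Real.pi_pos
  have hmax : ∀ a c, Qp L p a c → ∃ r l, Qp L p r l ∧ arcp p a c ⊆ arcp p r l ∧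
      ∀ a' c', Qp L p a' c' → arcp p r l ⊆ arcp p a' c' → arcp p a' c' = arcp p r l :=
    fun a c h => (perbase hL hp h).resolve_left hno
  set G : Set (Set Circle) := {K | ∃ a c, Qp L p a c ∧ K = arcp p a c ∧
      ∀ a' c', Qp L p a' c' → arcp p a c ⊆ arcp p a' c' → arcp p a' c' = arcp p a c}
    with hGdef
  have hGsub : G ⊆ L := by
    rintro K ⟨a, c, hQ, rfl, _⟩
    exact hQ.2.2.2
  have hpair : ∀ K₁ ∈ G, ∀ K₂ ∈ G, K₁ ≠ K₂ → K₁ ∩ K₂ = ∅ := by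
    rintro K₁ ⟨a₁, c₁, hQ₁, rfl, hm₁⟩ K₂ ⟨a₂, c₂, hQ₂, rfl, hm₂⟩ hne
    rcases laminar hL hQ₁.1 hQ₁.2.1 hQ₁.2.2.1 hQ₂.1 hQ₂.2.1 hQ₂.2.2.1
      hQ₁.2.2.2 hQ₂.2.2.2 with h | h | h | h
    · exact absurd (hm₁ a₂ c₂ hQ₂ (arcp_subset_of_coord h)).symm hne
    · exact absurd (hm₂ a₁ c₁ hQ₁ (arcp_subset_of_coord h)) hne
    · ext x
      simp only [Set.mem_inter_iff, Set.mem_empty_iff_false, iff_false, not_and]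
      rintro ⟨t, ht, rfl⟩ hx2
      have hco := mem_arcp_coord hQ₂.2.1 hQ₂.2.2.1 (le_of_lt hQ₂.1)
        (by linarith [ht.1, hQ₁.1]) (by linarith [ht.2, hQ₁.2.2.1]) hx2
      linarith [ht.2, hco.1]
    · ext x
      simp only [Set.mem_inter_iff, Set.mem_empty_iff_false, iff_false, not_and]
      rintro ⟨t, ht, rfl⟩ hx2
      have hco := mem_arcp_coord hQ₂.2.1 hQ₂.2.2.1 (le_of_lt hQ₂.1)
        (by linarith [ht.1, hQ₁.1]) (by linarith [ht.2, hQ₁.2.2.1]) hx2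
      linarith [ht.1, hco.2]
  have hcover : ∀ I ∈ L, ∃ J ∈ G, LiesOn I J := by
    intro I hI
    rcases mem_or_dual hL hp hI with hmem | hmem
    · obtain ⟨a, c, hQ, heq⟩ := dual_rep hL hI hmem
      obtain ⟨r, l, hQrl, hsub, hmaxi⟩ := hmax a c hQ
      exact ⟨arcp p r l, ⟨r, l, hQrl, rfl, hmaxi⟩, Or.inr (by rw [heq]; exact hsub)⟩
    · have hclo : p ∉ closure I := by
        intro hcl
        rw [← closure_eq_dual_compl I] at hcl
        exact hcl hmem
      obtain ⟨a, c, h0, hac, h2, heq⟩ := rep_of_not_closure hL hI hclo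
      have hQ : Qp L p a c := ⟨h0, hac, h2, heq ▸ hI⟩
      obtain ⟨r, l, hQrl, hsub, hmaxi⟩ := hmax a c hQ
      exact ⟨arcp p r l, ⟨r, l, hQrl, rfl, hmaxi⟩, Or.inl (by rw [heq]; exact hsub)⟩
  have hgap : IsGap L G := ⟨hGsub, hpair, hcover⟩
  have hfin := hvf G hgap
  set V : Set ℝ := {a | ∃ c, Qp L p a c ∧ arcp p a c ∈ G} with hVdef
  have hvert : ∀ a ∈ V, Phi p a ∈ vset G := by
    rintro a ⟨c, hQ, hKG⟩
    simp only [vset, Set.mem_compl_iff]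
    intro hmem
    obtain ⟨K', hK'G, hxK'⟩ := hmem
    have hK'G2 := hK'G
    obtain ⟨a', c', hQ', rfl, _⟩ := hK'G2
    have hK'G' : arcp p a' c' ∈ G := hK'G
    have ha2 : a < 2*π := lt_trans hQ.2.1 hQ.2.2.1
    have hco : a ∈ Set.Ioo a' c' :=
      mem_arcp_coord hQ'.2.1 hQ'.2.2.1 (le_of_lt hQ'.1) (le_of_lt hQ.1) ha2 hxK'
    have hKK' : arcp p a c = arcp p a' c' := by
      by_contra hne
      have hdisj := hpair _ hKG _ hK'G' hne
      have hnonempty := arcp_inter_nonempty (p := p) hQ.2.1 hQ'.2.1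
        (by linarith [hco.1, hQ.2.1]) hco.2
      rw [hdisj] at hnonempty
      exact Set.not_nonempty_empty hnonempty
    rw [← hKK'] at hxK'
    have := mem_arcp_coord hQ.2.1 hQ.2.2.1 (le_of_lt hQ.1) (le_of_lt hQ.1) ha2 hxK'
    exact lt_irrefl a this.1
  have hVbound : ∀ a ∈ V, 0 < a ∧ a < 2*π := by
    rintro a ⟨c, hQ, _⟩
    exact ⟨hQ.1, lt_trans hQ.2.1 hQ.2.2.1⟩
  have hVfin : V.Finite := by
    apply Set.Finite.of_finite_image (f := Phi p)
    · apply hfin.subset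
      rintro x ⟨a, haV, rfl⟩
      exact hvert a haV
    · intro a1 h1 a2 h2 he
      exact Phi_inj (le_of_lt (hVbound a1 h1).1) (hVbound a1 h1).2
        (le_of_lt (hVbound a2 h2).1) (hVbound a2 h2).2 he
  have hVne : V.Nonempty := by
    obtain ⟨I, hI⟩ := hL.nonempty
    obtain ⟨J, hJG, _⟩ := hcover I hI
    have hJG2 := hJG
    obtain ⟨a, c, hQ, heq, hmaxi⟩ := hJG2
    rw [heq] at hJG
    exact ⟨a, c, hQ, hJG⟩
  have hm₀mem := hVne.csInf_mem hVfin
  set m₀ := sInf V with hm₀def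
  have hm₀pos : 0 < m₀ := (hVbound m₀ hm₀mem).1
  have hminpos : 0 < min m₀ π := lt_min hm₀pos hpi
  have hsmall : Phi p '' Set.Ioo 0 (min m₀ π) ⊆ vset G := by
    rintro x ⟨t, ⟨ht0, htm⟩, rfl⟩
    simp only [vset, Set.mem_compl_iff]
    intro hmem
    obtain ⟨K', hK'G, hxK'⟩ := hmem
    have hK'G2 := hK'G
    obtain ⟨a', c', hQ', rfl, _⟩ := hK'G2
    have hK'G' : arcp p a' c' ∈ G := hK'G
    have htpi : t < π := lt_of_lt_of_le htm (min_le_right _ _)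
    have ht2 : t < 2*π := by linarith
    have hco := mem_arcp_coord hQ'.2.1 hQ'.2.2.1 (le_of_lt hQ'.1) (le_of_lt ht0) ht2 hxK'
    have hle : m₀ ≤ a' := csInf_le hVfin.bddBelow ⟨c', hQ', hK'G'⟩
    have htm₀ : t < m₀ := lt_of_lt_of_le htm (min_le_left _ _)
    linarith [hco.1]
  have hinf : (Phi p '' Set.Ioo 0 (min m₀ π)).Infinite := by
    apply Set.Infinite.image
    · intro a1 h1 a2 h2 he
      have hb1 : a1 < 2*π := by
        have := h1.2
        have := min_le_right m₀ π
        linarith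
      have hb2 : a2 < 2*π := by
        have := h2.2
        have := min_le_right m₀ π
        linarith
      exact Phi_inj (le_of_lt h1.1) hb1 (le_of_lt h2.1) hb2 he
    · exact Set.Ioo_infinite hminpos
  exact hinf (hfin.subset hsmall)

end Stmt11

end
/-- In a very full lamination system, every point of `S¹` is either an endpoint of a leaf
or has a rainbow, and not both. -/
theorem stmt11 (L : Set (Set Circle)) (hL : LamSys L) (hvf : VeryFull L) (p : Circle) :
    Xor' (p ∈ ELset L) (∃ f, Rainbow L p f) := by
  by_cases hE : p ∈ ELset L
  · exact Or.inl ⟨hE, fun ⟨f, hf⟩ => Stmt11.not_both hL p hE f hf⟩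
  · exact Or.inr ⟨Stmt11.rainbow_exists hL hvf hE, hE⟩
end

section
/- If L is a very full lamination system on S^1, then the set E(L) of all endpoints of leaves of L is dense in S^1. -/
open Set Topology

namespace Stmt12Aux

open Set Topology

noncomputable section

/-! ### Stereographic coordinates -/

def psic (t : ℝ) : ℂ := ⟨(t^2-1)/(t^2+1), -(2*t)/(t^2+1)⟩

lemma psic_re (t : ℝ) : (psic t).re = (t^2-1)/(t^2+1) := rfl
lemma psic_im (t : ℝ) : (psic t).im = -(2*t)/(t^2+1) := rfl

lemma psic_mem (t : ℝ) : psic t ∈ Submonoid.unitSphere ℂ := by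
  have h : (t^2+1 : ℝ) ≠ 0 := by positivity
  simp only [Submonoid.unitSphere, Submonoid.mem_mk, Subsemigroup.mem_mk,
    mem_sphere_zero_iff_norm, Complex.norm_def, psic,
    Complex.normSq_mk]
  rw [show (t^2-1)/(t^2+1) * ((t^2-1)/(t^2+1)) + -(2*t)/(t^2+1) * (-(2*t)/(t^2+1)) = 1 by
    field_simp; ring]
  exact Real.sqrt_one

def psi (t : ℝ) : Circle := ⟨psic t, psic_mem t⟩

lemma psi_coe (t : ℝ) : ((psi t : Circle) : ℂ) = psic t := rfl

lemma normSq_circle (z : Circle) : (z:ℂ).re^2 + (z:ℂ).im^2 = 1 := by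
  have h : Complex.normSq (z:ℂ) = 1 := by simp
  rw [Complex.normSq_apply] at h
  nlinarith [h]

lemma circle_eq_one_of_re (z : Circle) (h : (z:ℂ).re = 1) : z = 1 := by
  have h2 := normSq_circle z
  rw [h] at h2
  have him : (z:ℂ).im = 0 := by nlinarith
  apply Circle.ext
  rw [Circle.coe_one]
  exact Complex.ext (by rw [h]; rfl) (by rw [him]; rfl)

lemma psi_ne_one (t : ℝ) : psi t ≠ 1 := by
  intro h
  have h2 : (psi t : ℂ).re = 1 := by rw [h, Circle.coe_one]; rfl
  rw [psi_coe, psic_re] at h2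
  have hd : (t^2+1 : ℝ) ≠ 0 := by positivity
  rw [div_eq_one_iff_eq hd] at h2
  linarith

lemma sproj_psi (t : ℝ) : sproj (psi t) = t := by
  have hd : (t^2+1 : ℝ) ≠ 0 := by positivity
  have e1 : (psic t).re - 1 = -2/(t^2+1) := by
    rw [psic_re]; field_simp; ring
  have e2 : (-2 : ℝ)/(t^2+1) ≠ 0 := div_ne_zero (by norm_num) hd
  rw [sproj, psi_coe, e1, psic_im, div_eq_iff e2]
  ring

lemma psi_sproj (z : Circle) (hz : z ≠ 1) : psi (sproj z) = z := by
  set x := (z:ℂ).re with hxdef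
  set y := (z:ℂ).im with hydef
  have hxy : x^2 + y^2 = 1 := normSq_circle z
  have hx : x ≠ 1 := fun h => hz (circle_eq_one_of_re z h)
  have hx1 : x - 1 ≠ 0 := sub_ne_zero.mpr hx
  have hsp : sproj z = y/(x-1) := rfl
  have ht : (y/(x-1))^2 + 1 ≠ 0 := by positivity
  have key : (y/(x-1))^2 + 1 = (-2)/(x-1) := by
    field_simp; linear_combination hxy
  have key' : (y/(x-1))^2 = -2/(x-1) - 1 := by
    field_simp; linear_combination hxy
  apply Circle.ext
  rw [psi_coe]
  apply Complex.ext
  · rw [psic_re, hsp, ← hxdef, div_eq_iff ht, key']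
    field_simp; ring
  · rw [psic_im, hsp, ← hydef, div_eq_iff ht, key]
    ring

lemma sproj_injOn (z w : Circle) (hz : z ≠ 1) (hw : w ≠ 1) (h : sproj z = sproj w) : z = w := by
  rw [← psi_sproj z hz, ← psi_sproj w hw, h]

lemma sproj_inv (z : Circle) : sproj z⁻¹ = - sproj z := by
  have h : Complex.normSq (z:ℂ) = 1 := by simp
  have hc : ((z⁻¹ : Circle) : ℂ) = (z:ℂ)⁻¹ := Circle.coe_inv z
  rw [sproj, hc, Complex.inv_re, Complex.inv_im, h]
  simp [sproj, neg_div]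

lemma psi_inv (t : ℝ) : (psi t)⁻¹ = psi (-t) := by
  have h1 : psi (-t) ≠ 1 := psi_ne_one _
  have h2 : (psi t)⁻¹ ≠ 1 := by
    intro h; apply psi_ne_one t
    rw [← inv_inv (psi t), h, inv_one]
  apply sproj_injOn _ _ h2 h1
  rw [sproj_inv, sproj_psi, sproj_psi]

lemma sproj_mul (a b : ℝ) (h : a + b ≠ 0) :
    sproj (psi a * psi b) = (a*b-1)/(a+b) := by
  have hd1 : (a^2+1 : ℝ) ≠ 0 := by positivity
  have hd2 : (b^2+1 : ℝ) ≠ 0 := by positivity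
  have hcoe : ((psi a * psi b : Circle) : ℂ) = psic a * psic b := by
    rw [Circle.coe_mul, psi_coe, psi_coe]
  have hre : (psic a * psic b).re - 1 = -(2*(a+b)^2)/((a^2+1)*(b^2+1)) := by
    rw [Complex.mul_re, psic_re, psic_im, psic_re, psic_im]
    field_simp; ring
  have him : (psic a * psic b).im = -(2*(a+b)*(a*b-1))/((a^2+1)*(b^2+1)) := by
    rw [Complex.mul_im, psic_re, psic_im, psic_re, psic_im]
    field_simp; ring
  have hne : -(2*(a+b)^2)/((a^2+1)*(b^2+1)) ≠ 0 := by
    apply div_ne_zero _ (mul_ne_zero hd1 hd2)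
    simp only [neg_ne_zero]
    positivity
  rw [sproj, hcoe, hre, him, div_eq_div_iff hne h]
  field_simp

lemma sproj_inv_mul (a t : ℝ) (h : t ≠ a) :
    sproj ((psi a)⁻¹ * psi t) = -a - (a^2+1)/(t-a) := by
  have h2 : -a + t ≠ 0 := by intro hc; exact h (by linarith)
  rw [psi_inv, sproj_mul (-a) t h2]
  have h3 : t - a ≠ 0 := sub_ne_zero.mpr h
  field_simp
  ring

lemma key_ineq (a b t : ℝ) (hab : a < b) (ht : t ≠ a) :
    (-a - (a^2+1)/(t-a) < -a - (a^2+1)/(b-a)) ↔ (a < t ∧ t < b) := by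
  have hA : (0:ℝ) < a^2+1 := by positivity
  have hba : (0:ℝ) < b - a := by linarith
  rcases lt_or_gt_of_ne ht with h | h
  · have h1 : (a^2+1)/(t-a) < 0 := div_neg_of_pos_of_neg hA (by linarith)
    have h2 : (0:ℝ) < (a^2+1)/(b-a) := div_pos hA hba
    constructor
    · intro hc; exfalso; linarith
    · rintro ⟨h3, _⟩; exfalso; linarith
  · have hta : (0:ℝ) < t - a := by linarith
    have hiff := div_lt_div_iff_of_pos_left hA hba hta
    constructor
    · intro hc
      refine ⟨h, ?_⟩
      have := hiff.mp (by linarith)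
      linarith
    · rintro ⟨_, h4⟩
      have := hiff.mpr (by linarith)
      linarith

/-! ### The parametrization `gq` and coordinates -/

def gq (q : Circle) (t : ℝ) : Circle := q * psi t

def coord (q p : Circle) : ℝ := sproj (q⁻¹ * p)

lemma gq_ne (q : Circle) (t : ℝ) : gq q t ≠ q := by
  intro h
  apply psi_ne_one t
  have : q * psi t = q * 1 := by rw [mul_one]; exact h
  exact mul_left_cancel this

lemma coord_gq (q : Circle) (t : ℝ) : coord q (gq q t) = t := by
  rw [coord, gq, inv_mul_cancel_left, sproj_psi]

lemma inv_mul_ne_one {q p : Circle} (h : p ≠ q) : q⁻¹ * p ≠ 1 :=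
  fun hc => h (inv_mul_eq_one.mp hc).symm

lemma gq_coord (q p : Circle) (h : p ≠ q) : gq q (coord q p) = p := by
  rw [gq, coord, psi_sproj _ (inv_mul_ne_one h), mul_inv_cancel_left]

lemma gq_inj (q : Circle) : Function.Injective (gq q) := by
  intro s t h
  have := congrArg (coord q) h
  rwa [coord_gq, coord_gq] at this

lemma continuous_psi : Continuous psi := by
  apply Continuous.subtype_mk
  have h1 : Continuous (fun t : ℝ => (t^2-1)/(t^2+1)) :=
    Continuous.div (by continuity) (by continuity) (fun t => by positivity)
  have h2 : Continuous (fun t : ℝ => -(2*t)/(t^2+1)) :=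
    Continuous.div (by continuity) (by continuity) (fun t => by positivity)
  have heq : (fun t => psic t) = fun t : ℝ =>
      (((t^2-1)/(t^2+1) : ℝ) : ℂ) + (((-(2*t)/(t^2+1)) : ℝ) : ℂ) * Complex.I := by
    funext t
    rw [psic, Complex.mk_eq_add_mul_I]
  have : Continuous (fun t => psic t) := by
    rw [heq]
    exact ((Complex.continuous_ofReal.comp h1).add
      ((Complex.continuous_ofReal.comp h2).mul continuous_const))
  exact this

lemma continuous_gq (q : Circle) : Continuous (gq q) :=
  (continuous_mul_left q).comp continuous_psi

lemma continuousAt_coord (q p : Circle) (h : p ≠ q) : ContinuousAt (coord q) p := by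
  have hne : q⁻¹ * p ≠ 1 := inv_mul_ne_one h
  have hcont : Continuous (fun x : Circle => ((q⁻¹ * x : Circle) : ℂ)) :=
    continuous_subtype_val.comp (continuous_mul_left q⁻¹)
  have hden : ((q⁻¹ * p : Circle) : ℂ).re - 1 ≠ 0 := by
    intro hc
    exact hne (circle_eq_one_of_re _ (by linarith))
  exact ((Complex.continuous_im.comp hcont).continuousAt).div
    (((Complex.continuous_re.comp hcont).continuousAt).sub continuousAt_const) hden

/-! ### Intervals -/

lemma mem_oInt {u v : Circle} (huv : u ≠ v) (p : Circle) :
    p ∈ oInt u v ↔ p ≠ u ∧ coord u p < coord u v := by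
  constructor
  · rintro ⟨h1, h2, h3, h4⟩
    exact ⟨h1.symm, h4⟩
  · rintro ⟨h1, h2⟩
    refine ⟨h1.symm, ?_, huv.symm, h2⟩
    intro hc
    rw [hc] at h2
    exact lt_irrefl _ h2

lemma oInt_eq_image {u v : Circle} (huv : u ≠ v) :
    oInt u v = gq u '' Iio (coord u v) := by
  ext p
  rw [mem_oInt huv]
  constructor
  · rintro ⟨hpu, hlt⟩
    exact ⟨coord u p, hlt, gq_coord u p hpu⟩
  · rintro ⟨t, ht, rfl⟩
    rw [coord_gq]
    exact ⟨gq_ne u t, ht⟩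

lemma coord_symm (u v : Circle) : coord v u = - coord u v := by
  have h : v⁻¹ * u = (u⁻¹ * v)⁻¹ := by group
  rw [coord, h, sproj_inv]
  rfl

lemma uinvv_eq_psi {u v : Circle} (huv : u ≠ v) : u⁻¹ * v = psi (coord u v) := by
  rw [coord, psi_sproj _ (inv_mul_ne_one huv.symm)]

lemma gq_v_neg_c {u v : Circle} (huv : u ≠ v) : gq v (-(coord u v)) = u := by
  rw [← coord_symm u v]
  exact gq_coord v u huv

lemma coord_gqv {u v : Circle} (huv : u ≠ v) (d : ℝ) (hd : d ≠ -(coord u v)) :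
    coord u (gq v d) = ((coord u v)*d - 1)/((coord u v)+d) := by
  have hup : u⁻¹ * (gq v d) = psi (coord u v) * psi d := by
    rw [gq, ← mul_assoc, uinvv_eq_psi huv]
  rw [coord, hup, sproj_mul _ _ (fun h => hd (by linarith))]

lemma mem_oInt_gqv {u v : Circle} (huv : u ≠ v) (d : ℝ) :
    gq v d ∈ oInt u v ↔ -(coord u v) < d := by
  by_cases hd : d = -(coord u v)
  · subst hd
    rw [gq_v_neg_c huv, mem_oInt huv]
    simp
  · have hpu : gq v d ≠ u := by
      intro h
      apply hd
      rw [← gq_v_neg_c huv] at h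
      exact gq_inj v h
    have hcd : coord u v + d ≠ 0 := fun h => hd (by linarith)
    rw [mem_oInt huv, coord_gqv huv d hd]
    have hneg : -((coord u v)^2+1) < 0 := by nlinarith [sq_nonneg (coord u v)]
    have e3 : ((coord u v)*d-1)/((coord u v)+d) - coord u v
        = -((coord u v)^2+1)/((coord u v)+d) := by
      field_simp
      ring
    constructor
    · rintro ⟨_, h⟩
      have h4 : -((coord u v)^2+1)/((coord u v)+d) < 0 := by rw [← e3]; linarith
      rcases div_neg_iff.mp h4 with ⟨h5, _⟩ | ⟨_, h6⟩
      · exfalso; linarith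
      · linarith
    · intro h
      have h6 : (0:ℝ) < coord u v + d := by linarith
      have h4 : -((coord u v)^2+1)/((coord u v)+d) < 0 := div_neg_of_neg_of_pos hneg h6
      rw [← e3] at h4
      exact ⟨hpu, by linarith⟩

lemma oInt_eq_image' {u v : Circle} (huv : u ≠ v) :
    oInt u v = gq v '' Ioi (coord v u) := by
  ext p
  by_cases hpv : p = v
  · subst hpv
    rw [mem_oInt huv]
    constructor
    · rintro ⟨_, h⟩; exact absurd h (lt_irrefl _)
    · rintro ⟨t, _, ht⟩; exact absurd ht (gq_ne p t)
  · constructor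
    · intro h
      refine ⟨coord v p, ?_, gq_coord v p hpv⟩
      rw [mem_Ioi, coord_symm]
      exact (mem_oInt_gqv huv _).mp (by rwa [gq_coord v p hpv])
    · rintro ⟨t, ht, rfl⟩
      exact (mem_oInt_gqv huv t).mpr (by rwa [mem_Ioi, coord_symm] at ht)

/-! ### Topology of intervals -/

lemma not_mem_oInt_left {u v : Circle} (huv : u ≠ v) : u ∉ oInt u v := by
  rw [mem_oInt huv]
  rintro ⟨h, _⟩
  exact h rfl

lemma not_mem_oInt_right {u v : Circle} (huv : u ≠ v) : v ∉ oInt u v := by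
  rw [mem_oInt huv]
  rintro ⟨_, h⟩
  exact lt_irrefl _ h

lemma oInt_disj {u v : Circle} (huv : u ≠ v) (p : Circle) :
    p ∈ oInt u v → p ∈ oInt v u → False := by
  rw [oInt_eq_image' huv, oInt_eq_image huv.symm]
  rintro ⟨s, hs, rfl⟩ ⟨t, ht, h⟩
  have hts := gq_inj v h
  subst hts
  rw [mem_Ioi] at hs
  rw [mem_Iio] at ht
  exact absurd hs (not_lt.mpr ht.le)

lemma oInt_cover {u v : Circle} (huv : u ≠ v) (p : Circle) (h1 : p ≠ u) (h2 : p ≠ v) :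
    p ∈ oInt u v ∨ p ∈ oInt v u := by
  rcases lt_trichotomy (coord v p) (coord v u) with h | h | h
  · right
    rw [oInt_eq_image huv.symm]
    exact ⟨coord v p, h, gq_coord v p h2⟩
  · exfalso
    apply h1
    rw [← gq_coord v p h2, h]
    exact gq_coord v u huv
  · left
    rw [oInt_eq_image' huv]
    exact ⟨coord v p, h, gq_coord v p h2⟩

lemma isOpen_oInt {u v : Circle} (huv : u ≠ v) : IsOpen (oInt u v) := by
  rw [isOpen_iff_mem_nhds]
  intro p hp
  rw [mem_oInt huv] at hp
  obtain ⟨hpu, hlt⟩ := hp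
  have h1 : {u}ᶜ ∈ 𝓝 p := isOpen_compl_singleton.mem_nhds (by simpa using hpu)
  have h2 : (coord u) ⁻¹' (Iio (coord u v)) ∈ 𝓝 p :=
    (continuousAt_coord u p hpu).preimage_mem_nhds (Iio_mem_nhds hlt)
  filter_upwards [h1, h2] with x hx1 hx2
  exact (mem_oInt huv x).mpr ⟨by simpa using hx1, hx2⟩

lemma isPreconnected_oInt {u v : Circle} (huv : u ≠ v) : IsPreconnected (oInt u v) := by
  rw [oInt_eq_image huv]
  exact isPreconnected_Iio.image _ ((continuous_gq u).continuousOn)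

lemma oInt_nonempty {u v : Circle} (huv : u ≠ v) : (oInt u v).Nonempty := by
  rw [oInt_eq_image huv]
  exact ⟨gq u (coord u v - 1), ⟨coord u v - 1, by simp, rfl⟩⟩

lemma oInt_infinite {u v : Circle} (huv : u ≠ v) : (oInt u v).Infinite := by
  rw [oInt_eq_image huv]
  exact Set.Infinite.image (Function.Injective.injOn (gq_inj u)) (Set.Iio_infinite _)

lemma closure_oInt {u v : Circle} (huv : u ≠ v) :
    closure (oInt u v) = oInt u v ∪ {u, v} := by
  apply Subset.antisymm
  · have hclosed : IsClosed (oInt v u)ᶜ := (isOpen_oInt huv.symm).isClosed_compl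
    have hsub : oInt u v ⊆ (oInt v u)ᶜ := fun p hp hp' => oInt_disj huv p hp hp'
    refine (closure_minimal hsub hclosed).trans ?_
    intro p hp
    by_cases h1 : p = u
    · exact Or.inr (by simp [h1])
    by_cases h2 : p = v
    · exact Or.inr (by simp [h2])
    rcases oInt_cover huv p h1 h2 with h | h
    · exact Or.inl h
    · exact absurd h hp
  · apply union_subset subset_closure
    intro p hp
    simp only [mem_insert_iff, mem_singleton_iff] at hp
    rcases hp with rfl | rfl
    · rw [oInt_eq_image' huv]
      refine image_closure_subset_closure_image (continuous_gq v) ?_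
      exact ⟨coord v p, by rw [closure_Ioi]; exact self_mem_Ici, gq_coord v p huv⟩
    · rw [oInt_eq_image huv]
      refine image_closure_subset_closure_image (continuous_gq u) ?_
      exact ⟨coord u p, by rw [closure_Iio]; exact self_mem_Iic, gq_coord u p huv.symm⟩

lemma dual_oInt {u v : Circle} (huv : u ≠ v) : dual (oInt u v) = oInt v u := by
  rw [dual, interior_compl, closure_oInt huv]
  ext p
  simp only [mem_compl_iff, mem_union, mem_insert_iff, mem_singleton_iff, not_or]
  constructor
  · rintro ⟨h1, h2, h3⟩
    rcases oInt_cover huv p h2 h3 with h | h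
    · exact absurd h h1
    · exact h
  · intro hp
    refine ⟨fun hc => oInt_disj huv p hc hp, fun hc => ?_, fun hc => ?_⟩
    · subst hc
      exact not_mem_oInt_right huv.symm hp
    · subst hc
      exact not_mem_oInt_left huv.symm hp

lemma frontier_oInt {u v : Circle} (huv : u ≠ v) : frontier (oInt u v) = {u, v} := by
  rw [frontier, closure_oInt huv, (isOpen_oInt huv).interior_eq]
  ext p
  simp only [mem_diff, mem_union, mem_insert_iff, mem_singleton_iff]
  constructor
  · rintro ⟨h1 | h1, h2⟩
    · exact absurd h1 h2
    · exact h1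
  · rintro (rfl | rfl)
    · exact ⟨Or.inr (Or.inl rfl), not_mem_oInt_left huv⟩
    · exact ⟨Or.inr (Or.inr rfl), not_mem_oInt_right huv⟩

lemma gq_image_Ioo (q : Circle) {a b : ℝ} (hab : a < b) :
    oInt (gq q a) (gq q b) = gq q '' Ioo a b := by
  have huv : gq q a ≠ gq q b := fun h => (ne_of_lt hab) (gq_inj q h)
  have hcoord : ∀ t : ℝ, t ≠ a → coord (gq q a) (gq q t) = -a - (a^2+1)/(t-a) := by
    intro t ht
    have h1 : (gq q a)⁻¹ * (gq q t) = (psi a)⁻¹ * psi t := by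
      rw [gq, gq]; group
    rw [coord, h1, sproj_inv_mul a t ht]
  ext p
  by_cases hpq : p = q
  · subst hpq
    constructor
    · intro hp
      exfalso
      rw [mem_oInt huv] at hp
      obtain ⟨_, hlt⟩ := hp
      have e1 : coord (gq p a) p = -a := by
        have h2 : (gq p a)⁻¹ * p = psi (-a) := by
          rw [gq, ← psi_inv]; group
        rw [coord, h2, sproj_psi]
      have e2 := hcoord b (ne_of_gt hab)
      rw [e1, e2] at hlt
      have h3 : (0:ℝ) < (a^2+1)/(b-a) := div_pos (by positivity) (by linarith)
      linarith
    · rintro ⟨t, _, ht⟩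
      exact absurd ht (gq_ne p t)
  · have hp : p = gq q (coord q p) := (gq_coord q p hpq).symm
    set t := coord q p with htdef
    by_cases hta : t = a
    · have hpa : p = gq q a := by rw [hp, hta]
      constructor
      · intro hmem
        rw [mem_oInt huv] at hmem
        exact absurd hpa hmem.1
      · rintro ⟨s, hs, hsp⟩
        have hst : s = t := by
          have := congrArg (coord q) hsp
          rwa [coord_gq, ← htdef] at this
        rw [hst, hta] at hs
        exact absurd hs.1 (lt_irrefl a)
    · rw [mem_oInt huv]
      have e2 := hcoord b (ne_of_gt hab)
      have e3 : coord (gq q a) p = -a - (a^2+1)/(t-a) := by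
        nth_rewrite 1 [hp]
        exact hcoord t hta
      rw [e3, e2, key_ineq a b t hab hta]
      constructor
      · rintro ⟨_, h2⟩
        exact ⟨t, h2, hp.symm⟩
      · rintro ⟨s, hs, hsp⟩
        have hst : s = t := by
          have := congrArg (coord q) hsp
          rwa [coord_gq, ← htdef] at this
        refine ⟨?_, by rwa [hst] at hs⟩
        rw [hp]
        exact fun h => hta (gq_inj q h)

/-! ### Classification of open connected sets avoiding a point -/

lemma isND_of_open_preconn {W : Set Circle} (hW : IsOpen W) (hc : IsPreconnected W)
    (hne : W.Nonempty) (q : Circle) (hq : q ∉ closure W) : IsND W := by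
  have hWq : q ∉ W := fun h => hq (subset_closure h)
  have hWne1 : ∀ p ∈ W, p ≠ q := fun p hp h => hWq (h ▸ hp)
  set W' := coord q '' W with hW'def
  have hW'eq : gq q ⁻¹' W = W' := by
    ext t
    constructor
    · intro ht
      exact ⟨gq q t, ht, coord_gq q t⟩
    · rintro ⟨p, hp, rfl⟩
      rw [mem_preimage, gq_coord q p (hWne1 p hp)]
      exact hp
  have hW'open : IsOpen W' := by rw [← hW'eq]; exact hW.preimage (continuous_gq q)
  have hW'pre : IsPreconnected W' :=
    hc.image _ (fun p hp => (continuousAt_coord q p (hWne1 p hp)).continuousWithinAt)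
  have hW'ne : W'.Nonempty := hne.image _
  have hKcomp : IsCompact (closure W) := isClosed_closure.isCompact
  have hKco : ContinuousOn (coord q) (closure W) :=
    fun p hp => (continuousAt_coord q p (fun h => hq (h ▸ hp))).continuousWithinAt
  have himc : IsCompact (coord q '' closure W) := hKcomp.image_of_continuousOn hKco
  have hsub : W' ⊆ coord q '' closure W := image_mono subset_closure
  have hbdda : BddAbove W' := himc.bddAbove.mono hsub
  have hbddb : BddBelow W' := himc.bddBelow.mono hsub
  set a := sInf W' with hadef
  set b := sSup W' with hbdef
  have hnotmema : a ∉ W' := by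
    intro hmem
    obtain ⟨ε, hε, hball⟩ := Metric.isOpen_iff.mp hW'open a hmem
    rw [Real.ball_eq_Ioo] at hball
    have h1 : a - ε/2 ∈ W' := hball ⟨by linarith, by linarith⟩
    have := csInf_le hbddb h1
    linarith
  have hnotmemb : b ∉ W' := by
    intro hmem
    obtain ⟨ε, hε, hball⟩ := Metric.isOpen_iff.mp hW'open b hmem
    rw [Real.ball_eq_Ioo] at hball
    have h1 : b + ε/2 ∈ W' := hball ⟨by linarith, by linarith⟩
    have := le_csSup hbdda h1
    linarith
  have hIoo : W' = Ioo a b := by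
    apply Subset.antisymm
    · intro s hs
      have h1 : a ≤ s := csInf_le hbddb hs
      have h2 : s ≤ b := le_csSup hbdda hs
      constructor
      · rcases h1.lt_or_eq with h | h
        · exact h
        · exact absurd (h ▸ hs) hnotmema
      · rcases h2.lt_or_eq with h | h
        · exact h
        · exact absurd (h ▸ hs) hnotmemb
    · intro s hs
      obtain ⟨x1, hx1, hx1lt⟩ := exists_lt_of_csInf_lt hW'ne hs.1
      obtain ⟨x2, hx2, hx2lt⟩ := exists_lt_of_lt_csSup hW'ne hs.2
      exact hW'pre.ordConnected.out hx1 hx2 ⟨hx1lt.le, hx2lt.le⟩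
  have hab : a < b := by
    obtain ⟨s, hs⟩ := hW'ne
    rw [hIoo] at hs
    exact lt_trans hs.1 hs.2
  refine ⟨gq q a, gq q b, fun h => (ne_of_lt hab) (gq_inj q h), ?_⟩
  rw [gq_image_Ioo q hab, ← hIoo]
  ext p
  constructor
  · intro hp
    exact ⟨coord q p, ⟨p, hp, rfl⟩, gq_coord q p (hWne1 p hp)⟩
  · rintro ⟨s, ⟨p', hp', rfl⟩, rfl⟩
    rw [gq_coord q p' (hWne1 p' hp')]
    exact hp'

/-! ### Unions of chains are in the lamination system -/

lemma sUnion_chain_mem (L : Set (Set Circle)) (hL : LamSys L) (c : Set (Set Circle))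
    (hcL : c ⊆ L) (hchain : IsChain (· ⊆ ·) c) (hcne : c.Nonempty)
    (hnd : IsND (⋃₀ c)) : ⋃₀ c ∈ L := by
  classical
  have hopen : ∀ s ∈ c, IsOpen s := by
    intro s hs
    obtain ⟨u, v, huv, rfl⟩ := hL.nd s (hcL hs)
    exact isOpen_oInt huv
  obtain ⟨T, hTcount, hTc, hTeq⟩ := TopologicalSpace.isOpen_sUnion_countable c hopen
  have hTne : T.Nonempty := by
    by_contra hTe
    rw [not_nonempty_iff_eq_empty] at hTe
    rw [hTe, sUnion_empty] at hTeq
    obtain ⟨u, v, huv, hW⟩ := hnd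
    obtain ⟨p, hp⟩ := oInt_nonempty huv
    rw [← hW, ← hTeq] at hp
    exact hp
  obtain ⟨aa, ha⟩ := Set.Countable.exists_eq_range hTcount hTne
  obtain ⟨f, hf⟩ : ∃ f : ℕ → Set Circle, f = fun n =>
    Nat.rec (aa 0) (fun n fn => if aa (n+1) ⊆ fn then fn else aa (n+1)) n := ⟨_, rfl⟩
  have hf0 : f 0 = aa 0 := by subst hf; rfl
  have hfs : ∀ n, f (n+1) = if aa (n+1) ⊆ f n then f n else aa (n+1) := fun n => by rw [hf]
  have hfT : ∀ n, f n ∈ T := by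
    intro n
    induction n with
    | zero => rw [hf0, ha]; exact ⟨0, rfl⟩
    | succ n ih =>
      rw [hfs]
      split_ifs
      · exact ih
      · rw [ha]; exact ⟨n+1, rfl⟩
  have hmono : ∀ n, f n ⊆ f (n+1) := by
    intro n
    rw [hfs]
    split_ifs with h
    · exact Subset.rfl
    · have h1 : f n ∈ c := hTc (hfT n)
      have h2 : aa (n+1) ∈ c := hTc (by rw [ha]; exact ⟨n+1, rfl⟩)
      rcases eq_or_ne (f n) (aa (n+1)) with he | hne2
      · rw [he]
      · rcases hchain h1 h2 hne2 with h3 | h3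
        · exact h3
        · exact absurd h3 h
  have hsuba : ∀ n, aa n ⊆ f n := by
    intro n
    cases n with
    | zero => rw [hf0]
    | succ n =>
      rw [hfs]
      split_ifs with h
      · exact h
      · exact Subset.rfl
  have hunder : (⋃ n, f n) = ⋃₀ c := by
    apply Subset.antisymm
    · exact iUnion_subset fun n => subset_sUnion_of_mem (hTc (hfT n))
    · rw [← hTeq, ha]
      rintro p hp
      rw [mem_sUnion] at hp
      obtain ⟨s, hsmem, hps⟩ := hp
      obtain ⟨n, rfl⟩ := hsmem
      exact mem_iUnion.mpr ⟨n, hsuba n hps⟩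
  have hres := hL.chainUnion f (fun n => hcL (hTc (hfT n))) hmono (by rw [hunder]; exact hnd)
  rwa [hunder] at hres

end

end Stmt12Aux

open Stmt12Aux in
/-- The endpoint set of a very full lamination system is dense in `S¹`. -/
theorem stmt12 (L : Set (Set Circle)) (hL : LamSys L) (hvf : VeryFull L) :
    Dense (ELset L) := by
  classical
  by_contra hnd
  rw [dense_iff_inter_open] at hnd
  push_neg at hnd
  obtain ⟨U₀, hU₀open, hU₀ne, hU₀E⟩ := hnd
  obtain ⟨x, hx⟩ := hU₀ne
  -- construct a small open arc `U ∋ x` inside `U₀`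
  set q : Circle := x * psi 0 with hqdef
  have hxq : x ≠ q := by
    intro h
    apply psi_ne_one 0
    rw [hqdef] at h
    have h2 : x * 1 = x * psi 0 := by rw [mul_one]; exact h
    exact (mul_left_cancel h2).symm
  set d := coord q x with hd
  have hxg : gq q d = x := gq_coord q x hxq
  have hpre : IsOpen (gq q ⁻¹' U₀) := hU₀open.preimage (continuous_gq q)
  have hdmem : d ∈ gq q ⁻¹' U₀ := by rw [mem_preimage, hxg]; exact hx
  obtain ⟨ε, hεpos, hball⟩ := Metric.isOpen_iff.mp hpre d hdmem
  rw [Real.ball_eq_Ioo] at hball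
  have hab : d - ε/2 < d + ε/2 := by linarith
  set u := gq q (d - ε/2) with hu
  set v := gq q (d + ε/2) with hv
  set U := oInt u v with hUdef
  have hUeq : U = gq q '' Ioo (d - ε/2) (d + ε/2) := gq_image_Ioo q hab
  have huv : u ≠ v := fun h => (ne_of_lt hab) (gq_inj q h)
  have hUsub : U ⊆ U₀ := by
    rw [hUeq]
    rintro p ⟨s, hs, rfl⟩
    exact hball ⟨by linarith [hs.1], by linarith [hs.2]⟩
  have hxU : x ∈ U := by
    rw [hUeq]
    exact ⟨d, ⟨by linarith, by linarith⟩, hxg⟩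
  have hUne : U.Nonempty := ⟨x, hxU⟩
  have hUopen : IsOpen U := isOpen_oInt huv
  have hUpre : IsPreconnected U := isPreconnected_oInt huv
  have hUinf : U.Infinite := oInt_infinite huv
  have hUE : U ∩ ELset L = ∅ := by
    rw [← subset_empty_iff, ← hU₀E]
    exact inter_subset_inter_left _ hUsub
  have hfr : ∀ I ∈ L, U ∩ frontier I = ∅ := by
    intro I hI
    rw [eq_empty_iff_forall_notMem]
    rintro p ⟨hpU, hpf⟩
    have hmem : p ∈ ELset L := mem_biUnion hI hpf
    rw [eq_empty_iff_forall_notMem] at hUE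
    exact hUE p ⟨hpU, hmem⟩
  -- which side of each leaf `U` is on
  have hside : ∀ I ∈ L, (U ⊆ I ∧ U ∩ dual I = ∅) ∨ (U ∩ I = ∅ ∧ U ⊆ dual I) := by
    intro I hI
    obtain ⟨a, b, hab', rfl⟩ := hL.nd I hI
    have hdual : dual (oInt a b) = oInt b a := dual_oInt hab'
    have hdisj : Disjoint (oInt a b) (oInt b a) :=
      disjoint_left.mpr (fun p hp hp' => oInt_disj hab' p hp hp')
    have hcov : U ⊆ oInt a b ∪ oInt b a := by
      intro p hpU
      have hpfr := hfr _ hI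
      rw [eq_empty_iff_forall_notMem] at hpfr
      have hpa : p ≠ a := by
        intro h
        exact hpfr p ⟨hpU, by rw [frontier_oInt hab', h]; exact Or.inl rfl⟩
      have hpb : p ≠ b := by
        intro h
        exact hpfr p ⟨hpU, by rw [frontier_oInt hab', h]; exact Or.inr rfl⟩
      exact oInt_cover hab' p hpa hpb
    rcases hUpre.subset_or_subset (isOpen_oInt hab') (isOpen_oInt hab'.symm) hdisj hcov with h | h
    · left
      refine ⟨h, ?_⟩
      rw [hdual, eq_empty_iff_forall_notMem]
      rintro p ⟨hp1, hp2⟩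
      exact oInt_disj hab' p (h hp1) hp2
    · right
      refine ⟨?_, by rw [hdual]; exact h⟩
      rw [eq_empty_iff_forall_notMem]
      rintro p ⟨hp1, hp2⟩
      exact oInt_disj hab' p hp2 (h hp1)
  -- the poset of leaves disjoint from U
  set P := {K | K ∈ L ∧ K ∩ U = ∅} with hPdef
  have hzorn : ∀ c ⊆ P, IsChain (· ⊆ ·) c → c.Nonempty → ∃ ub ∈ P, ∀ s ∈ c, s ⊆ ub := by
    intro c hcP hchain hcne
    have hcL : c ⊆ L := fun s hs => (hcP hs).1
    have hWU : (⋃₀ c) ∩ U = ∅ := by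
      rw [eq_empty_iff_forall_notMem]
      rintro p ⟨hp1, hp2⟩
      obtain ⟨s, hsc, hps⟩ := hp1
      have h2 := (hcP hsc).2
      rw [eq_empty_iff_forall_notMem] at h2
      exact h2 p ⟨hps, hp2⟩
    have hWnd : IsND (⋃₀ c) := by
      refine isND_of_open_preconn ?_ ?_ ?_ x ?_
      · exact isOpen_sUnion (fun s hs => by
          obtain ⟨a, b, h, rfl⟩ := hL.nd s (hcL hs)
          exact isOpen_oInt h)
      · exact IsPreconnected.sUnion_directed hchain.directedOn (fun s hs => by
          obtain ⟨a, b, h, rfl⟩ := hL.nd s (hcL hs)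
          exact isPreconnected_oInt h)
      · obtain ⟨K, hK⟩ := hcne
        obtain ⟨a, b, h, hKe⟩ := hL.nd K (hcL hK)
        obtain ⟨p, hp⟩ := oInt_nonempty h
        exact ⟨p, K, hK, by rw [hKe]; exact hp⟩
      · intro hmem
        rw [mem_closure_iff] at hmem
        obtain ⟨p, hp1, hp2⟩ := hmem U hUopen hxU
        rw [eq_empty_iff_forall_notMem] at hWU
        exact hWU p ⟨hp2, hp1⟩
    exact ⟨⋃₀ c, ⟨sUnion_chain_mem L hL c hcL hchain hcne hWnd, hWU⟩,
      fun s hs => subset_sUnion_of_mem hs⟩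
  set G := {K | Maximal (· ∈ P) K} with hGdef
  have hGP : ∀ K ∈ G, K ∈ P := fun K hK => hK.1
  have hdual_disj : ∀ I : Set Circle, I ∩ dual I = ∅ := by
    intro I
    rw [dual, interior_compl, eq_empty_iff_forall_notMem]
    rintro p ⟨h1, h2⟩
    exact h2 (subset_closure h1)
  have hcover : ∀ I ∈ L, ∃ K ∈ G, LiesOn I K := by
    intro I hI
    rcases hside I hI with ⟨h1, h2⟩ | ⟨h1, h2⟩
    · have hdP : dual I ∈ P := ⟨hL.dualMem I hI, by rw [inter_comm]; exact h2⟩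
      obtain ⟨M, hM1, hM2⟩ := zorn_subset_nonempty P hzorn (dual I) hdP
      exact ⟨M, hM2, Or.inr hM1⟩
    · have hdP : I ∈ P := ⟨hI, by rw [inter_comm]; exact h1⟩
      obtain ⟨M, hM1, hM2⟩ := zorn_subset_nonempty P hzorn I hdP
      exact ⟨M, hM2, Or.inl hM1⟩
  have hgap : IsGap L G := by
    refine ⟨fun K hK => (hGP K hK).1, ?_, hcover⟩
    intro K1 hK1 K2 hK2 hne12
    by_contra hint
    have hne' : (K1 ∩ K2).Nonempty := nonempty_iff_ne_empty.mpr hint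
    have hK1L := (hGP K1 hK1).1
    have hK2L := (hGP K2 hK2).1
    have hK1U := (hGP K1 hK1).2
    have hK2U := (hGP K2 hK2).2
    obtain ⟨a1, b1, hab1, hK1e⟩ := hL.nd K1 hK1L
    obtain ⟨a2, b2, hab2, hK2e⟩ := hL.nd K2 hK2L
    rcases hL.unlinked K1 hK1L K2 hK2L with (h | h) | (h | h)
    · -- K1 ⊆ K2
      exact hne12 (le_antisymm h (hK1.2 (hGP K2 hK2) h))
    · -- dual K1 ⊆ K2
      have hcl : K2ᶜ ⊆ closure K1 := by
        rw [closure_eq_compl_interior_compl]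
        exact compl_subset_compl.mpr h
      have hUK2 : U ⊆ K2ᶜ := by
        intro p hp hpc
        rw [eq_empty_iff_forall_notMem] at hK2U
        exact hK2U p ⟨hpc, hp⟩
      have hUK1 : U ⊆ K1 := by
        intro p hp
        have hpcl : p ∈ closure K1 := hcl (hUK2 hp)
        rw [hK1e, closure_oInt hab1] at hpcl
        rcases hpcl with h' | h'
        · rw [hK1e]; exact h'
        · exfalso
          have hpfr : p ∈ frontier K1 := by rw [hK1e, frontier_oInt hab1]; exact h'
          have h3 := hfr K1 hK1L
          rw [eq_empty_iff_forall_notMem] at h3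
          exact h3 p ⟨hp, hpfr⟩
      obtain ⟨p, hp⟩ := hUne
      rw [eq_empty_iff_forall_notMem] at hK1U
      exact hK1U p ⟨hUK1 hp, hp⟩
    · -- K1 ⊆ dual K2
      obtain ⟨p, hp1, hp2⟩ := hne'
      have h3 := hdual_disj K2
      rw [eq_empty_iff_forall_notMem] at h3
      exact h3 p ⟨hp2, h hp1⟩
    · -- dual K1 ⊆ dual K2
      have hcl : closure K2 ⊆ closure K1 := by
        rw [closure_eq_compl_interior_compl, closure_eq_compl_interior_compl]
        exact compl_subset_compl.mpr h
      have hK2K1 : K2 ⊆ K1 := by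
        intro p hp
        have hpcl : p ∈ closure K1 := hcl (subset_closure hp)
        rw [hK1e, closure_oInt hab1] at hpcl
        rcases hpcl with h' | h'
        · rw [hK1e]; exact h'
        · exfalso
          have hpdual : p ∈ closure (dual K1) := by
            rw [hK1e, dual_oInt hab1, closure_oInt hab1.symm]
            right
            simp only [mem_insert_iff, mem_singleton_iff] at h' ⊢
            tauto
          have hK2open : IsOpen K2 := by rw [hK2e]; exact isOpen_oInt hab2
          rw [mem_closure_iff] at hpdual
          obtain ⟨r, hr2, hrd⟩ := hpdual K2 hK2open hp
          have hrcl : r ∈ closure K1 := hcl (subset_closure hr2)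
          rw [dual, interior_compl] at hrd
          exact hrd hrcl
      exact hne12 (le_antisymm (hK2.2 (hGP K1 hK1) hK2K1) hK2K1)
  have hfin := hvf G hgap
  have hUvset : U ⊆ vset G := by
    intro p hp
    rw [vset, mem_compl_iff]
    intro hmem
    obtain ⟨K, hKG, hpK⟩ := hmem
    have h2 := (hGP K hKG).2
    rw [eq_empty_iff_forall_notMem] at h2
    exact h2 p ⟨hpK, hp⟩
  exact hUinf (hfin.subset hUvset)
end

section
/- If two dense lamination systems L_1 and L_2 on S^1 have disjoint endpoint sets (E(L_1) ∩ E(L_2) = ∅), then each of L_1 and L_2 is totally disconnected: every distinct pair {I,J} ⊆ L_i (disjoint intervals not forming a leaf) is separated by a non-leaf gap of L_i. -/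
open Set Topology

/-- A distinct pair of a lamination system: disjoint intervals not forming a leaf. -/
def DistinctPair (L : Set (Set Circle)) (I J : Set Circle) : Prop :=
  I ∈ L ∧ J ∈ L ∧ I ∩ J = ∅ ∧ J ≠ dual I

/-- A distinct pair is separated by a non-leaf gap. -/
def SeparatedPair (L : Set (Set Circle)) (I J : Set Circle) : Prop :=
  ∃ G, IsGap L G ∧ ¬ IsLeafGap G ∧ ∃ K ∈ G, ∃ K' ∈ G, I ⊆ K ∧ J ⊆ K'

/-- A totally disconnected lamination system: every distinct pair is separated. -/
def TotDisc (L : Set (Set Circle)) : Prop :=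
  ∀ I J, DistinctPair L I J → SeparatedPair L I J

noncomputable section

namespace S13
open Complex

/-! ### Real fraction lemmas -/

def fr (A X : ℝ) : ℝ := (A*X+1)/(A-X)

def cyc (A X Y : ℝ) : Prop := (A<X ∧ X<Y) ∨ (X<Y ∧ Y<A) ∨ (Y<A ∧ A<X)

lemma fr_sub {A X Y : ℝ} (hAX : A ≠ X) (hAY : A ≠ Y) :
    fr A Y - fr A X = (A^2+1)*(Y-X)/((A-Y)*(A-X)) := by
  have h1 : A - X ≠ 0 := sub_ne_zero.mpr hAX
  have h2 : A - Y ≠ 0 := sub_ne_zero.mpr hAY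
  unfold fr
  field_simp [fr]
  ring

lemma fr_lt_fr {A X Y : ℝ} (hAX : A ≠ X) (hAY : A ≠ Y) (hXY : X ≠ Y) :
    fr A X < fr A Y ↔ cyc A X Y := by
  have key : fr A X < fr A Y ↔ 0 < (A^2+1)*(Y-X)/((A-Y)*(A-X)) := by
    rw [← sub_pos, fr_sub hAX hAY]
  rw [key, div_pos_iff]
  have hA2 : (0:ℝ) < A^2 + 1 := by positivity
  constructor
  · rintro (⟨h1, h2⟩ | ⟨h1, h2⟩)
    · have hXY' : X < Y := by nlinarith
      rcases lt_trichotomy A X with h | h | h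
      · rcases lt_trichotomy A Y with h' | h' | h'
        · exact Or.inl ⟨h, hXY'⟩
        · exact absurd h'.symm hAY.symm
        · nlinarith
      · exact absurd h hAX
      · rcases lt_trichotomy A Y with h' | h' | h'
        · nlinarith
        · exact absurd h'.symm hAY.symm
        · exact Or.inr (Or.inl ⟨hXY', h'⟩)
    · have hXY' : Y < X := by nlinarith
      rcases lt_trichotomy A X with h | h | h
      · rcases lt_trichotomy A Y with h' | h' | h'
        · nlinarith
        · exact absurd h'.symm hAY.symm
        · exact Or.inr (Or.inr ⟨h', h⟩)
      · exact absurd h hAX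
      · rcases lt_trichotomy A Y with h' | h' | h'
        · nlinarith
        · exact absurd h'.symm hAY.symm
        · nlinarith
  · rintro (⟨h1, h2⟩ | ⟨h1, h2⟩ | ⟨h1, h2⟩)
    · left; constructor <;> nlinarith
    · left; constructor <;> nlinarith
    · right; constructor <;> nlinarith

lemma fr_lt_neg {A X : ℝ} (hAX : A ≠ X) : fr A X < -A ↔ A < X := by
  have h1 : A - X ≠ 0 := sub_ne_zero.mpr hAX
  have h1' : X - A ≠ 0 := sub_ne_zero.mpr (Ne.symm hAX)
  have key : -A - fr A X = (A^2+1)/(X-A) := by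
    rw [eq_div_iff h1', fr]
    field_simp
    ring
  rw [← sub_pos, key, div_pos_iff]
  have hA2 : (0:ℝ) < A^2 + 1 := by positivity
  constructor
  · rintro (⟨_, h⟩ | ⟨h, _⟩)
    · linarith
    · nlinarith
  · intro h; left; exact ⟨hA2, by linarith⟩

lemma neg_lt_fr {A X : ℝ} (hAX : A ≠ X) : -A < fr A X ↔ X < A := by
  have h1 : fr A X ≠ -A := by
    intro h
    have h2 : A - X ≠ 0 := sub_ne_zero.mpr hAX
    have : A*X+1 = -A*(A-X) := by
      unfold fr at h
      field_simp [fr] at h; linarith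
    nlinarith [sq_nonneg A]
  rcases lt_trichotomy (fr A X) (-A) with h | h | h
  · simp only [(fr_lt_neg hAX).mp h |> lt_asymm, iff_false, not_lt]
    exact le_of_lt h
  · exact absurd h h1
  · simp only [h, true_iff]
    rcases lt_trichotomy X A with h' | h' | h'
    · exact h'
    · exact absurd h'.symm hAX
    · exact absurd ((fr_lt_neg hAX).mpr h') (lt_asymm h)

/-! ### sproj basics -/

lemma circle_sq (z : Circle) : (z:ℂ).re^2 + (z:ℂ).im^2 = 1 := by
  have h : ‖(z:ℂ)‖ = 1 := Circle.norm_coe z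
  have : Complex.normSq (z:ℂ) = 1 := by
    rw [← Complex.sq_norm]; simp [h]
  simpa [Complex.normSq_apply, sq] using this

lemma re_ne_one {z : Circle} (h : z ≠ 1) : (z:ℂ).re ≠ 1 := by
  intro hre
  apply h
  have hsq := circle_sq z
  have him : (z:ℂ).im = 0 := by nlinarith
  apply Circle.ext
  simp only [Circle.coe_one]
  exact Complex.ext (by simpa using hre) (by simpa using him)

lemma re_lt_one {z : Circle} (h : z ≠ 1) : (z:ℂ).re < 1 := by
  have := circle_sq z
  rcases lt_or_eq_of_le (show (z:ℂ).re ≤ 1 by nlinarith) with h' | h'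
  · exact h'
  · exact absurd h' (re_ne_one h)

lemma sproj_det {z : Circle} (h : z ≠ 1) :
    (z:ℂ).re = (sproj z^2 - 1)/(sproj z^2+1) ∧ (z:ℂ).im = -(2*sproj z)/(sproj z^2+1) := by
  set s := sproj z with hs
  have hre : (z:ℂ).re - 1 ≠ 0 := sub_ne_zero.mpr (re_ne_one h)
  have him : (z:ℂ).im = s * ((z:ℂ).re - 1) := by
    rw [hs]; unfold sproj; field_simp
  have hsq := circle_sq z
  have hden : s^2 + 1 ≠ 0 := by positivity
  have hre' : (z:ℂ).re = (s^2 - 1)/(s^2+1) := by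
    have key : ((z:ℂ).re - 1) * ((z:ℂ).re + 1 + s^2*((z:ℂ).re - 1)) = 0 := by
      have h3 : (z:ℂ).im^2 = s^2 * ((z:ℂ).re - 1)^2 := by rw [him]; ring
      nlinarith [hsq, h3]
    have h2 : (z:ℂ).re + 1 + s^2*((z:ℂ).re - 1) = 0 := by
      rcases mul_eq_zero.mp key with h' | h'
      · exact absurd h' hre
      · exact h'
    field_simp
    linarith
  refine ⟨hre', ?_⟩
  rw [him, hre']
  field_simp
  ring

lemma sproj_inj {z w : Circle} (hz : z ≠ 1) (hw : w ≠ 1) (h : sproj z = sproj w) : z = w := by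
  obtain ⟨hr1, hi1⟩ := sproj_det hz
  obtain ⟨hr2, hi2⟩ := sproj_det hw
  apply Circle.ext
  apply Complex.ext
  · rw [hr1, hr2, h]
  · rw [hi1, hi2, h]

def stInv (s : ℝ) : Circle :=
  ⟨⟨(s^2-1)/(s^2+1), -(2*s)/(s^2+1)⟩, by
    have hden : (0:ℝ) < s^2 + 1 := by positivity
    have hns : Complex.normSq (⟨(s^2-1)/(s^2+1), -(2*s)/(s^2+1)⟩ : ℂ) = 1 := by
      rw [Complex.normSq_apply]
      show ((s^2-1)/(s^2+1)) * ((s^2-1)/(s^2+1)) + (-(2*s)/(s^2+1)) * (-(2*s)/(s^2+1)) = 1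
      field_simp
      ring
    have hsq : ‖(⟨(s^2-1)/(s^2+1), -(2*s)/(s^2+1)⟩ : ℂ)‖^2 = 1 := by
      rw [Complex.sq_norm, hns]
    have h0 := norm_nonneg (⟨(s^2-1)/(s^2+1), -(2*s)/(s^2+1)⟩ : ℂ)
    have hnorm : ‖(⟨(s^2-1)/(s^2+1), -(2*s)/(s^2+1)⟩ : ℂ)‖ = 1 := by
      nlinarith [hsq, h0]
    show _ ∈ Metric.sphere (0:ℂ) 1
    simpa [Complex.dist_eq] using hnorm⟩

lemma stInv_re (s : ℝ) : ((stInv s : Circle) : ℂ).re = (s^2-1)/(s^2+1) := rfl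
lemma stInv_im (s : ℝ) : ((stInv s : Circle) : ℂ).im = -(2*s)/(s^2+1) := rfl

lemma stInv_ne_one (s : ℝ) : stInv s ≠ 1 := by
  intro h
  have := re_ne_one (z := stInv s)
  have hre : ((stInv s : Circle) : ℂ).re = (s^2-1)/(s^2+1) := rfl
  have h1 : ((1 : Circle) : ℂ).re = 1 := by simp
  rw [h, h1] at hre
  have hden : (0:ℝ) < s^2+1 := by positivity
  have : s^2 + 1 = s^2 - 1 := by field_simp at hre; linarith
  linarith

lemma sproj_stInv (s : ℝ) : sproj (stInv s) = s := by
  unfold sproj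
  rw [stInv_re, stInv_im]
  have hden : (0:ℝ) < s^2+1 := by positivity
  have h2 : (s^2-1)/(s^2+1) - 1 = -2/(s^2+1) := by field_simp; ring
  rw [h2]
  have hne : (-2:ℝ)/(s^2+1) ≠ 0 := by
    apply div_ne_zero <;> [norm_num; positivity]
  field_simp

lemma stInv_sproj {z : Circle} (hz : z ≠ 1) : stInv (sproj z) = z :=
  sproj_inj (stInv_ne_one _) hz (sproj_stInv _)

lemma sproj_inv (z : Circle) : sproj z⁻¹ = - sproj z := by
  unfold sproj
  rw [Circle.coe_inv_eq_conj]
  simp [neg_div]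

end S13

namespace S13
open Complex
lemma sproj_master {x y : Circle} (hx : x ≠ 1) (hy : y ≠ 1) (hxy : x ≠ y) :
    sproj (x⁻¹ * y) = (sproj x * sproj y + 1) / (sproj x - sproj y) := by
  have hne1 : x⁻¹ * y ≠ 1 := fun h => hxy (inv_mul_eq_one.mp h)
  have hst : sproj x ≠ sproj y := fun h => hxy (sproj_inj hx hy h)
  have hr : ((x⁻¹*y : Circle):ℂ).re - 1 ≠ 0 := sub_ne_zero.mpr (re_ne_one hne1)
  have hcoe : ((x⁻¹*y : Circle):ℂ) = (starRingEnd ℂ) (x:ℂ) * (y:ℂ) := by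
    rw [Circle.coe_mul, Circle.coe_inv_eq_conj]
  obtain ⟨hrx, hix⟩ := sproj_det hx
  obtain ⟨hry, hiy⟩ := sproj_det hy
  set s := sproj x with hs
  set t := sproj y with ht
  show ((x⁻¹*y : Circle):ℂ).im / (((x⁻¹*y : Circle):ℂ).re - 1) = (s*t+1)/(s-t)
  rw [div_eq_div_iff hr (sub_ne_zero.mpr hst), hcoe]
  simp only [Complex.mul_re, Complex.mul_im, Complex.conj_re, Complex.conj_im]
  rw [hrx, hix, hry, hiy]
  have h1 : s^2 + 1 ≠ 0 := by positivity
  have h2 : t^2 + 1 ≠ 0 := by positivity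
  field_simp
  ring
end S13

namespace S13
open Complex

/-! ### chart lemmas -/

def cB (b z : Circle) : ℝ := sproj (b⁻¹ * z)

lemma ne_base_iff {b z : Circle} : b⁻¹ * z ≠ 1 ↔ z ≠ b := by
  rw [not_iff_not, inv_mul_eq_one, eq_comm]

lemma cB_inj {b z w : Circle} (hz : z ≠ b) (hw : w ≠ b) (h : cB b z = cB b w) : z = w := by
  have := sproj_inj (ne_base_iff.mpr hz) (ne_base_iff.mpr hw) h
  exact mul_left_cancel this

lemma cB_stInv (b : Circle) (r : ℝ) : cB b (b * stInv r) = r := by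
  unfold cB
  rw [inv_mul_cancel_left]
  exact sproj_stInv r

lemma stInv_ne_base (b : Circle) (r : ℝ) : b * stInv r ≠ b := by
  intro h
  exact stInv_ne_one r (by simpa using mul_left_cancel (a := b) (by simpa using h))

lemma quot_eq {b u p : Circle} : (b⁻¹*u)⁻¹ * (b⁻¹*p) = u⁻¹ * p := by
  group

lemma sproj_quot {b u p : Circle} (hu : u ≠ b) (hp : p ≠ b) (hup : u ≠ p) :
    sproj (u⁻¹ * p) = fr (cB b u) (cB b p) := by
  have h := sproj_master (x := b⁻¹*u) (y := b⁻¹*p) (ne_base_iff.mpr hu) (ne_base_iff.mpr hp)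
    (fun h => hup (mul_left_cancel h))
  rw [quot_eq] at h
  exact h

lemma sproj_inv_cB {b u : Circle} : sproj (u⁻¹ * b) = - cB b u := by
  have : u⁻¹ * b = (b⁻¹ * u)⁻¹ := by group
  rw [this, sproj_inv]
  rfl

lemma posOri_iff_cyc {b u p v : Circle} (hu : u ≠ b) (hp : p ≠ b) (hv : v ≠ b)
    (hup : u ≠ p) (hpv : p ≠ v) (hvu : v ≠ u) :
    posOri u p v ↔ cyc (cB b u) (cB b p) (cB b v) := by
  have e1 := sproj_quot hu hp hup
  have e2 := sproj_quot hu hv (Ne.symm hvu)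
  have d1 : cB b u ≠ cB b p := fun h => hup (cB_inj hu hp h)
  have d2 : cB b u ≠ cB b v := fun h => hvu (cB_inj hv hu h.symm)
  have d3 : cB b p ≠ cB b v := fun h => hpv (cB_inj hp hv h)
  constructor
  · rintro ⟨-, -, -, hlt⟩
    rw [e1, e2] at hlt
    exact (fr_lt_fr d1 d2 d3).mp hlt
  · intro h
    exact ⟨hup, hpv, hvu, by rw [e1, e2]; exact (fr_lt_fr d1 d2 d3).mpr h⟩

lemma mem_oInt {u v p : Circle} (huv : u ≠ v) : p ∈ oInt u v ↔ p ≠ u ∧ cB u p < cB u v := by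
  constructor
  · rintro ⟨h1, h2, h3, h4⟩
    exact ⟨Ne.symm h1, h4⟩
  · rintro ⟨h1, h2⟩
    have hpv : p ≠ v := by
      rintro rfl
      exact lt_irrefl _ h2
    exact ⟨Ne.symm h1, hpv, Ne.symm huv, h2⟩

lemma mem_oInt_rev {u v p : Circle} (huv : u ≠ v) (hpu : p ≠ u) (hpv : p ≠ v) :
    p ∈ oInt v u ↔ cB u v < cB u p := by
  have e1 := sproj_quot (b := u) (Ne.symm huv) hpu (Ne.symm hpv)
  have e2 : sproj (v⁻¹ * u) = - cB u v := sproj_inv_cB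
  have d1 : cB u v ≠ cB u p := fun h => hpv ((cB_inj hpu (Ne.symm huv) h.symm))
  constructor
  · rintro ⟨-, -, -, hlt⟩
    rw [e1, e2] at hlt
    exact (fr_lt_neg d1).mp hlt
  · intro h
    exact ⟨Ne.symm hpv, hpu, huv, by rw [e1, e2]; exact (fr_lt_neg d1).mpr h⟩

lemma base_mem_oInt {b m₁ m₂ : Circle} (h1 : m₁ ≠ b) (h2 : m₂ ≠ b) (h12 : m₁ ≠ m₂) :
    b ∈ oInt m₁ m₂ ↔ cB b m₂ < cB b m₁ := by
  have e1 : sproj (m₁⁻¹ * b) = - cB b m₁ := sproj_inv_cB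
  have e2 := sproj_quot (b := b) h1 h2 h12
  have d : cB b m₁ ≠ cB b m₂ := fun h => h12 (cB_inj h1 h2 h)
  constructor
  · rintro ⟨-, -, -, hlt⟩
    rw [e1, e2] at hlt
    exact (neg_lt_fr d).mp hlt
  · intro h
    refine ⟨h1, fun hh => h2 hh.symm, Ne.symm h12, ?_⟩
    rw [e1, e2]; exact (neg_lt_fr d).mpr h

lemma oInt_partition {u v : Circle} (huv : u ≠ v) (p : Circle) :
    p = u ∨ p = v ∨ p ∈ oInt u v ∨ p ∈ oInt v u := by
  by_cases hpu : p = u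
  · exact Or.inl hpu
  by_cases hpv : p = v
  · exact Or.inr (Or.inl hpv)
  have d : cB u p ≠ cB u v := fun h => hpv (cB_inj hpu (Ne.symm huv) h)
  rcases lt_or_gt_of_ne d with h | h
  · exact Or.inr (Or.inr (Or.inl ((mem_oInt huv).mpr ⟨hpu, h⟩)))
  · exact Or.inr (Or.inr (Or.inr ((mem_oInt_rev huv hpu hpv).mpr h)))

lemma oInt_disjoint_rev {u v : Circle} (huv : u ≠ v) : oInt u v ∩ oInt v u = ∅ := by
  ext p
  simp only [Set.mem_inter_iff, Set.mem_empty_iff_false, iff_false]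
  rintro ⟨h1, h2⟩
  obtain ⟨hpu, hlt⟩ := (mem_oInt huv).mp h1
  have hpv : p ≠ v := by
    rintro rfl
    exact lt_irrefl _ hlt
  have := (mem_oInt_rev huv hpu hpv).mp h2
  linarith

lemma not_mem_oInt_endpoints {u v : Circle} : u ∉ oInt u v ∧ v ∉ oInt u v := by
  constructor
  · rintro ⟨h, -, -, -⟩; exact h rfl
  · rintro ⟨-, h, -, -⟩; exact h rfl

end S13

namespace S13
open Complex

/-! ### topology of oInt -/

lemma continuous_coe : Continuous (fun z : Circle => (z : ℂ)) := continuous_subtype_val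

lemma continuousAt_cB {u p₀ : Circle} (h : p₀ ≠ u) : ContinuousAt (cB u) p₀ := by
  have hmul : Continuous (fun p : Circle => ((u⁻¹ * p : Circle) : ℂ)) := by
    exact continuous_coe.comp (continuous_const.mul continuous_id)
  have hden : ((u⁻¹ * p₀ : Circle) : ℂ).re - 1 ≠ 0 :=
    sub_ne_zero.mpr (re_ne_one (ne_base_iff.mpr h))
  exact ((Complex.continuous_im.comp hmul).continuousAt).div
    (((Complex.continuous_re.comp hmul).sub continuous_const).continuousAt) hden

lemma isOpen_oInt (u v : Circle) : IsOpen (oInt u v) := by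
  by_cases huv : u = v
  · have : oInt u v = ∅ := by
      ext p
      simp only [Set.mem_empty_iff_false, iff_false]
      rintro ⟨-, -, h, -⟩
      exact h huv.symm
    rw [this]; exact isOpen_empty
  · rw [isOpen_iff_mem_nhds]
    intro p₀ hp₀
    obtain ⟨hpu, hlt⟩ := (mem_oInt huv).mp hp₀
    have h1 : ∀ᶠ p in nhds p₀, p ≠ u :=
      (isOpen_compl_singleton.mem_nhds (by simpa using hpu) : _)
    have h2 : ∀ᶠ p in nhds p₀, cB u p < cB u v :=
      (continuousAt_cB hpu).eventually_lt continuousAt_const hlt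
    filter_upwards [h1, h2] with p hp1 hp2
    exact (mem_oInt huv).mpr ⟨hp1, hp2⟩

lemma oInt_nonempty {u v : Circle} (huv : u ≠ v) : (oInt u v).Nonempty := by
  refine ⟨u * stInv (cB u v - 1), ?_⟩
  rw [mem_oInt huv]
  refine ⟨stInv_ne_base u _, ?_⟩
  rw [cB_stInv]
  linarith

lemma continuous_stInv : Continuous stInv := by
  have hden : ∀ s : ℝ, s^2 + 1 ≠ 0 := fun s => by positivity
  apply Continuous.subtype_mk
  have : (fun s : ℝ => (⟨(s^2-1)/(s^2+1), -(2*s)/(s^2+1)⟩ : ℂ)) =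
      (fun s : ℝ => Complex.ofReal ((s^2-1)/(s^2+1)) + Complex.ofReal (-(2*s)/(s^2+1)) * Complex.I) := by
    funext s
    apply Complex.ext <;>
      simp only [Complex.add_re, Complex.add_im, Complex.mul_re, Complex.mul_im,
        Complex.I_re, Complex.I_im, Complex.ofReal_re, Complex.ofReal_im] <;> ring
  show Continuous (fun s : ℝ => (⟨(s^2-1)/(s^2+1), -(2*s)/(s^2+1)⟩ : ℂ))
  rw [this]
  have c1 : Continuous (fun s : ℝ => (s^2-1)/(s^2+1)) :=
    ((continuous_pow 2).sub continuous_const).div ((continuous_pow 2).add continuous_const) hden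
  have c2 : Continuous (fun s : ℝ => -(2*s)/(s^2+1)) :=
    ((continuous_const.mul continuous_id).neg).div ((continuous_pow 2).add continuous_const) hden
  exact ((Complex.continuous_ofReal.comp c1).add
    ((Complex.continuous_ofReal.comp c2).mul continuous_const))

lemma dist_stInv_one (s : ℝ) : ‖((stInv s : Circle) : ℂ) - 1‖^2 = 4/(s^2+1) := by
  have hden : (0:ℝ) < s^2+1 := by positivity
  rw [Complex.sq_norm, Complex.normSq_apply]
  have hre : ((stInv s : Circle) : ℂ) - 1 = ⟨(s^2-1)/(s^2+1) - 1, -(2*s)/(s^2+1)⟩ := by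
    apply Complex.ext <;> simp [stInv_re, stInv_im]
  rw [hre]
  show ((s^2-1)/(s^2+1) - 1) * ((s^2-1)/(s^2+1) - 1) + (-(2*s)/(s^2+1)) * (-(2*s)/(s^2+1)) = _
  field_simp
  ring

lemma mem_closure_left {u v : Circle} (huv : u ≠ v) : u ∈ closure (oInt u v) := by
  rw [Metric.mem_closure_iff]
  intro ε hε
  obtain ⟨s, hs1, hs2⟩ : ∃ s : ℝ, s < cB u v ∧ 4/(s^2+1) < ε^2 := by
    refine ⟨min (cB u v - 1) (-(2/ε) - 1), lt_of_le_of_lt (min_le_left _ _) (by linarith), ?_⟩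
    set s := min (cB u v - 1) (-(2/ε) - 1)
    have hs : s ≤ -(2/ε) - 1 := min_le_right _ _
    have h2e : 0 < 2/ε := by positivity
    have habs : 2/ε + 1 ≤ -s := by linarith
    have h1 : (2/ε)^2 < s^2 := by nlinarith
    have h3 : (2/ε)^2 = 4/ε^2 := by rw [div_pow]; norm_num
    rw [div_lt_iff₀ (by positivity)]
    rw [h3, div_lt_iff₀ (by positivity)] at h1
    nlinarith [sq_nonneg ε, hε, sq_nonneg s]
  refine ⟨u * stInv s, (mem_oInt huv).mpr ⟨stInv_ne_base u s, by rw [cB_stInv]; exact hs1⟩, ?_⟩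
  have hdist : dist u (u * stInv s) = ‖((stInv s : Circle) : ℂ) - 1‖ := by
    rw [show dist u (u * stInv s) = dist (u:ℂ) ((u * stInv s : Circle) : ℂ) from rfl, Circle.coe_mul]
    rw [Complex.dist_eq]
    have : (u:ℂ) - (u:ℂ) * (stInv s : ℂ) = (u:ℂ) * (1 - (stInv s : ℂ)) := by ring
    rw [this, norm_mul]
    have hu : ‖(u:ℂ)‖ = 1 := Circle.norm_coe u
    rw [hu, one_mul, ← norm_neg]
    congr 1
    ring
  rw [hdist]
  have h4 := dist_stInv_one s
  nlinarith [norm_nonneg (((stInv s : Circle) : ℂ) - 1), hε]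

lemma mem_closure_right {u v : Circle} (huv : u ≠ v) : v ∈ closure (oInt u v) := by
  have hcont : ContinuousAt (fun s : ℝ => u * stInv s) (cB u v) := by
    exact Continuous.continuousAt (continuous_const.mul continuous_stInv)
  have hval : u * stInv (cB u v) = v := by
    unfold cB
    rw [stInv_sproj (ne_base_iff.mpr (Ne.symm huv)), mul_inv_cancel_left]
  rw [mem_closure_iff_nhds]
  intro t ht
  have : ∀ᶠ s in nhds (cB u v), u * stInv s ∈ t := by
    apply hcont.eventually_mem
    rw [hval]; exact ht
  obtain ⟨δ, hδ, hball⟩ := Metric.eventually_nhds_iff.mp this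
  refine ⟨u * stInv (cB u v - δ/2), hball (by simp [abs_of_nonpos]; rw [abs_of_pos] <;> linarith), ?_⟩
  exact (mem_oInt huv).mpr ⟨stInv_ne_base u _, by rw [cB_stInv]; linarith⟩

lemma closure_oInt {u v : Circle} (huv : u ≠ v) :
    closure (oInt u v) = oInt u v ∪ {u, v} := by
  apply subset_antisymm
  · have hsub : closure (oInt u v) ⊆ (oInt v u)ᶜ := by
      have hdisj : oInt u v ⊆ (oInt v u)ᶜ := by
        intro p hp hq
        have : p ∈ oInt u v ∩ oInt v u := ⟨hp, hq⟩
        rw [oInt_disjoint_rev huv] at this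
        exact this
      exact closure_minimal hdisj (isOpen_oInt v u).isClosed_compl
    intro p hp
    have hp' := hsub hp
    rcases oInt_partition huv p with h | h | h | h
    · exact Or.inr (Or.inl h)
    · exact Or.inr (Or.inr h)
    · exact Or.inl h
    · exact absurd h hp'
  · apply Set.union_subset subset_closure
    rintro p (rfl | rfl)
    · exact mem_closure_left huv
    · exact mem_closure_right huv

lemma compl_oInt {u v : Circle} (huv : u ≠ v) :
    (oInt u v)ᶜ = oInt v u ∪ {u, v} := by
  ext p
  simp only [Set.mem_compl_iff, Set.mem_union, Set.mem_insert_iff, Set.mem_singleton_iff]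
  constructor
  · intro h
    rcases oInt_partition huv p with h' | h' | h' | h'
    · exact Or.inr (Or.inl h')
    · exact Or.inr (Or.inr h')
    · exact absurd h' h
    · exact Or.inl h'
  · rintro (h | h | h)
    · intro hmem
      have : p ∈ oInt u v ∩ oInt v u := ⟨hmem, h⟩
      rw [oInt_disjoint_rev huv] at this
      exact this
    · subst h; exact not_mem_oInt_endpoints.1
    · subst h; exact not_mem_oInt_endpoints.2

lemma dual_oInt {u v : Circle} (huv : u ≠ v) : dual (oInt u v) = oInt v u := by
  unfold dual
  rw [interior_compl, closure_oInt huv]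
  have h2 : oInt u v ∪ {u, v} = (oInt v u)ᶜ := by
    rw [compl_oInt (Ne.symm huv)]
    ext p
    simp only [Set.mem_union, Set.mem_insert_iff, Set.mem_singleton_iff]
    tauto
  rw [h2, compl_compl]

lemma frontier_oInt {u v : Circle} (huv : u ≠ v) : frontier (oInt u v) = {u, v} := by
  rw [frontier, closure_oInt huv, (isOpen_oInt u v).interior_eq]
  ext p
  simp only [Set.mem_diff, Set.mem_union, Set.mem_insert_iff, Set.mem_singleton_iff]
  constructor
  · rintro ⟨h1 | h1, h2⟩
    · exact absurd h1 h2
    · exact h1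
  · rintro (rfl | rfl)
    · exact ⟨Or.inr (Or.inl rfl), not_mem_oInt_endpoints.1⟩
    · exact ⟨Or.inr (Or.inr rfl), not_mem_oInt_endpoints.2⟩

end S13

namespace S13
open Complex

/-! ### generic set lemmas about dual -/

lemma isOpen_of_nd {M : Set Circle} (h : IsND M) : IsOpen M := by
  obtain ⟨u, v, huv, rfl⟩ := h
  exact isOpen_oInt u v

lemma nonempty_of_nd {M : Set Circle} (h : IsND M) : Set.Nonempty M := by
  obtain ⟨u, v, huv, rfl⟩ := h
  exact oInt_nonempty huv

lemma dual_nd_of_nd {M : Set Circle} (h : IsND M) : IsND (dual M) := by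
  obtain ⟨u, v, huv, rfl⟩ := h
  exact ⟨v, u, Ne.symm huv, dual_oInt huv⟩

lemma dual_dual_of_nd {M : Set Circle} (h : IsND M) : dual (dual M) = M := by
  obtain ⟨u, v, huv, rfl⟩ := h
  rw [dual_oInt huv, dual_oInt (Ne.symm huv)]

lemma dual_disjoint (M : Set Circle) : M ∩ dual M = ∅ := by
  ext x
  simp only [Set.mem_inter_iff, Set.mem_empty_iff_false, iff_false, not_and]
  intro hx hd
  exact (interior_subset hd) hx

lemma dual_anti {M N : Set Circle} (h : M ⊆ N) : dual N ⊆ dual M :=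
  interior_mono (Set.compl_subset_compl.mpr h)

lemma mem_closure_or_dual (M : Set Circle) (x : Circle) :
    x ∈ closure M ∨ x ∈ closure (dual M) := by
  by_cases h : x ∈ closure M
  · exact Or.inl h
  · right
    apply subset_closure
    rw [dual, interior_compl]
    exact h

lemma subset_dual_of_disjoint {M N : Set Circle} (hOpen : IsOpen M) (h : M ∩ N = ∅) :
    M ⊆ dual N := by
  have hsub : M ⊆ Nᶜ := by
    intro y hy hyN
    rw [Set.eq_empty_iff_forall_notMem] at h
    exact h y ⟨hy, hyN⟩
  calc M = interior M := hOpen.interior_eq.symm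
  _ ⊆ interior Nᶜ := interior_mono hsub

lemma dual_of_nd {M : Set Circle} (u v : Circle) (huv : u ≠ v) (hM : M = oInt u v) :
    dual M = oInt v u := by
  rw [hM, dual_oInt huv]

/-! ### lamination machinery -/

variable {L : Set (Set Circle)}

lemma mem_isOpen (hL : LamSys L) {M : Set Circle} (hM : M ∈ L) : IsOpen M :=
  isOpen_of_nd (hL.nd M hM)

lemma mem_nonempty (hL : LamSys L) {M : Set Circle} (hM : M ∈ L) : M.Nonempty :=
  nonempty_of_nd (hL.nd M hM)

lemma mem_dual_dual (hL : LamSys L) {M : Set Circle} (hM : M ∈ L) : dual (dual M) = M :=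
  dual_dual_of_nd (hL.nd M hM)

/-- two leaves with a common point, both of whose closures avoid some point, are nested -/
lemma nested_of_common (hL : LamSys L) {M M' : Set Circle} (hM : M ∈ L) (hM' : M' ∈ L)
    {x b : Circle} (hxM : x ∈ M) (hxM' : x ∈ M')
    (hbM : b ∉ closure M) (hbM' : b ∉ closure M') : M ⊆ M' ∨ M' ⊆ M := by
  rcases hL.unlinked M hM M' hM' with (h | h) | (h | h)
  · exact Or.inl h
  · -- dual M ⊆ M' : impossible since closures would cover the circle, missing b
    exfalso
    rcases mem_closure_or_dual M b with hb | hb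
    · exact hbM hb
    · exact hbM' (closure_mono h hb)
  · -- M ⊆ dual M' : impossible since x ∈ M ∩ M'
    exfalso
    have : x ∈ M' ∩ dual M' := ⟨hxM', h hxM⟩
    rw [dual_disjoint] at this
    exact this
  · -- dual M ⊆ dual M' : M' ⊆ M
    right
    have := dual_anti h
    rwa [mem_dual_dual hL hM, mem_dual_dual hL hM'] at this

/-- chains of leaves whose union is nondegenerate have union a leaf -/
lemma sUnion_mem (hL : LamSys L) {𝒞 : Set (Set Circle)} (h𝒞 : 𝒞 ⊆ L)
    (hchain : IsChain (· ⊆ ·) 𝒞) (hnd : IsND (⋃₀ 𝒞)) : ⋃₀ 𝒞 ∈ L := by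
  classical
  obtain ⟨T, hTc, hTsub, hTeq⟩ := TopologicalSpace.isOpen_sUnion_countable 𝒞
    (fun s hs => mem_isOpen hL (h𝒞 hs))
  rcases T.eq_empty_or_nonempty with rfl | hTne
  · exfalso
    rw [Set.sUnion_empty] at hTeq
    have h1 := nonempty_of_nd hnd
    rw [← hTeq] at h1
    exact Set.not_nonempty_empty h1
  obtain ⟨f, hf⟩ := Set.Countable.exists_eq_range hTc hTne
  have hfT : ∀ n, f n ∈ T := fun n => hf ▸ Set.mem_range_self n
  let g : ℕ → Set Circle := fun n => Nat.rec (f 0) (fun k gk => if f (k+1) ⊆ gk then gk else f (k+1)) n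
  have hg0 : g 0 = f 0 := rfl
  have hgsucc : ∀ n : ℕ, g (n+1) = @ite _ (f (n+1) ⊆ g n) (Classical.propDecidable _) (g n) (f (n+1)) := fun n => rfl
  have hgT : ∀ n, g n ∈ T := by
    intro n
    induction n with
    | zero => exact hg0 ▸ hfT 0
    | succ k ih =>
      rw [hgsucc]
      split
      · exact ih
      · exact hfT (k+1)
  have hgmono : ∀ n, g n ⊆ g (n+1) := by
    intro n
    rw [hgsucc]
    split
    · exact subset_rfl
    · rename_i hns
      rcases hchain.total (hTsub (hgT n)) (hTsub (hfT (n+1))) with h | h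
      · exact h
      · exact absurd h hns
  have hfg : ∀ n, f n ⊆ g n := by
    intro n
    cases n with
    | zero => exact hg0 ▸ subset_rfl
    | succ k =>
      rw [hgsucc]
      split
      · assumption
      · exact subset_rfl
  have hunion : ⋃ n, g n = ⋃₀ 𝒞 := by
    apply subset_antisymm
    · apply Set.iUnion_subset
      intro n
      rw [← hTeq]
      exact Set.subset_sUnion_of_mem (hgT n)
    · rw [← hTeq]
      intro z hz
      obtain ⟨t, ht, hzt⟩ := hz
      obtain ⟨n, rfl⟩ : ∃ n, f n = t := by
        rw [hf] at ht
        exact ht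
      exact Set.mem_iUnion.mpr ⟨n, hfg n hzt⟩
  rw [← hunion]
  exact hL.chainUnion g (fun n => h𝒞 (hTsub (hgT n))) hgmono (by rwa [hunion])

/-- compact subsets of a chain union are inside one member -/
lemma compact_subset_chain {𝒞 : Set (Set Circle)} (hchain : IsChain (· ⊆ ·) 𝒞)
    (hne : 𝒞.Nonempty) (hopen : ∀ M ∈ 𝒞, IsOpen M) {K : Set Circle} (hK : IsCompact K)
    (hKsub : K ⊆ ⋃₀ 𝒞) : ∃ M ∈ 𝒞, K ⊆ M := by
  haveI : Nonempty 𝒞 := hne.to_subtype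
  have hdir : Directed (· ⊆ ·) (fun M : 𝒞 => (M : Set Circle)) := by
    intro a b
    rcases hchain.total a.2 b.2 with h | h
    · exact ⟨b, h, subset_rfl⟩
    · exact ⟨a, subset_rfl, h⟩
  have hcover : K ⊆ ⋃ M : 𝒞, (M : Set Circle) := by
    rwa [Set.sUnion_eq_iUnion] at hKsub
  obtain ⟨M, hM⟩ := hK.elim_directed_cover _ (fun M : 𝒞 => hopen M M.2) hcover hdir
  exact ⟨M, M.2, hM⟩

end S13

namespace S13
open Complex

/-! ### interval image machinery -/

lemma not_closure_unpack {b u v : Circle} (huv : u ≠ v) (hb : b ∉ closure (oInt u v)) :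
    b ∉ oInt u v ∧ u ≠ b ∧ v ≠ b := by
  rw [closure_oInt huv] at hb
  simp only [Set.mem_union, Set.mem_insert_iff, Set.mem_singleton_iff, not_or] at hb
  exact ⟨hb.1, fun h => hb.2.1 h.symm, fun h => hb.2.2 h.symm⟩

lemma endpoints_lt {b u v : Circle} (hu : u ≠ b) (hv : v ≠ b) (huv : u ≠ v)
    (hb : b ∉ oInt u v) : cB b u < cB b v := by
  have d : cB b u ≠ cB b v := fun h => huv (cB_inj hu hv h)
  rcases lt_or_gt_of_ne d with h | h
  · exact h
  · exact absurd ((base_mem_oInt hu hv huv).mpr h) hb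

lemma mem_oInt_iff_Ioo {b u v z : Circle} (hu : u ≠ b) (hv : v ≠ b) (huv : u ≠ v)
    (hz : z ≠ b) (hAB : cB b u < cB b v) :
    z ∈ oInt u v ↔ cB b z ∈ Set.Ioo (cB b u) (cB b v) := by
  constructor
  · intro hmem
    obtain ⟨h1, h2, h3, -⟩ := id hmem
    have := (posOri_iff_cyc (b := b) hu hz hv h1 h2 h3).mp hmem
    rcases this with ⟨ha, hb'⟩ | ⟨ha, hb'⟩ | ⟨ha, hb'⟩
    · exact ⟨ha, hb'⟩
    · linarith
    · linarith
  · rintro ⟨h1, h2⟩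
    have hzu : z ≠ u := fun h => by rw [h] at h1; exact lt_irrefl _ h1
    have hzv : z ≠ v := fun h => by rw [h] at h2; exact lt_irrefl _ h2
    exact (posOri_iff_cyc (b := b) hu hz hv (Ne.symm hzu) hzv (Ne.symm huv)).mpr
      (Or.inl ⟨h1, h2⟩)

lemma ne_b_of_mem {b : Circle} {M : Set Circle} (hb : b ∉ closure M) {z : Circle}
    (hz : z ∈ M) : z ≠ b := fun h => hb (h ▸ subset_closure hz)

lemma mem_of_between {b : Circle} {M : Set Circle} (hnd : IsND M) (hb : b ∉ closure M)
    {z₁ z₂ z : Circle} (h1 : z₁ ∈ M) (h2 : z₂ ∈ M) (hz : z ≠ b)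
    (hlt1 : cB b z₁ < cB b z) (hlt2 : cB b z < cB b z₂) : z ∈ M := by
  obtain ⟨u, v, huv, rfl⟩ := hnd
  obtain ⟨hbo, hub, hvb⟩ := not_closure_unpack huv hb
  have hAB := endpoints_lt hub hvb huv hbo
  have m1 := (mem_oInt_iff_Ioo hub hvb huv (ne_b_of_mem hb h1) hAB).mp h1
  have m2 := (mem_oInt_iff_Ioo hub hvb huv (ne_b_of_mem hb h2) hAB).mp h2
  exact (mem_oInt_iff_Ioo hub hvb huv hz hAB).mpr ⟨lt_trans m1.1 hlt1, lt_trans hlt2 m2.2⟩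

lemma exists_flank {b : Circle} {M : Set Circle} (hnd : IsND M) (hb : b ∉ closure M)
    {z : Circle} (hz : z ∈ M) :
    (∃ w ∈ M, cB b w < cB b z) ∧ (∃ w ∈ M, cB b z < cB b w) := by
  obtain ⟨u, v, huv, rfl⟩ := hnd
  obtain ⟨hbo, hub, hvb⟩ := not_closure_unpack huv hb
  have hAB := endpoints_lt hub hvb huv hbo
  have m1 := (mem_oInt_iff_Ioo hub hvb huv (ne_b_of_mem hb hz) hAB).mp hz
  constructor
  · set t := (cB b u + cB b z)/2 with ht
    refine ⟨b * stInv t, ?_, ?_⟩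
    · rw [mem_oInt_iff_Ioo hub hvb huv (stInv_ne_base b t), cB_stInv]
      constructor
      · simp only [ht]; linarith [m1.1]
      · simp only [ht]; linarith [m1.1, m1.2]
      · exact hAB
    · rw [cB_stInv]; simp only [ht]; linarith [m1.1]
  · set t := (cB b z + cB b v)/2 with ht
    refine ⟨b * stInv t, ?_, ?_⟩
    · rw [mem_oInt_iff_Ioo hub hvb huv (stInv_ne_base b t), cB_stInv]
      constructor
      · simp only [ht]; linarith [m1.1, m1.2]
      · simp only [ht]; linarith [m1.2]
      · exact hAB
    · rw [cB_stInv]; simp only [ht]; linarith [m1.2]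

end S13

namespace S13
open Complex

/-- classification of unions of chains of intervals through a common point,
    all avoiding the closure point `b` -/
lemma chain_union_classify {b : Circle} {𝒞 : Set (Set Circle)}
    (hchain : IsChain (· ⊆ ·) 𝒞) (hnd : ∀ M ∈ 𝒞, IsND M)
    (hb : ∀ M ∈ 𝒞, b ∉ closure M) {x₀ : Circle} (hx₀ : ∀ M ∈ 𝒞, x₀ ∈ M)
    (hne : 𝒞.Nonempty) :
    (IsND (⋃₀ 𝒞) ∧ b ∉ closure (⋃₀ 𝒞)) ∨
    (∃ w, w ≠ b ∧ (⋃₀ 𝒞 = oInt b w ∨ ⋃₀ 𝒞 = oInt w b)) ∨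
    (∀ z, z ≠ b → z ∈ ⋃₀ 𝒞) := by
  classical
  set U := ⋃₀ 𝒞 with hU
  set T := cB b '' U with hT
  obtain ⟨M₀, hM₀⟩ := hne
  have hx₀U : x₀ ∈ U := ⟨M₀, hM₀, hx₀ M₀ hM₀⟩
  have hzb : ∀ z ∈ U, z ≠ b := by
    rintro z ⟨M, hM, hzM⟩
    exact ne_b_of_mem (hb M hM) hzM
  set s₀ := cB b x₀ with hs₀
  have hs₀T : s₀ ∈ T := ⟨x₀, hx₀U, rfl⟩
  -- order-connectedness of T
  have hconn : ∀ s t₁ t₂, t₁ ∈ T → t₂ ∈ T → t₁ < s → s < t₂ → s ∈ T := by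
    rintro s t₁ t₂ ⟨z₁, ⟨N₁, hN₁, hz₁⟩, rfl⟩ ⟨z₂, ⟨N₂, hN₂, hz₂⟩, rfl⟩ h1 h2
    obtain (hsub | hsub) := hchain.total hN₁ hN₂
    · refine ⟨b * stInv s, ⟨N₂, hN₂, ?_⟩, cB_stInv b s⟩
      exact mem_of_between (hnd N₂ hN₂) (hb N₂ hN₂) (hsub hz₁) hz₂ (stInv_ne_base b s)
        (by rwa [cB_stInv]) (by rwa [cB_stInv])
    · refine ⟨b * stInv s, ⟨N₁, hN₁, ?_⟩, cB_stInv b s⟩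
      exact mem_of_between (hnd N₁ hN₁) (hb N₁ hN₁) hz₁ (hsub hz₂) (stInv_ne_base b s)
        (by rwa [cB_stInv]) (by rwa [cB_stInv])
  -- realization: elements of T are cB-values of members of U, and preimages are in U
  have hreal : ∀ s ∈ T, b * stInv s ∈ U := by
    rintro s ⟨z, hzU, rfl⟩
    have : b * stInv (cB b z) = z := by
      unfold cB
      rw [stInv_sproj (ne_base_iff.mpr (hzb z hzU)), mul_inv_cancel_left]
    rwa [this]
  -- flanking elements in T
  have hflank : ∀ t ∈ T, (∃ t' ∈ T, t' < t) ∧ (∃ t' ∈ T, t < t') := by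
    rintro t ⟨z, ⟨N, hN, hzN⟩, rfl⟩
    obtain ⟨⟨w₁, hw₁, hlt₁⟩, ⟨w₂, hw₂, hlt₂⟩⟩ := exists_flank (hnd N hN) (hb N hN) hzN
    exact ⟨⟨cB b w₁, ⟨w₁, ⟨N, hN, hw₁⟩, rfl⟩, hlt₁⟩, ⟨cB b w₂, ⟨w₂, ⟨N, hN, hw₂⟩, rfl⟩, hlt₂⟩⟩
  have hTne : T.Nonempty := ⟨s₀, hs₀T⟩
  by_cases hba : BddAbove T <;> by_cases hbb : BddBelow T
  · -- bounded: U is a nondegenerate interval avoiding b in closure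
    left
    set A := sInf T with hA
    set B := sSup T with hB
    have hAB : A < B := by
      obtain ⟨⟨t₁, ht₁, hlt₁⟩, ⟨t₂, ht₂, hlt₂⟩⟩ := hflank s₀ hs₀T
      calc A ≤ t₁ := csInf_le hbb ht₁
      _ < s₀ := hlt₁
      _ < t₂ := hlt₂
      _ ≤ B := le_csSup hba ht₂
    have hTIoo : T = Set.Ioo A B := by
      apply subset_antisymm
      · intro t ht
        obtain ⟨⟨t₁, ht₁, hlt₁⟩, ⟨t₂, ht₂, hlt₂⟩⟩ := hflank t ht
        exact ⟨lt_of_le_of_lt (csInf_le hbb ht₁) hlt₁, lt_of_lt_of_le hlt₂ (le_csSup hba ht₂)⟩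
      · rintro s ⟨h1, h2⟩
        obtain ⟨t₁, ht₁, hlt₁⟩ := exists_lt_of_csInf_lt hTne h1
        obtain ⟨t₂, ht₂, hlt₂⟩ := exists_lt_of_lt_csSup hTne h2
        exact hconn s t₁ t₂ ht₁ ht₂ hlt₁ hlt₂
    set zA := b * stInv A with hzA
    set zB := b * stInv B with hzB
    have hcA : cB b zA = A := cB_stInv b A
    have hcB' : cB b zB = B := cB_stInv b B
    have hzAb : zA ≠ b := stInv_ne_base b A
    have hzBb : zB ≠ b := stInv_ne_base b B
    have hzAB : zA ≠ zB := by
      intro h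
      rw [h, hcB'] at hcA
      exact (ne_of_lt hAB) hcA.symm
    have hABc : cB b zA < cB b zB := by rw [hcA, hcB']; exact hAB
    have hUeq : U = oInt zA zB := by
      apply subset_antisymm
      · intro z hzU
        have : cB b z ∈ T := ⟨z, hzU, rfl⟩
        rw [hTIoo] at this
        exact (mem_oInt_iff_Ioo hzAb hzBb hzAB (hzb z hzU) hABc).mpr (by rwa [hcA, hcB'])
      · intro z hz
        have hznb : z ≠ b := by
          intro h
          have := (base_mem_oInt hzAb hzBb hzAB).mp (h ▸ hz)
          rw [hcA, hcB'] at this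
          linarith
        have := (mem_oInt_iff_Ioo hzAb hzBb hzAB hznb hABc).mp hz
        rw [hcA, hcB', ← hTIoo] at this
        obtain ⟨w, hwU, hw⟩ := this
        have : w = z := cB_inj (hzb w hwU) hznb hw
        exact this ▸ hwU
    constructor
    · exact ⟨zA, zB, hzAB, hUeq⟩
    · rw [hUeq, closure_oInt hzAB]
      simp only [Set.mem_union, Set.mem_insert_iff, Set.mem_singleton_iff, not_or]
      refine ⟨?_, fun h => hzAb h.symm, fun h => hzBb h.symm⟩
      intro hmem
      have := (base_mem_oInt hzAb hzBb hzAB).mp hmem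
      rw [hcA, hcB'] at this
      linarith
  · -- bounded above, unbounded below : U = oInt b zB
    right; left
    set B := sSup T with hB
    have hTIio : T = Set.Iio B := by
      apply subset_antisymm
      · intro t ht
        obtain ⟨-, ⟨t₂, ht₂, hlt₂⟩⟩ := hflank t ht
        exact lt_of_lt_of_le hlt₂ (le_csSup hba ht₂)
      · intro s hs
        obtain ⟨t₂, ht₂, hlt₂⟩ := exists_lt_of_lt_csSup hTne hs
        obtain ⟨t₁, ht₁, hlt₁⟩ : ∃ t₁ ∈ T, t₁ < s := by
          by_contra hcon
          push_neg at hcon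
          exact hbb ⟨s, fun t ht => hcon t ht⟩
        exact hconn s t₁ t₂ ht₁ ht₂ hlt₁ hlt₂
    set zB := b * stInv B with hzB
    have hcB' : cB b zB = B := cB_stInv b B
    have hzBb : zB ≠ b := stInv_ne_base b B
    refine ⟨zB, hzBb, Or.inl ?_⟩
    apply subset_antisymm
    · intro z hzU
      have hm : cB b z ∈ T := ⟨z, hzU, rfl⟩
      rw [hTIio] at hm
      exact (mem_oInt (fun h => hzBb h.symm)).mpr ⟨hzb z hzU, by rwa [hcB']⟩
    · intro z hz
      obtain ⟨hz1, hz2⟩ := (mem_oInt (fun h => hzBb h.symm)).mp hz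
      rw [hcB'] at hz2
      have : cB b z ∈ T := hTIio ▸ hz2
      obtain ⟨w, hwU, hw⟩ := this
      have : w = z := cB_inj (hzb w hwU) hz1 hw
      exact this ▸ hwU
  · -- unbounded above, bounded below : U = oInt zA b
    right; left
    set A := sInf T with hA
    have hTIoi : T = Set.Ioi A := by
      apply subset_antisymm
      · intro t ht
        obtain ⟨⟨t₁, ht₁, hlt₁⟩, -⟩ := hflank t ht
        exact lt_of_le_of_lt (csInf_le hbb ht₁) hlt₁
      · intro s hs
        obtain ⟨t₁, ht₁, hlt₁⟩ := exists_lt_of_csInf_lt hTne hs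
        obtain ⟨t₂, ht₂, hlt₂⟩ : ∃ t₂ ∈ T, s < t₂ := by
          by_contra hcon
          push_neg at hcon
          exact hba ⟨s, fun t ht => hcon t ht⟩
        exact hconn s t₁ t₂ ht₁ ht₂ hlt₁ hlt₂
    set zA := b * stInv A with hzA
    have hcA : cB b zA = A := cB_stInv b A
    have hzAb : zA ≠ b := stInv_ne_base b A
    refine ⟨zA, hzAb, Or.inr ?_⟩
    apply subset_antisymm
    · intro z hzU
      have hm : cB b z ∈ T := ⟨z, hzU, rfl⟩
      rw [hTIoi] at hm
      have hzzA : z ≠ zA := by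
        intro h
        rw [h] at hm
        rw [Set.mem_Ioi, hcA] at hm
        exact lt_irrefl _ hm
      exact (mem_oInt_rev (fun h => hzAb h.symm) (hzb z hzU) hzzA).mpr (by rwa [hcA])
    · intro z hz
      obtain ⟨-, hz2, -, -⟩ := id hz
      have hzzA : z ≠ zA := by
        rintro rfl
        exact (id hz).1 rfl
      have := (mem_oInt_rev (fun h => hzAb h.symm) hz2 hzzA).mp hz
      rw [hcA] at this
      have hm : cB b z ∈ T := hTIoi ▸ this
      obtain ⟨w, hwU, hw⟩ := hm
      have : w = z := cB_inj (hzb w hwU) hz2 hw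
      exact this ▸ hwU
  · -- unbounded both sides: everything except b
    right; right
    intro z hznb
    obtain ⟨t₁, ht₁, hlt₁⟩ : ∃ t₁ ∈ T, t₁ < cB b z := by
      by_contra hcon
      push_neg at hcon
      exact hbb ⟨cB b z, fun t ht => hcon t ht⟩
    obtain ⟨t₂, ht₂, hlt₂⟩ : ∃ t₂ ∈ T, cB b z < t₂ := by
      by_contra hcon
      push_neg at hcon
      exact hba ⟨cB b z, fun t ht => hcon t ht⟩
    have : cB b z ∈ T := hconn _ t₁ t₂ ht₁ ht₂ hlt₁ hlt₂
    obtain ⟨w, hwU, hw⟩ := this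
    have : w = z := cB_inj (hzb w hwU) hznb hw
    exact this ▸ hwU

end S13

namespace S13
open Complex

lemma chain_union_nd_bounded {b : Circle} {𝒞 : Set (Set Circle)}
    (hchain : IsChain (· ⊆ ·) 𝒞) (hnd : ∀ M ∈ 𝒞, IsND M)
    (hb : ∀ M ∈ 𝒞, b ∉ closure M) {x₀ : Circle} (hx₀ : ∀ M ∈ 𝒞, x₀ ∈ M)
    (hne : 𝒞.Nonempty) {D : Set Circle} (hDnd : IsND D) (hbD : b ∉ closure D)
    (hMD : ∀ M ∈ 𝒞, M ⊆ D) :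
    IsND (⋃₀ 𝒞) ∧ b ∉ closure (⋃₀ 𝒞) := by
  have hUD : ⋃₀ 𝒞 ⊆ D := Set.sUnion_subset hMD
  rcases chain_union_classify hchain hnd hb hx₀ hne with h | ⟨w, hwb, (h | h)⟩ | h
  · exact h
  · exfalso
    apply hbD
    apply closure_mono hUD
    rw [h]
    exact mem_closure_left (fun hh => hwb hh.symm)
  · exfalso
    apply hbD
    apply closure_mono hUD
    rw [h]
    exact mem_closure_right hwb
  · exfalso
    obtain ⟨u, v, huv, rfl⟩ := hDnd
    obtain ⟨-, hub, -⟩ := not_closure_unpack huv hbD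
    exact not_mem_oInt_endpoints.1 (hUD (h u hub))

/-- unions over point-indexed chains are equal or disjoint -/
lemma sUnion_eq_or_disj {P : Circle → Set (Set Circle)}
    (htrans : ∀ x y M, M ∈ P x → y ∈ M → M ∈ P y)
    (hchainP : ∀ x, IsChain (· ⊆ ·) (P x))
    (hmemx : ∀ x M, M ∈ P x → x ∈ M)
    {x y : Circle} (hne : (⋃₀ P x ∩ ⋃₀ P y).Nonempty) : ⋃₀ P x = ⋃₀ P y := by
  have aux : ∀ x y : Circle, (∃ B, B ∈ P x ∧ B ∈ P y) → ⋃₀ P y ⊆ ⋃₀ P x := by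
    rintro a c ⟨B, hBa, hBc⟩
    intro z hz
    obtain ⟨C, hC, hzC⟩ := hz
    rcases (hchainP c).total hC hBc with h | h
    · exact ⟨B, hBa, h hzC⟩
    · have : a ∈ C := h (hmemx a B hBa)
      exact ⟨C, htrans c a C hC this, hzC⟩
  obtain ⟨y', ⟨A, hA, hy'A⟩, ⟨B, hB, hy'B⟩⟩ := hne
  have hAy' : A ∈ P y' := htrans x y' A hA hy'A
  have hBy' : B ∈ P y' := htrans y y' B hB hy'B
  have hcommon : ∃ C, C ∈ P x ∧ C ∈ P y := by
    rcases (hchainP y').total hAy' hBy' with h | h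
    · exact ⟨B, htrans y x B hB (h (hmemx x A hA)), hB⟩
    · exact ⟨A, hA, htrans x y A hA (h (hmemx y B hB))⟩
  obtain ⟨C, hCx, hCy⟩ := hcommon
  exact subset_antisymm (aux y x ⟨C, hCy, hCx⟩) (aux x y ⟨C, hCx, hCy⟩)

lemma mem_ELset {L : Set (Set Circle)} {M : Set Circle} (hM : M ∈ L) {z : Circle}
    (hz : z ∈ frontier M) : z ∈ ELset L := by
  exact Set.mem_biUnion hM hz

lemma closure_dual_subset {M : Set Circle} (hM : IsOpen M) : closure (dual M) ⊆ Mᶜ :=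
  closure_minimal (fun z hz => interior_subset hz) (isClosed_compl_iff.mpr hM)

end S13

namespace S13
open Complex

variable {L : Set (Set Circle)}

/-- the chain of leaves through `x` avoiding `q` in the closure -/
def Cplus (L : Set (Set Circle)) (q x : Circle) : Set (Set Circle) :=
  {M | M ∈ L ∧ x ∈ M ∧ q ∉ closure M}

lemma cplus_chain (hL : LamSys L) (q x : Circle) : IsChain (· ⊆ ·) (Cplus L q x) := by
  rintro M ⟨hM, hxM, hqM⟩ M' ⟨hM', hxM', hqM'⟩ hne
  rcases nested_of_common hL hM hM' hxM hxM' hqM hqM' with h | h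
  · exact Or.inl h
  · exact Or.inr h

/-- Gap construction at a point `q`; if all the unions are nondegenerate and avoid `q`,
    any two leaves avoiding `q` are separated. -/
lemma separated_of_point (hL : LamSys L) {q : Circle} (hqE : q ∉ ELset L)
    (hall : ∀ x, (Cplus L q x).Nonempty →
      IsND (⋃₀ Cplus L q x) ∧ q ∉ closure (⋃₀ Cplus L q x))
    {I J : Set Circle} (hI : I ∈ L) (hJ : J ∈ L)
    (hqI : q ∉ closure I) (hqJ : q ∉ closure J) : SeparatedPair L I J := by
  set G : Set (Set Circle) := {S | ∃ x, (Cplus L q x).Nonempty ∧ S = ⋃₀ Cplus L q x} with hG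
  have hmemL : ∀ S ∈ G, S ∈ L := by
    rintro S ⟨x, hxne, rfl⟩
    exact sUnion_mem hL (fun M hM => hM.1) (cplus_chain hL q x) (hall x hxne).1
  have htrans : ∀ x y M, M ∈ Cplus L q x → y ∈ M → M ∈ Cplus L q y :=
    fun x y M hM hy => ⟨hM.1, hy, hM.2.2⟩
  have hmemx : ∀ x M, M ∈ Cplus L q x → x ∈ M := fun x M hM => hM.2.1
  have hGavoid : ∀ S ∈ G, q ∉ closure S := by
    rintro S ⟨x, hxne, rfl⟩
    exact (hall x hxne).2
  refine ⟨G, ⟨hmemL, ?_, ?_⟩, ?_, ?_⟩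
  · -- pairwise disjoint
    rintro S hS S' hS' hne
    by_contra hcon
    apply hne
    obtain ⟨x, hxne, rfl⟩ := hS
    obtain ⟨y, hyne, rfl⟩ := hS'
    exact sUnion_eq_or_disj htrans (cplus_chain hL q) hmemx
      (Set.nonempty_iff_ne_empty.mpr hcon)
  · -- covering
    intro M hM
    have hqf : q ∉ frontier M := fun h => hqE (mem_ELset hM h)
    by_cases hq : q ∈ closure M
    · -- q inside M; use the dual
      have hqM : q ∈ M := by
        rw [← (mem_isOpen hL hM).interior_eq]
        rcases (closure_eq_interior_union_frontier M ▸ hq) with h | h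
        · exact h
        · exact absurd h hqf
      have hdM : dual M ∈ L := hL.dualMem M hM
      obtain ⟨x, hx⟩ := mem_nonempty hL hdM
      have hcp : dual M ∈ Cplus L q x := by
        refine ⟨hdM, hx, fun hcl => ?_⟩
        exact (closure_dual_subset (mem_isOpen hL hM) hcl) hqM
      refine ⟨⋃₀ Cplus L q x, ⟨x, ⟨dual M, hcp⟩, rfl⟩, Or.inr ?_⟩
      exact Set.subset_sUnion_of_mem hcp
    · -- q outside the closure of M
      obtain ⟨x, hx⟩ := mem_nonempty hL hM
      have hcp : M ∈ Cplus L q x := ⟨hM, hx, hq⟩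
      refine ⟨⋃₀ Cplus L q x, ⟨x, ⟨M, hcp⟩, rfl⟩, Or.inl ?_⟩
      exact Set.subset_sUnion_of_mem hcp
  · -- not a leaf gap
    rintro ⟨W, hW⟩
    have hWmem : W ∈ G := by rw [hW]; exact Or.inl rfl
    have hdWmem : dual W ∈ G := by rw [hW]; exact Or.inr rfl
    rcases mem_closure_or_dual W q with h | h
    · exact hGavoid W hWmem h
    · exact hGavoid (dual W) hdWmem h
  · -- the separating elements
    obtain ⟨xI, hxI⟩ := mem_nonempty hL hI
    obtain ⟨xJ, hxJ⟩ := mem_nonempty hL hJ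
    have hcpI : I ∈ Cplus L q xI := ⟨hI, hxI, hqI⟩
    have hcpJ : J ∈ Cplus L q xJ := ⟨hJ, hxJ, hqJ⟩
    exact ⟨⋃₀ Cplus L q xI, ⟨xI, ⟨I, hcpI⟩, rfl⟩, ⋃₀ Cplus L q xJ, ⟨xJ, ⟨J, hcpJ⟩, rfl⟩,
      Set.subset_sUnion_of_mem hcpI, Set.subset_sUnion_of_mem hcpJ⟩

end S13

namespace S13
open Complex

variable {L : Set (Set Circle)}

/-- the chain of proper subleaves of `N` through `x` -/
def Csub (L : Set (Set Circle)) (N : Set Circle) (x : Circle) : Set (Set Circle) :=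
  {M | M ∈ L ∧ x ∈ M ∧ M ⊆ N ∧ M ≠ N}

lemma csub_chain (hL : LamSys L) {N : Set Circle} (hN : N ∈ L) {b : Circle}
    (hb : b ∉ closure N) (x : Circle) : IsChain (· ⊆ ·) (Csub L N x) := by
  rintro M ⟨hM, hxM, hMN, -⟩ M' ⟨hM', hxM', hMN', -⟩ hne
  have h1 : b ∉ closure M := fun h => hb (closure_mono hMN h)
  have h2 : b ∉ closure M' := fun h => hb (closure_mono hMN' h)
  rcases nested_of_common hL hM hM' hxM hxM' h1 h2 with h | h
  · exact Or.inl h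
  · exact Or.inr h

/-- If the pair `I, J` is not separated and both lie in `dual N`,
    then `N` is exhausted by proper subleaves through some point. -/
lemma exhaustion_of_not_separated (hL : LamSys L) {N : Set Circle} (hN : N ∈ L)
    {I J : Set Circle} (hI : I ∈ L) (hJ : J ∈ L)
    (hIN : I ⊆ dual N) (hJN : J ⊆ dual N)
    (hns : ¬ SeparatedPair L I J) :
    ∃ x₀, (Csub L N x₀).Nonempty ∧ ⋃₀ Csub L N x₀ = N := by
  classical
  obtain ⟨b, hbdual⟩ := nonempty_of_nd (dual_nd_of_nd (hL.nd N hN))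
  have hbN : b ∉ closure N := by
    have : b ∈ (closure N)ᶜ := by
      rw [← interior_compl]
      exact hbdual
    exact this
  have hNnd := hL.nd N hN
  have hNopen := mem_isOpen hL hN
  have htrans : ∀ x y M, M ∈ Csub L N x → y ∈ M → M ∈ Csub L N y :=
    fun x y M hM hy => ⟨hM.1, hy, hM.2.2⟩
  have hmemx : ∀ x M, M ∈ Csub L N x → x ∈ M := fun x M hM => hM.2.1
  have hclosM : ∀ x, ∀ M ∈ Csub L N x, b ∉ closure M :=
    fun x M hM h => hbN (closure_mono hM.2.2.1 h)
  -- each union is a leaf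
  have hUnd : ∀ x, (Csub L N x).Nonempty → IsND (⋃₀ Csub L N x) ∧ b ∉ closure (⋃₀ Csub L N x) := by
    intro x hne
    exact chain_union_nd_bounded (csub_chain hL hN hbN x) (fun M hM => hL.nd M hM.1)
      (hclosM x) (fun M hM => hM.2.1) hne hNnd hbN (fun M hM => hM.2.2.1)
  have hUL : ∀ x, (Csub L N x).Nonempty → ⋃₀ Csub L N x ∈ L := by
    intro x hne
    exact sUnion_mem hL (fun M hM => hM.1) (csub_chain hL hN hbN x) (hUnd x hne).1
  set G : Set (Set Circle) :=
    insert (dual N) {S | ∃ x, (Csub L N x).Nonempty ∧ S = ⋃₀ Csub L N x} with hG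
  have hdualL : dual N ∈ L := hL.dualMem N hN
  have hUsubN : ∀ x, ⋃₀ Csub L N x ⊆ N := fun x => Set.sUnion_subset (fun M hM => hM.2.2.1)
  have hGgap : IsGap L G := by
    refine ⟨?_, ?_, ?_⟩
    · rintro S (rfl | ⟨x, hxne, rfl⟩)
      · exact hdualL
      · exact hUL x hxne
    · -- pairwise disjoint
      rintro S hS S' hS' hne
      rcases hS with rfl | ⟨x, hxne, rfl⟩ <;> rcases hS' with rfl | ⟨y, hyne, rfl⟩
      · exact absurd rfl hne
      · rw [Set.inter_comm]
        rw [Set.eq_empty_iff_forall_notMem]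
        rintro z ⟨hz, hzd⟩
        have : z ∈ N ∩ dual N := ⟨hUsubN y hz, hzd⟩
        rw [dual_disjoint] at this
        exact this
      · rw [Set.eq_empty_iff_forall_notMem]
        rintro z ⟨hz, hzd⟩
        have : z ∈ N ∩ dual N := ⟨hUsubN x hz, hzd⟩
        rw [dual_disjoint] at this
        exact this
      · by_contra hcon
        apply hne
        exact sUnion_eq_or_disj htrans (csub_chain hL hN hbN) hmemx
          (Set.nonempty_iff_ne_empty.mpr hcon)
    · -- covering
      intro M hM
      rcases hL.unlinked M hM N hN with (h | h) | (h | h)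
      · -- M ⊆ N
        by_cases hMN : M = N
        · refine ⟨dual N, Or.inl rfl, Or.inr ?_⟩
          rw [hMN]
        · obtain ⟨x, hx⟩ := mem_nonempty hL hM
          have hcs : M ∈ Csub L N x := ⟨hM, hx, h, hMN⟩
          exact ⟨⋃₀ Csub L N x, Or.inr ⟨x, ⟨M, hcs⟩, rfl⟩,
            Or.inl (Set.subset_sUnion_of_mem hcs)⟩
      · -- dual M ⊆ N
        by_cases hMN : dual M = N
        · refine ⟨dual N, Or.inl rfl, Or.inl ?_⟩
          rw [← hMN, mem_dual_dual hL hM]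
        · have hdM : dual M ∈ L := hL.dualMem M hM
          obtain ⟨x, hx⟩ := mem_nonempty hL hdM
          have hcs : dual M ∈ Csub L N x := ⟨hdM, hx, h, hMN⟩
          exact ⟨⋃₀ Csub L N x, Or.inr ⟨x, ⟨dual M, hcs⟩, rfl⟩,
            Or.inr (Set.subset_sUnion_of_mem hcs)⟩
      · exact ⟨dual N, Or.inl rfl, Or.inl h⟩
      · exact ⟨dual N, Or.inl rfl, Or.inr h⟩
  -- not separated forces the gap to be a leaf gap
  have hleaf : IsLeafGap G := by
    by_contra hnl
    exact hns ⟨G, hGgap, hnl, dual N, Or.inl rfl, dual N, Or.inl rfl, hIN, hJN⟩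
  obtain ⟨W, hW⟩ := hleaf
  have hdmem : dual N ∈ G := Or.inl rfl
  have hNG : N ∈ G := by
    rw [hW] at hdmem ⊢
    rcases hdmem with h | h
    · -- dual N = W
      rw [← h, leafOf]
      right
      rw [mem_dual_dual hL hN]
      rfl
    · -- dual N = dual W
      have hWL : W ∈ L := hGgap.1 (by rw [hW]; exact Or.inl rfl)
      have : N = W := by
        have := congrArg dual h
        rwa [mem_dual_dual hL hN, mem_dual_dual hL hWL] at this
      rw [leafOf, this]
      exact Or.inl rfl
  rcases hNG with h | ⟨x₀, hx₀ne, hx₀⟩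
  · exfalso
    obtain ⟨z, hz⟩ := mem_nonempty hL hN
    have : z ∈ N ∩ dual N := ⟨hz, h ▸ hz⟩
    rw [dual_disjoint] at this
    exact this
  · exact ⟨x₀, hx₀ne, hx₀.symm⟩

end S13

namespace S13
open Complex

lemma dual_dual_eq_int_closure (S : Set Circle) : dual (dual S) = interior (closure S) := by
  have h1 : (interior Sᶜ)ᶜ = closure S := by rw [interior_compl, compl_compl]
  rw [dual, dual, h1]

lemma reg_open_of_nd {S : Set Circle} (h : IsND S) : interior (closure S) = S := by
  rw [← dual_dual_eq_int_closure]
  exact dual_dual_of_nd h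

/-- main lemma : if the endpoints of L₂ are dense and disjoint from those of L₁,
then L₁ is totally disconnected -/
lemma main_key {L₁ L₂ : Set (Set Circle)} (hL1 : LamSys L₁)
    (hd₂ : Dense (ELset L₂)) (hdisj : ELset L₁ ∩ ELset L₂ = ∅) : TotDisc L₁ := by
  rintro I J ⟨hI, hJ, hIJ, hJdI⟩
  by_contra hns
  have hInd := hL1.nd I hI
  have hJnd := hL1.nd J hJ
  have hIopen := mem_isOpen hL1 hI
  have hJopen := mem_isOpen hL1 hJ
  have hJsub : J ⊆ dual I := subset_dual_of_disjoint hJopen (by rw [Set.inter_comm]; exact hIJ)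
  -- the region between the two leaves
  have hWopen : IsOpen (dual I \ closure J) := isOpen_interior.sdiff isClosed_closure
  have hWne : (dual I \ closure J).Nonempty := by
    rw [Set.nonempty_iff_ne_empty]
    intro h
    apply hJdI
    have hsub : dual I ⊆ closure J := by
      intro z hz
      by_contra hzc
      rw [Set.eq_empty_iff_forall_notMem] at h
      exact h z ⟨hz, hzc⟩
    have h2 : dual I ⊆ J := by
      have : dual I ⊆ interior (closure J) :=
        (isOpen_interior.subset_interior_iff).mpr hsub
      rwa [reg_open_of_nd hJnd] at this
    exact (subset_antisymm hJsub h2)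
  obtain ⟨q₀, hq₀E2, hq₀W⟩ := hd₂.exists_mem_open hWopen hWne
  have hq₀E1 : q₀ ∉ ELset L₁ := by
    intro h
    have : q₀ ∈ ELset L₁ ∩ ELset L₂ := ⟨h, hq₀E2⟩
    rw [hdisj] at this
    exact this
  have hq₀I : q₀ ∉ closure I := by
    have : q₀ ∈ interior Iᶜ := hq₀W.1
    rw [interior_compl] at this
    exact this
  have hq₀J : q₀ ∉ closure J := hq₀W.2
  -- main dichotomy at q₀
  by_cases hall : ∀ x, (Cplus L₁ q₀ x).Nonempty →
      IsND (⋃₀ Cplus L₁ q₀ x) ∧ q₀ ∉ closure (⋃₀ Cplus L₁ q₀ x)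
  · exact hns (separated_of_point hL1 hq₀E1 hall hI hJ hq₀I hq₀J)
  push_neg at hall
  obtain ⟨xh, hxhne, hxh⟩ := hall
  have hchain := cplus_chain hL1 q₀ xh
  have hndmem : ∀ M ∈ Cplus L₁ q₀ xh, IsND M := fun M hM => hL1.nd M hM.1
  have hbmem : ∀ M ∈ Cplus L₁ q₀ xh, q₀ ∉ closure M := fun M hM => hM.2.2
  have hxmem : ∀ M ∈ Cplus L₁ q₀ xh, xh ∈ M := fun M hM => hM.2.1
  have hfull : ∀ z, z ≠ q₀ → z ∈ ⋃₀ Cplus L₁ q₀ xh := by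
    rcases chain_union_classify hchain hndmem hbmem hxmem hxhne with h | ⟨w, hwq, (h | h)⟩ | h
    · exact absurd (hxh h.1) h.2
    · -- semi-unbounded : q₀ would be an endpoint of a leaf
      exfalso
      have hUnd : IsND (⋃₀ Cplus L₁ q₀ xh) := ⟨q₀, w, fun hh => hwq hh.symm, h⟩
      have hUL : ⋃₀ Cplus L₁ q₀ xh ∈ L₁ :=
        sUnion_mem hL1 (fun M hM => hM.1) hchain hUnd
      apply hq₀E1
      apply mem_ELset hUL
      rw [h, frontier_oInt (fun hh => hwq hh.symm)]
      exact Or.inl rfl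
    · exfalso
      have hUnd : IsND (⋃₀ Cplus L₁ q₀ xh) := ⟨w, q₀, hwq, h⟩
      have hUL : ⋃₀ Cplus L₁ q₀ xh ∈ L₁ :=
        sUnion_mem hL1 (fun M hM => hM.1) hchain hUnd
      apply hq₀E1
      apply mem_ELset hUL
      rw [h, frontier_oInt hwq]
      exact Or.inr rfl
    · exact h
  -- extract the two nested leaves avoiding I and J
  set K₀ : Set Circle := closure I ∪ closure J with hK₀
  have hK₀cpt : IsCompact K₀ := (isClosed_closure.union isClosed_closure).isCompact
  have hK₀sub : K₀ ⊆ ⋃₀ Cplus L₁ q₀ xh := by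
    intro z hz
    apply hfull
    rintro rfl
    rcases hz with h | h
    · exact hq₀I h
    · exact hq₀J h
  obtain ⟨M₁, hM₁mem, hM₁⟩ := compact_subset_chain hchain hxhne
    (fun M hM => mem_isOpen hL1 hM.1) hK₀cpt hK₀sub
  have hclM₁ : IsCompact (closure M₁) := isClosed_closure.isCompact
  have hclM₁sub : closure M₁ ⊆ ⋃₀ Cplus L₁ q₀ xh := by
    intro z hz
    apply hfull
    rintro rfl
    exact hM₁mem.2.2 hz
  obtain ⟨M₂, hM₂mem, hM₂⟩ := compact_subset_chain hchain hxhne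
    (fun M hM => mem_isOpen hL1 hM.1) hclM₁ hclM₁sub
  set R : Set Circle := dual M₁ with hR
  set R' : Set Circle := dual M₂ with hR'
  have hRL : R ∈ L₁ := hL1.dualMem M₁ hM₁mem.1
  have hR'L : R' ∈ L₁ := hL1.dualMem M₂ hM₂mem.1
  have hRnd := hL1.nd R hRL
  have hR'nd := hL1.nd R' hR'L
  have hRR' : closure R' ⊆ R := by
    calc closure R' ⊆ M₂ᶜ := closure_dual_subset (mem_isOpen hL1 hM₂mem.1)
    _ ⊆ (closure M₁)ᶜ := Set.compl_subset_compl.mpr hM₂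
    _ = interior M₁ᶜ := (interior_compl).symm
    _ = R := rfl
  have hRK₀ : closure R ∩ K₀ = ∅ := by
    rw [Set.eq_empty_iff_forall_notMem]
    rintro z ⟨hz1, hz2⟩
    exact (closure_dual_subset (mem_isOpen hL1 hM₁mem.1) hz1) (hM₁ hz2)
  -- a base point inside I
  obtain ⟨b₀, hb₀⟩ := mem_nonempty hL1 hI
  have hb₀R : b₀ ∉ closure R := by
    intro h
    rw [Set.eq_empty_iff_forall_notMem] at hRK₀
    exact hRK₀ b₀ ⟨h, Or.inl (subset_closure hb₀)⟩
  -- pick the second point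
  have hVopen : IsOpen (R \ closure R') := (isOpen_of_nd hRnd).sdiff isClosed_closure
  have hVne : (R \ closure R').Nonempty := by
    rw [Set.nonempty_iff_ne_empty]
    intro h
    have hsub : R ⊆ closure R' := by
      intro z hz
      by_contra hzc
      rw [Set.eq_empty_iff_forall_notMem] at h
      exact h z ⟨hz, hzc⟩
    have h2 : R ⊆ R' := by
      have : R ⊆ interior (closure R') :=
        ((isOpen_of_nd hRnd).subset_interior_iff).mpr hsub
      rwa [reg_open_of_nd hR'nd] at this
    obtain ⟨u, v, huv, hform⟩ := hR'nd
    have hu : u ∈ closure R' := by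
      rw [hform]
      exact mem_closure_left huv
    have : u ∈ R' := h2 (hRR' hu)
    rw [hform] at this
    exact not_mem_oInt_endpoints.1 this
  obtain ⟨q₁, hq₁E2, hq₁V⟩ := hd₂.exists_mem_open hVopen hVne
  have hq₁E1 : q₁ ∉ ELset L₁ := by
    intro h
    have : q₁ ∈ ELset L₁ ∩ ELset L₂ := ⟨h, hq₁E2⟩
    rw [hdisj] at this
    exact this
  -- the chain between R' and R through q₁
  set 𝒮 : Set (Set Circle) := {M | M ∈ L₁ ∧ R' ⊆ M ∧ M ⊆ R ∧ q₁ ∈ M} with h𝒮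
  have hR𝒮 : R ∈ 𝒮 := ⟨hRL, fun z hz => hRR' (subset_closure hz), subset_rfl, hq₁V.1⟩
  have h𝒮chain : IsChain (· ⊆ ·) 𝒮 := by
    rintro M ⟨hM, -, hMR, hqM⟩ M' ⟨hM', -, hMR', hqM'⟩ hne
    have h1 : b₀ ∉ closure M := fun h => hb₀R (closure_mono hMR h)
    have h2 : b₀ ∉ closure M' := fun h => hb₀R (closure_mono hMR' h)
    rcases nested_of_common hL1 hM hM' hqM hqM' h1 h2 with h | h
    · exact Or.inl h
    · exact Or.inr h
  -- the intersection leaf N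
  obtain ⟨b₁, hb₁⟩ := mem_nonempty hL1 hR'L
  set 𝒟 : Set (Set Circle) := (fun M => dual M) '' 𝒮 with h𝒟
  have h𝒟chain : IsChain (· ⊆ ·) 𝒟 := by
    rintro S ⟨M, hM, rfl⟩ S' ⟨M', hM', rfl⟩ hne
    rcases h𝒮chain.total hM hM' with h | h
    · exact Or.inr (dual_anti h)
    · exact Or.inl (dual_anti h)
  obtain ⟨w₀, hw₀⟩ := nonempty_of_nd (dual_nd_of_nd hRnd)
  have h𝒟nd : ∀ S ∈ 𝒟, IsND S := by
    rintro S ⟨M, hM, rfl⟩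
    exact dual_nd_of_nd (hL1.nd M hM.1)
  have h𝒟b : ∀ S ∈ 𝒟, b₁ ∉ closure S := by
    rintro S ⟨M, hM, rfl⟩ h
    exact (closure_dual_subset (mem_isOpen hL1 hM.1) h) (hM.2.1 hb₁)
  have h𝒟w : ∀ S ∈ 𝒟, w₀ ∈ S := by
    rintro S ⟨M, hM, rfl⟩
    exact dual_anti hM.2.2.1 hw₀
  have h𝒟ne : 𝒟.Nonempty := ⟨dual R, R, hR𝒮, rfl⟩
  have h𝒟D : ∀ S ∈ 𝒟, S ⊆ dual R' := by
    rintro S ⟨M, hM, rfl⟩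
    exact dual_anti hM.2.1
  have hb₁D : b₁ ∉ closure (dual R') := fun h =>
    (closure_dual_subset (isOpen_of_nd hR'nd) h) hb₁
  obtain ⟨hΩnd, -⟩ := chain_union_nd_bounded h𝒟chain h𝒟nd h𝒟b h𝒟w h𝒟ne
    (dual_nd_of_nd hR'nd) hb₁D h𝒟D
  set Ω : Set Circle := ⋃₀ 𝒟 with hΩ
  have hΩL : Ω ∈ L₁ := by
    apply sUnion_mem hL1 _ h𝒟chain hΩnd
    rintro S ⟨M, hM, rfl⟩
    exact hL1.dualMem M hM.1
  set N : Set Circle := dual Ω with hN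
  have hNL : N ∈ L₁ := hL1.dualMem Ω hΩL
  have hNM : ∀ M ∈ 𝒮, N ⊆ M := by
    intro M hM
    have h1 : dual M ⊆ Ω := Set.subset_sUnion_of_mem ⟨M, hM, rfl⟩
    have h2 := dual_anti h1
    rwa [mem_dual_dual hL1 hM.1] at h2
  have hR'N : R' ⊆ N := by
    have h1 : Ω ⊆ dual R' := Set.sUnion_subset h𝒟D
    have h2 := dual_anti h1
    rwa [mem_dual_dual hL1 hR'L] at h2
  have hNR : N ⊆ R := hNM R hR𝒮
  have hq₁N : q₁ ∈ N := by
    by_cases hcl : q₁ ∈ closure Ω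
    · exfalso
      rcases (closure_eq_interior_union_frontier Ω ▸ hcl) with h | h
      · rw [(mem_isOpen hL1 hΩL).interior_eq] at h
        obtain ⟨S, ⟨M, hM, rfl⟩, hq₁S⟩ := h
        have : q₁ ∈ M ∩ dual M := ⟨hM.2.2.2, hq₁S⟩
        rw [dual_disjoint] at this
        exact this
      · exact hq₁E1 (mem_ELset hΩL h)
    · rw [hN, dual, interior_compl]
      exact hcl
  -- apply the exhaustion lemma to N
  have hNdisjI : I ⊆ dual N := by
    apply subset_dual_of_disjoint hIopen
    rw [Set.eq_empty_iff_forall_notMem]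
    rintro z ⟨hz1, hz2⟩
    rw [Set.eq_empty_iff_forall_notMem] at hRK₀
    exact hRK₀ z ⟨subset_closure (hNR hz2), Or.inl (subset_closure hz1)⟩
  have hNdisjJ : J ⊆ dual N := by
    apply subset_dual_of_disjoint hJopen
    rw [Set.eq_empty_iff_forall_notMem]
    rintro z ⟨hz1, hz2⟩
    rw [Set.eq_empty_iff_forall_notMem] at hRK₀
    exact hRK₀ z ⟨subset_closure (hNR hz2), Or.inr (subset_closure hz1)⟩
  obtain ⟨x₀, hx₀ne, hEx⟩ := exhaustion_of_not_separated hL1 hNL hI hJ hNdisjI hNdisjJ hns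
  -- extract a member of the exhaustion containing q₁ and a point of R'
  have hb₁N : b₁ ∈ N := hR'N hb₁
  have hq₁Ex : q₁ ∈ ⋃₀ Csub L₁ N x₀ := by rw [hEx]; exact hq₁N
  have hb₁Ex : b₁ ∈ ⋃₀ Csub L₁ N x₀ := by rw [hEx]; exact hb₁N
  obtain ⟨A, hA, hq₁A⟩ := hq₁Ex
  obtain ⟨B, hB, hb₁B⟩ := hb₁Ex
  have hbase : b₀ ∉ closure N := fun h => hb₀R (closure_mono hNR h)
  have hABchain := csub_chain hL1 hNL hbase x₀
  obtain ⟨C, hC, hq₁C, hb₁C⟩ : ∃ C, C ∈ Csub L₁ N x₀ ∧ q₁ ∈ C ∧ b₁ ∈ C := by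
    rcases hABchain.total hA hB with h | h
    · exact ⟨B, hB, h hq₁A, hb₁B⟩
    · exact ⟨A, hA, hq₁A, h hb₁B⟩
  -- C must contain R'
  have hCR' : R' ⊆ C := by
    have h1 : b₀ ∉ closure C := fun h => hbase (closure_mono hC.2.2.1 h)
    have h2 : b₀ ∉ closure R' := fun h => hb₀R (closure_mono (fun z hz => hRR' (subset_closure hz)) h)
    rcases nested_of_common hL1 hC.1 hR'L hb₁C hb₁ h1 h2 with h | h
    · exfalso
      exact hq₁V.2 (subset_closure (h hq₁C))
    · exact h
  -- C is a member of 𝒮, contradiction with minimality of N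
  have hC𝒮 : C ∈ 𝒮 := ⟨hC.1, hCR', hC.2.2.1.trans hNR, hq₁C⟩
  have : N ⊆ C := hNM C hC𝒮
  exact hC.2.2.2 (subset_antisymm hC.2.2.1 this)

end S13


end

/-- Two dense lamination systems with disjoint endpoint sets are totally disconnected. -/
theorem stmt13 (L₁ L₂ : Set (Set Circle)) (h₁ : LamSys L₁) (h₂ : LamSys L₂)
    (hd₁ : Dense (ELset L₁)) (hd₂ : Dense (ELset L₂))
    (hdisj : ELset L₁ ∩ ELset L₂ = ∅) :
    TotDisc L₁ ∧ TotDisc L₂ :=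
  ⟨S13.main_key h₁ hd₂ hdisj, S13.main_key h₂ hd₁ (by rw [Set.inter_comm]; exact hdisj)⟩
end
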